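/- arXiv:2502.03267 — 4 statements merged into one kernel-verified Lean document; each statement's English description precedes it below -/
import Mathlib

section
/- Let n ≥ 1, let Ω be any subset of ℝⁿ, and let δ ∈ (0, n]. If (f_i)_{i≥1} is a pointwise increasing sequence of functions f_i : Ω → [0, ∞] (f_i(x) ≤ f_{i+1}(x) for all x and i) and f(x) = lim_{i→∞} f_i(x) for every x ∈ Ω, then lim_{i→∞} ∫_Ω f_i dH̃^δ_∞ = ∫_Ω f dH̃^δ_∞. -/
open MeasureTheory Set Metric Filter Topology
open scoped ENNReal

noncomputable section

/-- Euclidean space `ℝⁿ`. -/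
abbrev En (n : ℕ) : Type := EuclideanSpace ℝ (Fin n)

/-- The half-open dyadic cube `2^k (m + [0,1)ⁿ)`, `k : ℤ`, `m : ℤⁿ`. -/
def dyadicCube (n : ℕ) (k : ℤ) (m : Fin n → ℤ) : Set (En n) :=
  {x | ∀ i, (m i : ℝ) * 2 ^ k ≤ x i ∧ x i < ((m i : ℝ) + 1) * 2 ^ k}

/-- The `δ`-dimensional dyadic Hausdorff content `H̃^δ_∞`: the infimum of `Σ ℓ(Q_i)^δ`
over all countable collections of dyadic cubes whose union's interior covers `E`. -/
def dyadicContent (n : ℕ) (δ : ℝ) (E : Set (En n)) : ℝ≥0∞ :=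
  ⨅ (c : ℕ → ℤ × (Fin n → ℤ))
    (_ : E ⊆ interior (⋃ i, dyadicCube n (c i).1 (c i).2)),
    ∑' i, ENNReal.ofReal (((2 : ℝ) ^ (c i).1) ^ δ)

/-- The Choquet integral `∫_Ω f dH̃^δ_∞ := ∫_0^∞ H̃^δ_∞({x ∈ Ω : f x > t}) dt`
of a `[0,∞]`-valued function over `Ω ⊆ ℝⁿ`. -/
def choquetIntegral (n : ℕ) (δ : ℝ) (Ω : Set (En n)) (f : En n → ℝ≥0∞) : ℝ≥0∞ :=
  ∫⁻ t in Ioi (0 : ℝ), dyadicContent n δ {x | x ∈ Ω ∧ ENNReal.ofReal t < f x}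

/-- The Choquet integral `∫_Ω |f| dH̃^δ_∞` of a real-valued function. -/
def choquetIntegralAbs (n : ℕ) (δ : ℝ) (Ω : Set (En n)) (f : En n → ℝ) : ℝ≥0∞ :=
  choquetIntegral n δ Ω (fun x => ENNReal.ofReal |f x|)

/-- The Choquet integral `∫_Ω |f| dH̃^δ_∞` of an extended-real-valued function. -/
def choquetIntegralEAbs (n : ℕ) (δ : ℝ) (Ω : Set (En n)) (f : En n → EReal) : ℝ≥0∞ :=
  choquetIntegral n δ Ω (fun x => (f x).abs)

/-- The ball average `f^δ_{B(x,r)} := (1/H̃^δ_∞(B(x,r))) ∫_{B(x,r)} f dH̃^δ_∞`. -/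
def ballAvg (n : ℕ) (δ : ℝ) (f : En n → ℝ≥0∞) (x : En n) (r : ℝ) : ℝ≥0∞ :=
  choquetIntegral n δ (ball x r) f / dyadicContent n δ (ball x r)

/-- The Hausdorff-content centred maximal function `M^δ f(x)`. -/
def maximal (n : ℕ) (δ : ℝ) (f : En n → ℝ≥0∞) (x : En n) : ℝ≥0∞ :=
  ⨆ (r : ℝ) (_ : 0 < r), ballAvg n δ f x r

/-- `f^δ_*(x) := limsup_{r→0⁺} (1/H̃^δ_∞(B(x,r))) ∫_{B(x,r)} |f(y) − f(x)| dH̃^δ_∞(y)`. -/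
def lebDev (n : ℕ) (δ : ℝ) (f : En n → ℝ) (x : En n) : ℝ≥0∞ :=
  limsup (fun r : ℝ => choquetIntegralAbs n δ (ball x r) (fun y => f y - f x) /
    dyadicContent n δ (ball x r)) (𝓝[>] (0 : ℝ))

/-- `limsup_{r→0⁺} f^δ_{B(x,r)}` of the ball averages. -/
def limsupAvg (n : ℕ) (δ : ℝ) (f : En n → ℝ≥0∞) (x : En n) : ℝ≥0∞ :=
  limsup (fun r : ℝ => ballAvg n δ f x r) (𝓝[>] (0 : ℝ))

namespace DyadicMCT

variable {n : ℕ} {δ : ℝ}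

/-- Parameter of a dyadic cube. -/
abbrev P (n : ℕ) := ℤ × (Fin n → ℤ)

/-- 1-d dyadic interval. -/
def I (k m : ℤ) : Set ℝ := Ico ((m : ℝ) * 2 ^ k) (((m : ℝ) + 1) * 2 ^ k)

def cube (n : ℕ) (q : P n) : Set (En n) := dyadicCube n q.1 q.2

lemma mem_cube {q : P n} {x : En n} : x ∈ cube n q ↔ ∀ i, x i ∈ I q.1 (q.2 i) := Iff.rfl

lemma I_lt {k m : ℤ} : (m : ℝ) * 2 ^ k < ((m : ℝ) + 1) * 2 ^ k := by
  have h2 : (0:ℝ) < 2 ^ k := zpow_pos (by norm_num) _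
  nlinarith

lemma I_nonempty {k m : ℤ} : (I k m).Nonempty := ⟨(m : ℝ) * 2 ^ k, le_refl _, I_lt⟩

lemma cube_nonempty {q : P n} : (cube n q).Nonempty :=
  ⟨WithLp.toLp 2 (fun i => (q.2 i : ℝ) * 2 ^ q.1 : Fin n → ℝ), fun i => ⟨le_refl _, I_lt⟩⟩

lemma I_nested {k k' m m' : ℤ} (hk : k ≤ k') (hne : (I k m ∩ I k' m').Nonempty) :
    I k m ⊆ I k' m' := by
  obtain ⟨x, ⟨hx1, hx2⟩, ⟨hx3, hx4⟩⟩ := hne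
  set d : ℕ := (k' - k).toNat with hd
  have hdk : (2:ℝ) ^ k' = 2 ^ d * 2 ^ k := by
    rw [← zpow_natCast (2:ℝ) d, ← zpow_add₀ (by norm_num : (2:ℝ) ≠ 0)]
    congr 1
    omega
  have h2k : (0:ℝ) < 2 ^ k := zpow_pos (by norm_num) _
  -- m' * 2^d ≤ m and m + 1 ≤ (m'+1) * 2^d in ℤ
  have h1 : (m' * 2 ^ d : ℤ) ≤ m := by
    have : ((m' * 2 ^ d : ℤ) : ℝ) < (m : ℝ) + 1 := by
      push_cast
      have := lt_of_le_of_lt hx3 hx2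
      rw [hdk] at this
      nlinarith
    have h' : ((m' * 2 ^ d : ℤ) : ℝ) < ((m + 1 : ℤ) : ℝ) := by push_cast at this ⊢; linarith
    have : m' * 2 ^ d < m + 1 := by exact_mod_cast h'
    omega
  have h2 : (m + 1 : ℤ) ≤ (m' + 1) * 2 ^ d := by
    have : ((m : ℤ) : ℝ) < (((m' + 1) * 2 ^ d : ℤ) : ℝ) := by
      push_cast
      have := lt_of_le_of_lt hx1 hx4
      rw [hdk] at this
      nlinarith
    have : (m:ℤ) < (m' + 1) * 2 ^ d := by exact_mod_cast this
    omega
  intro y ⟨hy1, hy2⟩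
  constructor
  · rw [hdk]
    have : ((m' * 2 ^ d : ℤ) : ℝ) ≤ (m : ℝ) := by exact_mod_cast h1
    push_cast at this
    nlinarith
  · rw [hdk]
    have : ((m : ℝ) + 1) ≤ ((m' + 1) * 2 ^ d : ℝ) := by
      have := (Int.cast_le (R := ℝ)).mpr h2
      push_cast at this
      linarith
    nlinarith

lemma I_endpoints {k k' m m' : ℤ} (h : I k m ⊆ I k' m') :
    (m' : ℝ) * 2 ^ k' ≤ (m : ℝ) * 2 ^ k ∧ ((m : ℝ) + 1) * 2 ^ k ≤ ((m' : ℝ) + 1) * 2 ^ k' := by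
  rw [I, I, Set.Ico_subset_Ico_iff I_lt] at h
  exact h

lemma I_subset_k_le {k k' m m' : ℤ} (h : I k m ⊆ I k' m') : k ≤ k' := by
  obtain ⟨h1, h2⟩ := I_endpoints h
  have : (2:ℝ) ^ k ≤ 2 ^ k' := by nlinarith
  exact (zpow_le_zpow_iff_right₀ (by norm_num : (1:ℝ) < 2)).mp this

lemma I_subset_same_k {k m m' : ℤ} (h : I k m ⊆ I k m') : m = m' := by
  obtain ⟨h1, h2⟩ := I_endpoints h
  have h2k : (0:ℝ) < 2 ^ k := zpow_pos (by norm_num) _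
  have hm1 : (m' : ℝ) ≤ m := by nlinarith
  have hm2 : (m : ℝ) ≤ m' := by nlinarith
  exact_mod_cast le_antisymm hm2 hm1

lemma cube_proj {q r : P n} (h : cube n q ⊆ cube n r) (i : Fin n) :
    I q.1 (q.2 i) ⊆ I r.1 (r.2 i) := by
  intro y hy
  set x : En n := WithLp.toLp 2 (fun j => if j = i then y else (q.2 j : ℝ) * 2 ^ q.1 : Fin n → ℝ) with hx
  have hxq : x ∈ cube n q := by
    intro j
    by_cases hj : j = i
    · subst hj; simpa [hx, I] using hy
    · simp only [hx, hj, if_neg hj]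
      exact ⟨le_refl _, I_lt⟩
  have := h hxq i
  simpa [hx, I] using this

lemma cube_nested {q r : P n} (hne : (cube n q ∩ cube n r).Nonempty) :
    cube n q ⊆ cube n r ∨ cube n r ⊆ cube n q := by
  obtain ⟨x, hxq, hxr⟩ := hne
  rcases le_total q.1 r.1 with hk | hk
  · left
    intro y hy i
    exact I_nested hk ⟨x i, hxq i, hxr i⟩ (hy i)
  · right
    intro y hy i
    exact I_nested hk ⟨x i, hxr i, hxq i⟩ (hy i)

lemma k_mono (hn : 0 < n) {q r : P n} (h : cube n q ⊆ cube n r) : q.1 ≤ r.1 :=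
  I_subset_k_le (cube_proj h ⟨0, hn⟩)

lemma eq_of_subset_k_ge (hn : 0 < n) {q r : P n} (h : cube n q ⊆ cube n r) (hk : r.1 ≤ q.1) :
    q = r := by
  have hkk : q.1 = r.1 := le_antisymm (k_mono hn h) hk
  have : q.2 = r.2 := by
    funext i
    have := cube_proj h i
    rw [hkk] at this
    exact I_subset_same_k this
  exact Prod.ext hkk this

lemma cube_inj (hn : 0 < n) {q r : P n} (h : cube n q = cube n r) : q = r :=
  eq_of_subset_k_ge hn h.le (k_mono hn h.ge)

lemma k_lt_of_ssubset (hn : 0 < n) {q r : P n} (h : cube n q ⊆ cube n r) (hne : q ≠ r) :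
    q.1 < r.1 := by
  rcases lt_or_ge q.1 r.1 with h' | h'
  · exact h'
  · exact absurd (eq_of_subset_k_ge hn h h') hne



/-- Weight of a dyadic cube. -/
def w (δ : ℝ) (q : P n) : ℝ≥0∞ := ENNReal.ofReal (((2 : ℝ) ^ q.1) ^ δ)

lemma w_eq (q : P n) : w δ q = ENNReal.ofReal ((2 : ℝ) ^ ((q.1 : ℝ) * δ)) := by
  rw [w, ← Real.rpow_intCast (2:ℝ) q.1, ← Real.rpow_mul (by norm_num)]

/-- Sum of weights over a countable set of cube parameters. -/
def Sw (n : ℕ) (δ : ℝ) (s : Set (P n)) : ℝ≥0∞ := ∑' q : s, w δ (q : P n)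

lemma Sw_eq_tsum_indicator (s : Set (P n)) : Sw n δ s = ∑' q, s.indicator (w δ) q :=
  tsum_subtype s (w δ)

lemma Sw_mono {s t : Set (P n)} (h : s ⊆ t) : Sw n δ s ≤ Sw n δ t := by
  rw [Sw_eq_tsum_indicator, Sw_eq_tsum_indicator]
  exact ENNReal.tsum_le_tsum fun q => Set.indicator_le_indicator_of_subset h (fun _ => zero_le) q

lemma le_Sw {s : Set (P n)} {q : P n} (hq : q ∈ s) : w δ q ≤ Sw n δ s := by
  rw [Sw_eq_tsum_indicator]
  have : w δ q = s.indicator (w δ) q := (Set.indicator_of_mem hq _).symm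
  rw [this]
  exact ENNReal.le_tsum q

lemma Sw_union_add_inter (s t : Set (P n)) :
    Sw n δ (s ∪ t) + Sw n δ (s ∩ t) = Sw n δ s + Sw n δ t := by
  simp only [Sw_eq_tsum_indicator]
  rw [← ENNReal.tsum_add, ← ENNReal.tsum_add]
  congr 1
  funext q
  by_cases hs : q ∈ s <;> by_cases ht : q ∈ t <;>
    simp [Set.indicator_apply, hs, ht]

lemma Sw_union_le (s t : Set (P n)) : Sw n δ (s ∪ t) ≤ Sw n δ s + Sw n δ t := by
  calc Sw n δ (s ∪ t) ≤ Sw n δ (s ∪ t) + Sw n δ (s ∩ t) := le_self_add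
  _ = Sw n δ s + Sw n δ t := Sw_union_add_inter s t

lemma Sw_diff_add (s t : Set (P n)) (h : t ⊆ s) : Sw n δ (s \ t) + Sw n δ t = Sw n δ s := by
  have := Sw_union_add_inter (n := n) (δ := δ) (s \ t) t
  rw [Set.diff_union_of_subset h, Set.diff_inter_self,
    show Sw n δ (∅ : Set (P n)) = 0 by simp [Sw], add_zero] at this
  exact this.symm

/-- Eventually small tails of the auxiliary geometric cubes. -/
lemma exists_filler (hδ : 0 < δ) {ε : ℝ≥0∞} (hε : 0 < ε) :
    ∃ N : ℕ, ∑' i : ℕ, w δ ((-(i + N : ℕ) : ℤ), (0 : Fin n → ℤ)) ≤ ε := by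
  set r : ℝ≥0∞ := ENNReal.ofReal ((2:ℝ) ^ (-δ)) with hr
  have hrlt : r < 1 := by
    rw [hr, ← ENNReal.ofReal_one]
    exact ENNReal.ofReal_lt_ofReal_iff_of_nonneg (Real.rpow_pos_of_pos two_pos _).le |>.mpr
      (by
        have := Real.rpow_lt_one_of_one_lt_of_neg (x := (2:ℝ)) (by norm_num) (neg_lt_zero.mpr hδ)
        simpa using this)
  have hw : ∀ i N : ℕ, w δ ((-(i + N : ℕ) : ℤ), (0 : Fin n → ℤ)) = r ^ (i + N) := by
    intro i N
    rw [w_eq, hr, ← ENNReal.ofReal_pow (Real.rpow_pos_of_pos two_pos _).le,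
      ← Real.rpow_natCast ((2:ℝ) ^ (-δ)) (i + N), ← Real.rpow_mul (by norm_num)]
    congr 2
    push_cast
    ring
  have hb : (1 - r)⁻¹ ≠ ∞ := by
    rw [Ne, ENNReal.inv_eq_top, tsub_eq_zero_iff_le]
    exact fun h => absurd hrlt (not_lt.mpr h)
  have htendsto : Tendsto (fun N : ℕ => r ^ N * (1 - r)⁻¹) atTop (𝓝 0) := by
    have := ENNReal.Tendsto.mul_const
      (ENNReal.tendsto_pow_atTop_nhds_zero_of_lt_one hrlt) (Or.inr hb)
    simpa using this
  have : ∀ᶠ N : ℕ in atTop, r ^ N * (1 - r)⁻¹ ≤ ε := by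
    exact htendsto.eventually_le_const hε
  obtain ⟨N, hN⟩ := this.exists
  refine ⟨N, ?_⟩
  calc ∑' i : ℕ, w δ ((-(i + N : ℕ) : ℤ), (0 : Fin n → ℤ))
      = ∑' i : ℕ, r ^ N * r ^ i := by
        congr 1; funext i; rw [hw i N, pow_add, mul_comm]
    _ = r ^ N * (1 - r)⁻¹ := by rw [ENNReal.tsum_mul_left, ENNReal.tsum_geometric]
    _ ≤ ε := hN



lemma cube_eq (c : ℕ → P n) (i : ℕ) : dyadicCube n (c i).1 (c i).2 = cube n (c i) := rfl

lemma content_eq (E : Set (En n)) :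
    dyadicContent n δ E = ⨅ (c : ℕ → P n) (_ : E ⊆ interior (⋃ i, cube n (c i))),
      ∑' i, w δ (c i) := rfl

lemma content_mono {E F : Set (En n)} (h : E ⊆ F) :
    dyadicContent n δ E ≤ dyadicContent n δ F := by
  rw [content_eq, content_eq]
  exact le_iInf fun c => le_iInf fun hc => iInf₂_le c (h.trans hc)

lemma k_bound (hδ : 0 < δ) {B : ℝ≥0∞} (hB : B ≠ ∞) :
    ∃ K : ℤ, ∀ q : P n, w δ q ≤ B → q.1 ≤ K := by
  obtain ⟨j, hj⟩ := pow_unbounded_of_one_lt (B.toReal) (by norm_num : (1:ℝ) < 2)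
  refine ⟨⌈(j : ℝ) / δ⌉, fun q hq => ?_⟩
  by_contra hk
  push_neg at hk
  rw [w_eq] at hq
  have h1 : (2:ℝ) ^ ((q.1 : ℝ) * δ) ≤ B.toReal :=
    (ENNReal.ofReal_le_iff_le_toReal hB).mp hq
  have h2 : (j : ℝ) / δ < (q.1 : ℝ) := by
    calc (j : ℝ) / δ ≤ (⌈(j : ℝ) / δ⌉ : ℝ) := Int.le_ceil _
    _ < (q.1 : ℝ) := by exact_mod_cast hk
  have h3 : (j : ℝ) < (q.1 : ℝ) * δ := by
    rw [div_lt_iff₀ hδ] at h2; linarith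
  have h4 : (2:ℝ) ^ (j:ℝ) < (2:ℝ) ^ ((q.1:ℝ) * δ) :=
    Real.rpow_lt_rpow_left_iff (by norm_num : (1:ℝ) < 2) |>.mpr h3
  rw [Real.rpow_natCast] at h4
  linarith

/-- From a countable set cover one gets a content estimate. -/
lemma content_le_Sw (hδ : 0 < δ) {E : Set (En n)} {s : Set (P n)} (hs : s.Countable)
    (hcov : E ⊆ interior (⋃ q ∈ s, cube n q)) : dyadicContent n δ E ≤ Sw n δ s := by
  classical
  apply ENNReal.le_of_forall_pos_le_add
  intro ε hε _
  obtain ⟨N, hN⟩ := exists_filler (n := n) hδ (ε := (ε : ℝ≥0∞)) (by exact_mod_cast hε)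
  haveI : Countable ↥s := hs.to_subtype
  obtain ⟨f, hf⟩ := exists_injective_nat ↥s
  set c : ℕ → P n := fun i =>
    if h : ∃ x : ↥s, f x = i then (h.choose : P n) else ((-(i + N : ℕ) : ℤ), (0 : Fin n → ℤ))
    with hc
  have hcf : ∀ x : ↥s, c (f x) = (x : P n) := by
    intro x
    have h : ∃ y : ↥s, f y = f x := ⟨x, rfl⟩
    have : h.choose = x := hf h.choose_spec
    simp only [hc, dif_pos h, this]
  have hcov' : E ⊆ interior (⋃ i, cube n (c i)) := by
    refine hcov.trans (interior_mono ?_)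
    refine Set.iUnion₂_subset fun q hq => ?_
    have : c (f ⟨q, hq⟩) = q := hcf ⟨q, hq⟩
    exact this ▸ Set.subset_iUnion (fun i => cube n (c i)) (f ⟨q, hq⟩)
  calc dyadicContent n δ E ≤ ∑' i, w δ (c i) := by
        rw [content_eq]; exact iInf₂_le c hcov'
  _ ≤ ∑' i, ((Set.range f).indicator (fun i => w δ (c i)) i
        + w δ ((-(i + N : ℕ) : ℤ), (0 : Fin n → ℤ))) := by
        refine ENNReal.tsum_le_tsum fun i => ?_
        by_cases h : i ∈ Set.range f
        · rw [Set.indicator_of_mem h]; exact le_self_add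
        · have : c i = ((-(i + N : ℕ) : ℤ), (0 : Fin n → ℤ)) := by
            rw [hc]
            exact dif_neg h
          rw [this]
          exact le_add_self
  _ = (∑' i, (Set.range f).indicator (fun i => w δ (c i)) i)
        + ∑' i : ℕ, w δ ((-(i + N : ℕ) : ℤ), (0 : Fin n → ℤ)) := ENNReal.tsum_add
  _ ≤ Sw n δ s + ε := by
        refine add_le_add ?_ hN
        have he := (Equiv.ofInjective f hf).tsum_eq (fun b : ↥(Set.range f) => w δ (c ↑b))
        rw [← tsum_subtype, ← he]
        apply le_of_eq
        refine tsum_congr fun x => ?_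
        show w δ (c (f x)) = w δ (x : P n)
        rw [hcf]



/-- Near-optimal countable set covers exist. -/
lemma exists_cover (E : Set (En n)) {ε : ℝ≥0∞} (hε : 0 < ε) :
    ∃ s : Set (P n), s.Countable ∧ E ⊆ interior (⋃ q ∈ s, cube n q) ∧
      Sw n δ s ≤ dyadicContent n δ E + ε := by
  rcases eq_or_ne (dyadicContent n δ E) ∞ with htop | hfin
  · refine ⟨Set.range (fun m : Fin n → ℤ => ((0:ℤ), m)), Set.countable_range _, ?_, ?_⟩
    · have huniv : (⋃ q ∈ Set.range (fun m : Fin n → ℤ => ((0:ℤ), m)), cube n q) = Set.univ := by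
        refine Set.eq_univ_of_forall fun x => ?_
        refine Set.mem_biUnion ⟨(fun i => ⌊x i⌋), rfl⟩ (fun i => ?_)
        refine ⟨?_, ?_⟩ <;> simp only [zpow_zero, mul_one]
        · exact Int.floor_le _
        · exact Int.lt_floor_add_one _
      rw [huniv, interior_univ]
      exact Set.subset_univ _
    · rw [htop]; exact le_top
  · have hlt : dyadicContent n δ E < dyadicContent n δ E + ε :=
      ENNReal.lt_add_right hfin hε.ne'
    conv_lhs at hlt => rw [content_eq]
    obtain ⟨c, hc⟩ := iInf_lt_iff.mp hlt
    obtain ⟨hcov, hsum⟩ := iInf_lt_iff.mp hc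
    refine ⟨Set.range c, Set.countable_range _, ?_, ?_⟩
    · rwa [Set.biUnion_range]
    · have key : Sw n δ (Set.range c) ≤ ∑' i, w δ (c i) := by
        rw [Sw]
        have g : ∀ x : ↥(Set.range c), ∃ i, c i = ↑x := fun x => x.2
        choose gg hgg using g
        refine ENNReal.summable.tsum_le_tsum_of_inj gg ?_ (fun _ _ => zero_le) (fun b => by rw [hgg])
          ENNReal.summable
        intro x y hxy
        apply Subtype.ext
        rw [← hgg x, ← hgg y, hxy]
      exact key.trans hsum.le

/-- The splitting construction: maximal cubes cover the union, the rest (plus duplicates)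
covers the intersection, and weights are preserved. -/
lemma split (hn : 0 < n) (hδ : 0 < δ) (sA sB : Set (P n)) {B : ℝ≥0∞}
    (hbdd : ∀ q ∈ sA ∪ sB, w δ q ≤ B) (hB : B ≠ ∞) :
    ∃ sU sI : Set (P n), sU ⊆ sA ∪ sB ∧ sI ⊆ sA ∪ sB ∧
      (∀ q ∈ sA ∪ sB, ∃ r ∈ sU, cube n q ⊆ cube n r) ∧
      (interior (⋃ q ∈ sA, cube n q) ∩ interior (⋃ q ∈ sB, cube n q) ⊆ ⋃ q ∈ sI, cube n q) ∧
      Sw n δ sU + Sw n δ sI ≤ Sw n δ sA + Sw n δ sB := by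
  set T := sA ∪ sB with hT
  set sU := {q ∈ T | ∀ r ∈ T, cube n q ⊆ cube n r → q = r} with hsU
  set sI := (T \ sU) ∪ (sA ∩ sB) with hsI
  obtain ⟨K, hK⟩ := k_bound (n := n) hδ hB
  have hKT : ∀ q ∈ T, q.1 ≤ K := fun q hq => hK q (hbdd q hq)
  have hmax : ∀ N : ℕ, ∀ q ∈ T, (K - q.1).toNat ≤ N → ∃ r ∈ sU, cube n q ⊆ cube n r := by
    intro N
    induction N with
    | zero =>
      intro q hq hN
      have hqK : K ≤ q.1 := by omega
      refine ⟨q, ⟨hq, fun r hr hsub => ?_⟩, subset_rfl⟩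
      exact eq_of_subset_k_ge hn hsub ((hKT r hr).trans hqK)
    | succ N ih =>
      intro q hq hN
      by_cases hqU : q ∈ sU
      · exact ⟨q, hqU, subset_rfl⟩
      · have : ¬ ∀ r ∈ T, cube n q ⊆ cube n r → q = r := fun h => hqU ⟨hq, h⟩
        push_neg at this
        obtain ⟨r, hrT, hsub, hne⟩ := this
        have hlt : q.1 < r.1 := k_lt_of_ssubset hn hsub hne
        have hrK : r.1 ≤ K := hKT r hrT
        obtain ⟨r', hr', hsub'⟩ := ih r hrT (by omega)
        exact ⟨r', hr', hsub.trans hsub'⟩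
  refine ⟨sU, sI, fun q hq => hq.1, ?_, ?_, ?_, ?_⟩
  · intro q hq
    rcases hq with hq | hq
    · exact hq.1
    · exact Or.inl hq.1
  · intro q hq
    exact hmax (K - q.1).toNat q hq le_rfl
  · rintro x ⟨hxA, hxB⟩
    obtain ⟨qA, hqA, hxqA⟩ := Set.mem_iUnion₂.mp (interior_subset hxA)
    obtain ⟨qB, hqB, hxqB⟩ := Set.mem_iUnion₂.mp (interior_subset hxB)
    rcases cube_nested ⟨x, hxqA, hxqB⟩ with hsub | hsub
    · by_cases he : qA = qB
      · exact Set.mem_biUnion (Or.inr ⟨hqA, he ▸ hqB⟩) hxqA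
      · refine Set.mem_biUnion (Or.inl ⟨Or.inl hqA, fun hU => ?_⟩) hxqA
        exact he (hU.2 qB (Or.inr hqB) hsub)
    · by_cases he : qB = qA
      · exact Set.mem_biUnion (Or.inr ⟨he ▸ hqA, hqB⟩) hxqB
      · refine Set.mem_biUnion (Or.inl ⟨Or.inr hqB, fun hU => ?_⟩) hxqB
        exact he (hU.2 qA (Or.inl hqA) hsub)
  · calc Sw n δ sU + Sw n δ sI
        ≤ Sw n δ sU + (Sw n δ (T \ sU) + Sw n δ (sA ∩ sB)) :=
          add_le_add_right (Sw_union_le _ _) _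
    _ = (Sw n δ (T \ sU) + Sw n δ sU) + Sw n δ (sA ∩ sB) := by ring
    _ = Sw n δ T + Sw n δ (sA ∩ sB) := by
          rw [Sw_diff_add T sU (fun q hq => hq.1)]
    _ = Sw n δ sA + Sw n δ sB := Sw_union_add_inter sA sB



/-- One step of the Rogers net-measure construction. -/
lemma step_lemma (hn : 0 < n) (hδ : 0 < δ) {S εe : ℝ≥0∞} (hS : S ≠ ∞) (hεe' : εe ≠ ∞)
    {Em Em1 : Set (En n)} (hEsub : Em ⊆ Em1) (hμm : dyadicContent n δ Em ≤ S)
    (hμm1 : dyadicContent n δ Em1 ≤ S)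
    {s : Set (P n)} {em : ℝ≥0∞} (hem : em ≤ εe)
    (hsc : s.Countable) (hscov : Em ⊆ interior (⋃ q ∈ s, cube n q))
    (hssum : Sw n δ s ≤ dyadicContent n δ Em + em)
    {ε' : ℝ≥0∞} (hε' : 0 < ε') (hε'le : ε' ≤ εe) :
    ∃ t : Set (P n), t.Countable ∧ Em1 ⊆ interior (⋃ q ∈ t, cube n q) ∧
      Sw n δ t ≤ dyadicContent n δ Em1 + (em + ε') ∧
      ∀ q ∈ s, ∃ r ∈ t, cube n q ⊆ cube n r := by
  obtain ⟨s', hs'c, hs'cov, hs'sum⟩ := exists_cover (δ := δ) Em1 hε'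
  have hbdd : ∀ q ∈ s ∪ s', w δ q ≤ S + εe := by
    rintro q (hq | hq)
    · exact (le_Sw hq).trans (hssum.trans (add_le_add hμm hem))
    · exact (le_Sw hq).trans (hs'sum.trans (add_le_add hμm1 hε'le))
  have hBne : S + εe ≠ ∞ := ENNReal.add_ne_top.mpr ⟨hS, hεe'⟩
  obtain ⟨sU, sI, hUsub, hIsub, hmaxcov, hIcov, hsplit⟩ := split hn hδ s s' hbdd hBne
  have hμEmfin : dyadicContent n δ Em ≠ ∞ := (lt_of_le_of_lt hμm (lt_top_iff_ne_top.mpr hS)).ne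
  have hIc : sI.Countable := (hsc.union hs'c).mono hIsub
  have hμEmI : dyadicContent n δ Em ≤ Sw n δ sI := by
    refine content_le_Sw hδ hIc ?_
    have hO : Em ⊆ interior (⋃ q ∈ s, cube n q) ∩ interior (⋃ q ∈ s', cube n q) :=
      Set.subset_inter hscov (hEsub.trans hs'cov)
    exact hO.trans (interior_maximal hIcov (isOpen_interior.inter isOpen_interior))
  refine ⟨sU, (hsc.union hs'c).mono hUsub, ?_, ?_, fun q hq => hmaxcov q (Or.inl hq)⟩
  · refine hs'cov.trans (interior_mono ?_)
    refine Set.iUnion₂_subset fun q hq => ?_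
    obtain ⟨r, hr, hsub⟩ := hmaxcov q (Or.inr hq)
    exact hsub.trans (Set.subset_biUnion_of_mem hr)
  · have key : Sw n δ sU + dyadicContent n δ Em
        ≤ dyadicContent n δ Em + (em + (dyadicContent n δ Em1 + ε')) := by
      calc Sw n δ sU + dyadicContent n δ Em ≤ Sw n δ sU + Sw n δ sI :=
            add_le_add_right hμEmI _
      _ ≤ Sw n δ s + Sw n δ s' := hsplit
      _ ≤ (dyadicContent n δ Em + em) + (dyadicContent n δ Em1 + ε') :=
            add_le_add hssum hs'sum
      _ = dyadicContent n δ Em + (em + (dyadicContent n δ Em1 + ε')) := by ring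
    rw [add_comm (Sw n δ sU) _] at key
    have := (ENNReal.add_le_add_iff_left hμEmfin).mp key
    calc Sw n δ sU ≤ em + (dyadicContent n δ Em1 + ε') := this
    _ = dyadicContent n δ Em1 + (em + ε') := by ring





/-- Increasing sets lemma for the dyadic Hausdorff content. -/
lemma content_iUnion_monotone (hn : 0 < n) (hδ : 0 < δ) (E : ℕ → Set (En n))
    (hE : ∀ m, E m ⊆ E (m + 1)) :
    dyadicContent n δ (⋃ m, E m) = ⨆ m, dyadicContent n δ (E m) := by
  refine le_antisymm ?_ (iSup_le fun m => content_mono (Set.subset_iUnion E m))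
  set S := ⨆ m, dyadicContent n δ (E m) with hSdef
  have hμS : ∀ m, dyadicContent n δ (E m) ≤ S := by
    intro m; rw [hSdef]; exact le_iSup (fun m => dyadicContent n δ (E m)) m
  rcases eq_or_ne S ∞ with hStop | hS
  · rw [hStop]; exact le_top
  apply ENNReal.le_of_forall_pos_le_add
  intro ε hε _
  set εe : ℝ≥0∞ := (ε : ℝ≥0∞) with hεedef
  have hεe0 : 0 < εe := by rw [hεedef]; exact_mod_cast hε
  have hεe' : εe ≠ ∞ := ENNReal.coe_ne_top
  have hhalf : ∀ j : ℕ, (0:ℝ≥0∞) < εe * 2⁻¹ ^ j :=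
    fun j => ENNReal.mul_pos hεe0.ne' (pow_ne_zero j (ENNReal.inv_ne_zero.mpr (by norm_num)))
  set e : ℕ → ℝ≥0∞ := fun m => ∑ j ∈ Finset.range (m+1), εe * 2⁻¹ ^ (j+1) with hedef
  have he_le : ∀ m, e m ≤ εe := by
    intro m
    have h1 : ∑ j ∈ Finset.range (m+1), εe * 2⁻¹ ^ (j+1)
        ≤ ∑' j : ℕ, εe * 2⁻¹ ^ (j+1) := ENNReal.sum_le_tsum _
    have h2 : ∑' j : ℕ, εe * (2⁻¹:ℝ≥0∞) ^ (j+1) = εe * (2⁻¹ * (1 - 2⁻¹)⁻¹) := by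
      rw [ENNReal.tsum_mul_left, ENNReal.tsum_geometric_add_one]
    have h3 : (2⁻¹:ℝ≥0∞) * (1 - 2⁻¹)⁻¹ = 1 := by
      rw [ENNReal.one_sub_inv_two, inv_inv]
      exact ENNReal.inv_mul_cancel (by norm_num) (by norm_num)
    calc e m ≤ ∑' j : ℕ, εe * 2⁻¹ ^ (j+1) := h1
    _ = εe := by rw [h2, h3, mul_one]
  have he_succ : ∀ m, e (m+1) = e m + εe * 2⁻¹ ^ (m+2) := fun m => Finset.sum_range_succ _ _
  -- the chain of covers
  have base : ∃ s : Set (P n), s.Countable ∧ E 0 ⊆ interior (⋃ q ∈ s, cube n q) ∧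
      Sw n δ s ≤ dyadicContent n δ (E 0) + e 0 := by
    obtain ⟨s, hc, hcov, hsum⟩ := exists_cover (δ := δ) (E 0) (hhalf 1)
    refine ⟨s, hc, hcov, ?_⟩
    have h0 : e 0 = εe * 2⁻¹ ^ (0 + 1) := by
      rw [hedef]
      exact Finset.sum_range_one (f := fun j => εe * (2:ℝ≥0∞)⁻¹ ^ (j + 1))
    rw [h0]
    simpa using hsum
  have stepex : ∀ m (s : Set (P n)),
      (s.Countable ∧ E m ⊆ interior (⋃ q ∈ s, cube n q) ∧
        Sw n δ s ≤ dyadicContent n δ (E m) + e m) →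
      ∃ t : Set (P n), (t.Countable ∧ E (m+1) ⊆ interior (⋃ q ∈ t, cube n q) ∧
        Sw n δ t ≤ dyadicContent n δ (E (m+1)) + e (m+1)) ∧
        ∀ q ∈ s, ∃ r ∈ t, cube n q ⊆ cube n r := by
    intro m s ⟨hc, hcov, hsum⟩
    obtain ⟨t, htc, htcov, htsum, hchain⟩ := step_lemma hn hδ hS hεe' (hE m) (hμS m)
      (hμS (m+1)) (he_le m) hc hcov hsum (hhalf (m+2))
      (le_trans (mul_le_of_le_one_right zero_le (pow_le_one₀ zero_le
        (ENNReal.inv_le_one.mpr (by norm_num)))) le_rfl)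
    exact ⟨t, ⟨htc, htcov, by rwa [he_succ m]⟩, hchain⟩
  choose! step hstep1 hstep2 using stepex
  set D : ℕ → Set (P n) := fun m => Nat.rec base.choose (fun m s => step m s) m with hDdef
  have hGood : ∀ m, (D m).Countable ∧ E m ⊆ interior (⋃ q ∈ D m, cube n q) ∧
      Sw n δ (D m) ≤ dyadicContent n δ (E m) + e m := by
    intro m
    induction m with
    | zero => exact base.choose_spec
    | succ m ih => exact hstep1 m (D m) ih
  have hchain : ∀ m, ∀ q ∈ D m, ∃ r ∈ D (m+1), cube n q ⊆ cube n r :=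
    fun m => hstep2 m (D m) (hGood m)
  have hchain' : ∀ a b, a ≤ b → ∀ q ∈ D a, ∃ r ∈ D b, cube n q ⊆ cube n r := by
    intro a b hab
    induction b, hab using Nat.le_induction with
    | base => exact fun q hq => ⟨q, hq, subset_rfl⟩
    | succ b hab ih =>
      intro q hq
      obtain ⟨r, hr, hsub⟩ := ih q hq
      obtain ⟨r', hr', hsub'⟩ := hchain b r hr
      exact ⟨r', hr', hsub.trans hsub'⟩
  have hwbdd : ∀ m, ∀ q ∈ D m, w δ q ≤ S + εe := by
    intro m q hq
    exact (le_Sw hq).trans ((hGood m).2.2.trans (add_le_add (hμS m) (he_le m)))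
  obtain ⟨K, hK⟩ := k_bound (n := n) hδ (ENNReal.add_ne_top.mpr ⟨hS, hεe'⟩)
  have hKD : ∀ m, ∀ q ∈ D m, q.1 ≤ K := fun m q hq => hK q (hwbdd m q hq)
  set Dinf : Set (P n) := {q | ∃ M, ∀ m, M ≤ m → q ∈ D m} with hDinf
  -- persistence
  have hpers : ∀ N : ℕ, ∀ m (q : P n), q ∈ D m → (K - q.1).toNat ≤ N →
      ∃ r ∈ Dinf, cube n q ⊆ cube n r := by
    intro N
    induction N with
    | zero =>
      intro m q hq hN
      have hqK : K ≤ q.1 := by omega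
      refine ⟨q, ⟨m, ?_⟩, subset_rfl⟩
      intro m' hm'
      induction m', hm' using Nat.le_induction with
      | base => exact hq
      | succ b hab ih =>
        obtain ⟨r, hr, hsub⟩ := hchain b q ih
        have : q = r := eq_of_subset_k_ge hn hsub ((hKD (b+1) r hr).trans hqK)
        rwa [this]
    | succ N ih =>
      intro m q hq hN
      by_cases hall : ∀ m', m ≤ m' → q ∈ D m'
      · exact ⟨q, ⟨m, hall⟩, subset_rfl⟩
      · push_neg at hall
        obtain ⟨m', hm', hqm'⟩ := hall
        obtain ⟨r, hr, hsub⟩ := hchain' m m' hm' q hq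
        have hne : q ≠ r := fun h => hqm' (h ▸ hr)
        have hlt : q.1 < r.1 := k_lt_of_ssubset hn hsub hne
        have hrK : r.1 ≤ K := hKD m' r hr
        obtain ⟨r', hr', hsub'⟩ := ih m' r hr (by omega)
        exact ⟨r', hr', hsub.trans hsub'⟩
  -- conclude
  have hDinfc : Dinf.Countable := by
    refine (Set.countable_iUnion (fun m => (hGood m).1)).mono ?_
    rintro q ⟨M, hM⟩
    exact Set.mem_iUnion.mpr ⟨M, hM M le_rfl⟩
  have hDinfcov : (⋃ m, E m) ⊆ interior (⋃ q ∈ Dinf, cube n q) := by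
    refine Set.iUnion_subset fun m => ?_
    refine (hGood m).2.1.trans (interior_mono ?_)
    refine Set.iUnion₂_subset fun q hq => ?_
    obtain ⟨r, hr, hsub⟩ := hpers (K - q.1).toNat m q hq le_rfl
    exact hsub.trans (Set.subset_biUnion_of_mem hr)
  have hDinfsum : Sw n δ Dinf ≤ S + εe := by
    rw [Sw, ENNReal.tsum_eq_iSup_sum]
    refine iSup_le fun F => ?_
    have hMx : ∀ x : ↥Dinf, ∃ M, ∀ m, M ≤ m → (x : P n) ∈ D m := fun x => x.2
    choose M hM using hMx
    set MF := F.sup M with hMF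
    have hmem : ∀ x ∈ F, (x : P n) ∈ D MF := fun x hx => hM x MF (Finset.le_sup hx)
    have h1 : ∑ x ∈ F, w δ (x : P n) = ∑ x ∈ F, (D MF).indicator (w δ) (x : P n) := by
      refine Finset.sum_congr rfl fun x hx => ?_
      rw [Set.indicator_of_mem (hmem x hx)]
    have h2 : ∑ x ∈ F, (D MF).indicator (w δ) (x : P n)
        = ∑ q ∈ F.image (fun x : ↥Dinf => (x : P n)), (D MF).indicator (w δ) q := by
      rw [Finset.sum_image]
      intro x _ y _ h
      exact Subtype.ext h
    calc ∑ x ∈ F, w δ (x : P n)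
        = ∑ q ∈ F.image (fun x : ↥Dinf => (x : P n)), (D MF).indicator (w δ) q := by
          rw [h1, h2]
    _ ≤ ∑' q, (D MF).indicator (w δ) q := ENNReal.sum_le_tsum _
    _ = Sw n δ (D MF) := (Sw_eq_tsum_indicator _).symm
    _ ≤ dyadicContent n δ (E MF) + e MF := (hGood MF).2.2
    _ ≤ S + εe := add_le_add (hμS MF) (he_le MF)
  calc dyadicContent n δ (⋃ m, E m) ≤ Sw n δ Dinf := content_le_Sw hδ hDinfc hDinfcov
  _ ≤ S + εe := hDinfsum


end DyadicMCT

open DyadicMCT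

/-- monotone convergence for the Choquet integral with respect to
the dyadic Hausdorff content. -/
theorem choquet_monotone_convergence (n : ℕ) (hn : 1 ≤ n) (Ω : Set (En n))
    (δ : ℝ) (hδ0 : 0 < δ) (hδn : δ ≤ n)
    (f : ℕ → En n → ℝ≥0∞) (g : En n → ℝ≥0∞)
    (hmono : ∀ i, ∀ x ∈ Ω, f i x ≤ f (i + 1) x)
    (hlim : ∀ x ∈ Ω, Tendsto (fun i => f i x) atTop (𝓝 (g x))) :
    Tendsto (fun i => choquetIntegral n δ Ω (f i)) atTop
      (𝓝 (choquetIntegral n δ Ω g)) := by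
  have hn0 : 0 < n := hn
  have hmono' : ∀ x ∈ Ω, Monotone fun i => f i x := fun x hx =>
    monotone_nat_of_le_succ fun i => hmono i x hx
  have hg : ∀ x ∈ Ω, g x = ⨆ i, f i x := fun x hx =>
    tendsto_nhds_unique (hlim x hx) (tendsto_atTop_iSup (hmono' x hx))
  set A : ℕ → ℝ → Set (En n) := fun i t => {x | x ∈ Ω ∧ ENNReal.ofReal t < f i x} with hA
  set F : ℕ → ℝ → ℝ≥0∞ := fun i t => dyadicContent n δ (A i t) with hF
  have hAmono : ∀ t i j, i ≤ j → A i t ⊆ A j t := by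
    rintro t i j hij x ⟨hx, hlt⟩
    exact ⟨hx, lt_of_lt_of_le hlt (hmono' x hx hij)⟩
  have hAun : ∀ t : ℝ, {x | x ∈ Ω ∧ ENNReal.ofReal t < g x} = ⋃ i, A i t := by
    intro t
    ext x
    constructor
    · rintro ⟨hx, hlt⟩
      rw [hg x hx] at hlt
      obtain ⟨i, hi⟩ := lt_iSup_iff.mp hlt
      exact Set.mem_iUnion.mpr ⟨i, hx, hi⟩
    · rintro hxu
      obtain ⟨i, hx, hi⟩ := Set.mem_iUnion.mp hxu
      refine ⟨hx, lt_of_lt_of_le hi ?_⟩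
      rw [hg x hx]
      exact le_iSup (fun i => f i x) i
  have key : ∀ t : ℝ, dyadicContent n δ {x | x ∈ Ω ∧ ENNReal.ofReal t < g x} = ⨆ i, F i t := by
    intro t
    rw [hAun t]
    exact content_iUnion_monotone hn0 hδ0 (fun i => A i t) (fun i => hAmono t i (i+1) (by omega))
  have hFmeas : ∀ i, Measurable (F i) := by
    intro i
    apply Antitone.measurable
    intro t s hts
    apply content_mono
    rintro x ⟨hx, hlt⟩
    exact ⟨hx, lt_of_le_of_lt (ENNReal.ofReal_le_ofReal hts) hlt⟩
  have hFmono : Monotone F := fun i j hij t => content_mono (hAmono t i j hij)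
  have hmain : choquetIntegral n δ Ω g = ⨆ i, choquetIntegral n δ Ω (f i) := by
    calc choquetIntegral n δ Ω g
        = ∫⁻ t in Ioi (0:ℝ), ⨆ i, F i t := by
          exact lintegral_congr fun t => key t
    _ = ⨆ i, ∫⁻ t in Ioi (0:ℝ), F i t := lintegral_iSup hFmeas hFmono
    _ = ⨆ i, choquetIntegral n δ Ω (f i) := rfl
  rw [hmain]
  exact tendsto_atTop_iSup fun i j hij => lintegral_mono fun t => hFmono hij t
end
end

section
/- Let n ≥ 1, let Ω be any subset of ℝⁿ, and let δ ∈ (0, n]. If (f_i)_{i≥1} is any sequence of functions f_i : Ω → [0, ∞], then Fatou's lemma holds for the Choquet integral: ∫_Ω (liminf_{i→∞} f_i) dH̃^δ_∞ ≤ liminf_{i→∞} ∫_Ω f_i dH̃^δ_∞. -/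
open MeasureTheory Set Metric Filter Topology
open scoped ENNReal

noncomputable section

namespace CF

variable {n : ℕ}

abbrev Code (n : ℕ) := ℤ × (Fin n → ℤ)

def cube (p : Code n) : Set (En n) := dyadicCube n p.1 p.2

def wtk (δ : ℝ) (k : ℤ) : ℝ≥0∞ := ENNReal.ofReal (((2 : ℝ) ^ k) ^ δ)

def wt (δ : ℝ) (p : Code n) : ℝ≥0∞ := wtk δ p.1

lemma two_zpow_pos (k : ℤ) : (0:ℝ) < 2 ^ k := zpow_pos (by norm_num) k

lemma mem_cube {p : Code n} {x : En n} :
    x ∈ cube p ↔ ∀ i, (p.2 i : ℝ) * 2 ^ p.1 ≤ x i ∧ x i < ((p.2 i : ℝ) + 1) * 2 ^ p.1 :=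
  Iff.rfl

/-- 1-D overlap lemma. -/
lemma interval_subset {k k' a a' : ℤ} (hk : k ≤ k') {x : ℝ}
    (h1 : (a:ℝ) * 2 ^ k ≤ x) (h2 : x < ((a:ℝ)+1) * 2 ^ k)
    (h1' : (a':ℝ) * 2 ^ k' ≤ x) (h2' : x < ((a':ℝ)+1) * 2 ^ k') :
    ∀ y : ℝ, (a:ℝ) * 2 ^ k ≤ y → y < ((a:ℝ)+1) * 2 ^ k →
      ((a':ℝ) * 2 ^ k' ≤ y ∧ y < ((a':ℝ)+1) * 2 ^ k') := by
  set e : ℕ := (k' - k).toNat with he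
  have hke : k' = k + (e : ℤ) := by
    rw [he, Int.toNat_of_nonneg (by omega)]; ring
  have h2e : (2:ℝ) ^ k' = 2 ^ k * 2 ^ e := by
    rw [hke, zpow_add₀ (by norm_num : (2:ℝ) ≠ 0), zpow_natCast]
  have hkpos := two_zpow_pos k
  -- integer inequalities
  have ha1 : ((a' * 2 ^ e : ℤ) : ℝ) < ((a : ℝ) + 1) := by
    push_cast
    have : (a':ℝ) * 2 ^ k' < ((a:ℝ)+1) * 2 ^ k := lt_of_le_of_lt h1' h2
    rw [h2e] at this
    nlinarith
  have ha2 : (a:ℝ) < (((a' + 1) * 2 ^ e : ℤ) : ℝ) := by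
    push_cast
    have : (a:ℝ) * 2 ^ k < ((a':ℝ)+1) * 2 ^ k' := lt_of_le_of_lt h1 h2'
    rw [h2e] at this
    nlinarith
  have hb1 : (a' * 2 ^ e : ℤ) ≤ a := by
    have h' : ((a' * 2 ^ e : ℤ) : ℝ) < ((a + 1 : ℤ) : ℝ) := by push_cast at ha1 ⊢; linarith
    have := (@Int.cast_lt ℝ _ _ _).mp h'
    omega
  have hb2 : a + 1 ≤ (a' + 1) * 2 ^ e := by
    have h' : ((a : ℤ) : ℝ) < (((a' + 1) * 2 ^ e : ℤ) : ℝ) := by push_cast at ha2 ⊢; linarith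
    have := (@Int.cast_lt ℝ _ _ _).mp h'
    omega
  intro y hy1 hy2
  constructor
  · have : ((a' * 2 ^ e : ℤ) : ℝ) ≤ (a:ℝ) := by exact_mod_cast hb1
    push_cast at this
    calc (a':ℝ) * 2 ^ k' = (a' * 2 ^ e : ℝ) * 2 ^ k := by rw [h2e]; ring
    _ ≤ (a:ℝ) * 2 ^ k := by nlinarith
    _ ≤ y := hy1
  · have : ((a:ℝ) + 1) ≤ ((a' + 1 : ℝ)) * 2 ^ e := by exact_mod_cast hb2
    calc y < ((a:ℝ)+1) * 2 ^ k := hy2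
    _ ≤ ((a':ℝ)+1) * 2 ^ e * 2 ^ k := by nlinarith
    _ = ((a':ℝ)+1) * 2 ^ k' := by rw [h2e]; ring

lemma cube_subset_of_inter {p q : Code n} (hk : p.1 ≤ q.1)
    (hne : (cube p ∩ cube q).Nonempty) : cube p ⊆ cube q := by
  obtain ⟨x, hxp, hxq⟩ := hne
  intro y hy i
  exact interval_subset hk (hxp i).1 (hxp i).2 (hxq i).1 (hxq i).2 (y i) (hy i).1 (hy i).2

def corner (p : Code n) : En n := WithLp.toLp 2 (fun i => (p.2 i : ℝ) * 2 ^ p.1)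

lemma corner_mem (p : Code n) : corner p ∈ cube p := by
  intro i
  refine ⟨le_refl _, ?_⟩
  have := two_zpow_pos p.1
  show (p.2 i : ℝ) * 2 ^ p.1 < _
  nlinarith

lemma cube_nonempty (p : Code n) : (cube p).Nonempty := ⟨corner p, corner_mem p⟩

lemma cube_chain {p q : Code n} (h : (cube p ∩ cube q).Nonempty) :
    cube p ⊆ cube q ∨ cube q ⊆ cube p := by
  rcases le_total p.1 q.1 with hk | hk
  · exact Or.inl (cube_subset_of_inter hk h)
  · exact Or.inr (cube_subset_of_inter hk (by rwa [Set.inter_comm] at h))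

end CF

namespace CF

variable {n : ℕ}

lemma subset_scale_le (hn : 1 ≤ n) {p q : Code n} (h : cube p ⊆ cube q) : p.1 ≤ q.1 := by
  set i₀ : Fin n := ⟨0, hn⟩
  -- lower endpoint
  have hc := h (corner_mem p)
  have hlow : (q.2 i₀ : ℝ) * 2 ^ q.1 ≤ (p.2 i₀ : ℝ) * 2 ^ p.1 := (hc i₀).1
  -- upper endpoint: for every t < (p.2 i₀ + 1) * 2^p.1 with t ≥ lower, the point with i₀-coord t is in cube p
  have hup : ((p.2 i₀ : ℝ) + 1) * 2 ^ p.1 ≤ ((q.2 i₀ : ℝ) + 1) * 2 ^ q.1 := by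
    refine le_of_forall_lt fun t ht => ?_
    rcases lt_or_ge t ((p.2 i₀ : ℝ) * 2 ^ p.1) with h' | h'
    · exact h'.trans ((hc i₀).2)
    · -- the modified corner point
      set y : En n := WithLp.toLp 2 (Function.update (corner p).ofLp i₀ t) with hy
      have hymem : y ∈ cube p := by
        intro j
        by_cases hj : j = i₀
        · subst hj
          rw [hy]; simp only [WithLp.ofLp_toLp, Function.update_self]
          exact ⟨h', ht⟩
        · rw [hy]; simp only [WithLp.ofLp_toLp, Function.update_of_ne hj]
          exact corner_mem p j
      have := (h hymem) i₀
      rw [hy] at this; simp only [WithLp.ofLp_toLp, Function.update_self] at this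
      exact this.2
  have hlen : (2:ℝ) ^ p.1 ≤ 2 ^ q.1 := by nlinarith
  exact le_of_not_gt fun hlt => absurd hlen (not_le.mpr (zpow_lt_zpow_right₀ (by norm_num : (1:ℝ) < 2) hlt))

lemma cube_inj (hn : 1 ≤ n) {p q : Code n} (h : cube p = cube q) : p = q := by
  have h1 : p.1 ≤ q.1 := subset_scale_le hn h.le
  have h2 : q.1 ≤ p.1 := subset_scale_le hn h.ge
  have hk : p.1 = q.1 := le_antisymm h1 h2
  have hcm := h.le (corner_mem p)
  have hm : p.2 = q.2 := by
    funext i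
    have h3 := (hcm i).1
    have h4 := (hcm i).2
    have hcp : corner p i = (p.2 i : ℝ) * 2 ^ p.1 := rfl
    rw [← hk, hcp] at h3 h4
    have hpos := two_zpow_pos p.1
    have hle : (q.2 i : ℝ) ≤ p.2 i := by
      exact le_of_mul_le_mul_right (by linarith) hpos
    have hlt : (p.2 i : ℝ) < q.2 i + 1 := by
      exact lt_of_mul_lt_mul_right (by linarith) hpos.le
    have : (q.2 i : ℤ) ≤ p.2 i := by exact_mod_cast hle
    have : (p.2 i : ℤ) < q.2 i + 1 := by exact_mod_cast hlt
    omega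
  exact Prod.ext hk hm

/-- weight lemmas -/
lemma wtk_pos (δ : ℝ) (k : ℤ) : 0 < wtk δ k :=
  ENNReal.ofReal_pos.mpr (Real.rpow_pos_of_pos (two_zpow_pos k) δ)

lemma wtk_ne_top (δ : ℝ) (k : ℤ) : wtk δ k ≠ ⊤ := ENNReal.ofReal_ne_top

lemma wtk_mono {δ : ℝ} (hδ : 0 ≤ δ) : Monotone (wtk δ) := by
  intro k k' hk
  exact ENNReal.ofReal_le_ofReal
    (Real.rpow_le_rpow (two_zpow_pos k).le
      (zpow_le_zpow_right₀ (by norm_num : (1:ℝ) ≤ 2) hk) hδ)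

lemma exists_scale_bound {δ : ℝ} (hδ0 : 0 < δ) (B : ℝ≥0∞) (hB : B ≠ ⊤) :
    ∃ K : ℤ, ∀ k : ℤ, wtk δ k ≤ B → k ≤ K := by
  set R : ℝ := max B.toReal 1 with hR
  have hR1 : 1 ≤ R := le_max_right _ _
  obtain ⟨m, hm⟩ := pow_unbounded_of_one_lt (R ^ (1/δ)) (by norm_num : (1:ℝ) < 2)
  refine ⟨m, fun k hk => ?_⟩
  by_contra hkm
  push_neg at hkm
  have h2m : (2:ℝ) ^ ((m:ℤ)) < 2 ^ k := zpow_lt_zpow_right₀ (by norm_num) hkm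
  have hRpos : 0 < R := lt_of_lt_of_le one_pos hR1
  have hstep : R < ((2:ℝ) ^ (m:ℤ)) ^ δ := by
    have h1 : R ^ (1/δ) < (2:ℝ) ^ (m:ℤ) := by
      rw [zpow_natCast]; exact hm
    have h2 : (R ^ (1/δ)) ^ δ < ((2:ℝ) ^ (m:ℤ)) ^ δ :=
      Real.rpow_lt_rpow (Real.rpow_nonneg hRpos.le _) h1 hδ0
    rwa [← Real.rpow_mul hRpos.le, one_div_mul_cancel hδ0.ne', Real.rpow_one] at h2
  have hlt : R < ((2:ℝ) ^ k) ^ δ :=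
    hstep.trans_le (Real.rpow_le_rpow (two_zpow_pos _).le h2m.le hδ0.le)
  have : wtk δ k ≤ B := hk
  rw [wtk] at this
  have hBR : B ≤ ENNReal.ofReal R := by
    rw [hR]
    rcases le_total B.toReal 1 with h | h
    · calc B = ENNReal.ofReal B.toReal := (ENNReal.ofReal_toReal hB).symm
      _ ≤ ENNReal.ofReal (max B.toReal 1) := ENNReal.ofReal_le_ofReal (le_max_left _ _)
    · calc B = ENNReal.ofReal B.toReal := (ENNReal.ofReal_toReal hB).symm
      _ ≤ ENNReal.ofReal (max B.toReal 1) := ENNReal.ofReal_le_ofReal (le_max_left _ _)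
  have hcon : ENNReal.ofReal (((2:ℝ) ^ k) ^ δ) ≤ ENNReal.ofReal R := this.trans hBR
  rw [ENNReal.ofReal_le_ofReal_iff hRpos.le] at hcon
  linarith

/-- supercubes with bounded scale form a finite set -/
lemma finite_supercubes (hn : 1 ≤ n) (p : Code n) (K : ℤ) :
    {q : Code n | cube p ⊆ cube q ∧ q.1 ≤ K}.Finite := by
  have hinj : Set.InjOn (fun q : Code n => q.1) {q | cube p ⊆ cube q ∧ q.1 ≤ K} := by
    intro q hq r hr hqr
    simp only [Set.mem_setOf_eq] at hq hr
    have hne : (cube q ∩ cube r).Nonempty := by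
      obtain ⟨x, hx⟩ := cube_nonempty p
      exact ⟨x, hq.1 hx, hr.1 hx⟩
    rcases cube_chain hne with h | h
    · have h2 : cube r ⊆ cube q := cube_subset_of_inter (le_of_eq hqr.symm) (by rwa [Set.inter_comm] at hne)
      exact cube_inj hn (le_antisymm h h2)
    · have h2 : cube q ⊆ cube r := cube_subset_of_inter (le_of_eq hqr) hne
      exact cube_inj hn (le_antisymm h2 h)
  have himage : (fun q : Code n => q.1) '' {q | cube p ⊆ cube q ∧ q.1 ≤ K} ⊆ Set.Icc p.1 K := by
    rintro j ⟨q, hq, rfl⟩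
    exact ⟨subset_scale_le hn hq.1, hq.2⟩
  exact Set.Finite.of_finite_image ((Set.finite_Icc p.1 K).subset himage) hinj

/-- existence of a maximal supercube within a scale-bounded family -/
lemma exists_maximal (hn : 1 ≤ n) (𝒜 : Set (Code n)) (K : ℤ) (hK : ∀ p ∈ 𝒜, p.1 ≤ K)
    {p : Code n} (hp : p ∈ 𝒜) :
    ∃ q ∈ 𝒜, cube p ⊆ cube q ∧ ∀ r ∈ 𝒜, cube q ⊆ cube r → q = r := by
  have hbdd : ∃ b : ℤ, ∀ z ∈ {j : ℤ | ∃ r ∈ 𝒜, r.1 = j ∧ cube p ⊆ cube r}, z ≤ b :=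
    ⟨K, fun z ⟨r, hr, hrz, _⟩ => hrz ▸ hK r hr⟩
  obtain ⟨j, ⟨⟨q, hq𝒜, hqj, hpq⟩, hjmax⟩⟩ :=
    Int.exists_greatest_of_bdd (P := fun j => ∃ r ∈ 𝒜, r.1 = j ∧ cube p ⊆ cube r)
      ⟨K, fun z ⟨r, hr, hrz, _⟩ => hrz ▸ hK r hr⟩ ⟨p.1, p, hp, rfl, subset_refl _⟩
  refine ⟨q, hq𝒜, hpq, ?_⟩
  intro r hr hqr
  have hpr : cube p ⊆ cube r := hpq.trans hqr
  have hrj : r.1 ≤ j := hjmax r.1 ⟨r, hr, rfl, hpr⟩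
  have hqr1 : q.1 ≤ r.1 := subset_scale_le hn hqr
  have hrq : cube r ⊆ cube q := by
    apply cube_subset_of_inter (by omega)
    obtain ⟨x, hx⟩ := cube_nonempty q
    exact ⟨x, hqr hx, hx⟩
  exact cube_inj hn (le_antisymm hqr hrq)

/-- every point of an open set lies in a small dyadic cube inside it -/
lemma exists_cube_mem_subset {U : Set (En n)} (hU : IsOpen U) {x : En n} (hx : x ∈ U) :
    ∃ p : Code n, x ∈ cube p ∧ cube p ⊆ U := by
  obtain ⟨r, hr, hball⟩ := Metric.isOpen_iff.mp hU x hx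
  obtain ⟨j, hj⟩ := exists_pow_lt_of_lt_one (show (0:ℝ) < r / (n+1) by positivity)
    (by norm_num : (1:ℝ)/2 < 1)
  set k : ℤ := -(j:ℤ) with hk
  have h2k : (2:ℝ) ^ k = (1/2)^j := by
    rw [hk, zpow_neg, ← one_div, one_div_pow]
    norm_num
  have h2kpos := two_zpow_pos k
  set m : Fin n → ℤ := fun i => ⌊x i / 2 ^ k⌋ with hm
  refine ⟨(k, m), ?_, ?_⟩
  · intro i
    constructor
    · have := Int.floor_le (x i / 2 ^ k)
      calc ((m i : ℝ)) * 2 ^ k ≤ (x i / 2 ^ k) * 2 ^ k := by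
            apply mul_le_mul_of_nonneg_right _ h2kpos.le
            exact this
      _ = x i := by field_simp
    · have := Int.lt_floor_add_one (x i / 2 ^ k)
      calc x i = (x i / 2 ^ k) * 2 ^ k := by field_simp
      _ < ((m i : ℝ) + 1) * 2 ^ k := by
            apply mul_lt_mul_of_pos_right _ h2kpos
            exact this
  · intro y hy
    apply hball
    have hdist : dist y x < r := by
      have hcoord : ∀ i, dist (y i) (x i) < 2 ^ k := by
        intro i
        have h1 := (hy i).1
        have h2 := (hy i).2
        have hx1 : ((m i : ℝ)) * 2 ^ k ≤ x i := by
          have := Int.floor_le (x i / 2 ^ k)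
          calc ((m i : ℝ)) * 2 ^ k ≤ (x i / 2 ^ k) * 2 ^ k :=
                mul_le_mul_of_nonneg_right this h2kpos.le
          _ = x i := by field_simp
        have hx2 : x i < ((m i : ℝ) + 1) * 2 ^ k := by
          have := Int.lt_floor_add_one (x i / 2 ^ k)
          calc x i = (x i / 2 ^ k) * 2 ^ k := by field_simp
          _ < ((m i : ℝ) + 1) * 2 ^ k := mul_lt_mul_of_pos_right this h2kpos
        rw [Real.dist_eq, abs_lt]
        constructor <;> nlinarith
      rw [EuclideanSpace.dist_eq]
      have hsum : (∑ i, dist (y i) (x i) ^ 2) ≤ n * ((2:ℝ)^k)^2 := by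
        calc (∑ i, dist (y i) (x i) ^ 2) ≤ ∑ _i : Fin n, ((2:ℝ)^k)^2 := by
              apply Finset.sum_le_sum
              intro i _
              have := (hcoord i).le
              have hd : (0:ℝ) ≤ dist (y i) (x i) := dist_nonneg
              nlinarith
        _ = n * ((2:ℝ)^k)^2 := by rw [Finset.sum_const]; simp [mul_comm]
      have h1 : Real.sqrt (∑ i, dist (y i) (x i) ^ 2) ≤ Real.sqrt (n * ((2:ℝ)^k)^2) :=
        Real.sqrt_le_sqrt hsum
      have h2 : Real.sqrt (n * ((2:ℝ)^k)^2) ≤ (n+1) * 2 ^ k := by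
        rw [show ((n:ℝ)+1) * 2^k = Real.sqrt ((((n:ℝ)+1) * 2^k)^2) from
          (Real.sqrt_sq (by positivity)).symm]
        apply Real.sqrt_le_sqrt
        nlinarith [sq_nonneg ((2:ℝ)^k)]
      have h3 : ((n:ℝ)+1) * 2 ^ k < r := by
        rw [h2k]
        have hn1 : (0:ℝ) < (n:ℝ)+1 := by positivity
        calc ((n:ℝ)+1) * (1/2)^j < ((n:ℝ)+1) * (r/((n:ℝ)+1)) :=
              mul_lt_mul_of_pos_left hj hn1
        _ = r := by field_simp
      linarith
    exact hdist

end CF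

namespace CF

variable {n : ℕ}

def ccost (δ : ℝ) (c : ℕ → Code n) : ℝ≥0∞ := ∑' i, wt δ (c i)

lemma dyadicContent_eq (δ : ℝ) (E : Set (En n)) :
    dyadicContent n δ E =
      ⨅ (c : ℕ → Code n) (_ : E ⊆ interior (⋃ i, cube (c i))), ccost δ c := rfl

lemma content_le_cost {δ : ℝ} {E : Set (En n)} (c : ℕ → Code n)
    (h : E ⊆ interior (⋃ i, cube (c i))) : dyadicContent n δ E ≤ ccost δ c := by
  rw [dyadicContent_eq]
  exact iInf_le_of_le c (iInf_le_of_le h le_rfl)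

lemma content_mono {δ : ℝ} {A B : Set (En n)} (h : A ⊆ B) :
    dyadicContent n δ A ≤ dyadicContent n δ B := by
  rw [dyadicContent_eq, dyadicContent_eq]
  exact le_iInf fun c => le_iInf fun hc => iInf_le_of_le c (iInf_le_of_le (h.trans hc) le_rfl)

lemma exists_cover {δ : ℝ} {E : Set (En n)} {b : ℝ≥0∞} (h : dyadicContent n δ E < b) :
    ∃ c : ℕ → Code n, E ⊆ interior (⋃ i, cube (c i)) ∧ ccost δ c < b := by
  rw [dyadicContent_eq, iInf_lt_iff] at h
  obtain ⟨c, hc⟩ := h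
  rw [iInf_lt_iff] at hc
  obtain ⟨hcov, hlt⟩ := hc
  exact ⟨c, hcov, hlt⟩

lemma wtk_add (δ : ℝ) (a b : ℤ) : wtk δ (a + b) = wtk δ a * wtk δ b := by
  rw [wtk, wtk, wtk, zpow_add₀ (by norm_num : (2:ℝ) ≠ 0),
    Real.mul_rpow (two_zpow_pos a).le (two_zpow_pos b).le,
    ENNReal.ofReal_mul (Real.rpow_nonneg (two_zpow_pos a).le δ)]

lemma wtk_neg_nat (δ : ℝ) (j : ℕ) : wtk δ (-(j:ℤ)) = (wtk δ (-1))^j := by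
  induction j with
  | zero => simp [wtk]
  | succ j ih =>
      have : (-(↑(j+1):ℤ)) = (-(j:ℤ)) + (-1) := by push_cast; ring
      rw [this, wtk_add, ih, pow_succ]

lemma wtk_neg_one_lt_one {δ : ℝ} (hδ0 : 0 < δ) : wtk δ (-1) < 1 := by
  rw [wtk]
  have : ((2:ℝ) ^ (-1:ℤ)) = 1/2 := by norm_num
  rw [this]
  have h1 : ((1:ℝ)/2) ^ δ < 1 := Real.rpow_lt_one (by norm_num) (by norm_num) hδ0
  rw [← ENNReal.ofReal_one]
  exact (ENNReal.ofReal_lt_ofReal_iff (by norm_num)).mpr h1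

/-- arbitrarily cheap injective padding sequences -/
lemma exists_pad {δ : ℝ} (hδ0 : 0 < δ) {ε : ℝ≥0∞} (hε : 0 < ε) :
    ∃ c : ℕ → Code n, Function.Injective c ∧ ccost δ c ≤ ε := by
  set q : ℝ≥0∞ := wtk δ (-1) with hq
  have hq1 : q < 1 := wtk_neg_one_lt_one hδ0
  have hqtop : q ≠ ⊤ := wtk_ne_top δ _
  have h1q : (0:ℝ≥0∞) < 1 - q := tsub_pos_of_lt hq1
  have htendsto : Filter.Tendsto (fun M : ℕ => q ^ M) Filter.atTop (nhds 0) :=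
    ENNReal.tendsto_pow_atTop_nhds_zero_of_lt_one hq1
  have hεq : 0 < ε * (1 - q) := by
    apply ENNReal.mul_pos hε.ne' h1q.ne'
  obtain ⟨M, hM⟩ := (ENNReal.nhds_zero_basis.tendsto_right_iff.mp htendsto (ε * (1-q)) hεq).exists
  refine ⟨fun j => (-(j:ℤ) - M, 0), ?_, ?_⟩
  · intro a b hab
    simp only [Prod.mk.injEq] at hab
    omega
  · have hcost : ccost δ (fun j => ((-(j:ℤ) - M, 0) : Code n)) = ∑' j : ℕ, q ^ (j + M) := by
      rw [ccost]
      congr 1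
      funext j
      show wtk δ (-(j:ℤ) - M) = q ^ (j + M)
      have : (-(j:ℤ) - M) = -(((j + M : ℕ)):ℤ) := by push_cast; ring
      rw [this, wtk_neg_nat]
    rw [hcost]
    have : ∑' j : ℕ, q ^ (j + M) = q ^ M * (1 - q)⁻¹ := by
      have := ENNReal.tsum_geometric q
      calc ∑' j : ℕ, q ^ (j + M) = ∑' j : ℕ, q ^ M * q ^ j := by
            congr 1; funext j; rw [← pow_add]; ring_nf
      _ = q ^ M * ∑' j : ℕ, q ^ j := ENNReal.tsum_mul_left
      _ = q ^ M * (1 - q)⁻¹ := by rw [this]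
    rw [this]
    calc q ^ M * (1 - q)⁻¹ ≤ (ε * (1 - q)) * (1 - q)⁻¹ :=
          mul_le_mul_left hM.le _
    _ = ε * ((1 - q) * (1 - q)⁻¹) := by ring
    _ = ε * 1 := by
          rw [ENNReal.mul_inv_cancel h1q.ne' (by
            exact ne_top_of_le_ne_top (by simp) (tsub_le_self.trans le_rfl) )]
    _ = ε := mul_one ε

/-- Helper A : bound the content by the cost of a countable family of cubes. -/
lemma content_le_of_family {δ : ℝ} (hδ0 : 0 < δ) (F : Set (Code n)) {E : Set (En n)}
    (hcov : E ⊆ interior (⋃ p ∈ F, cube p)) (C : ℝ≥0∞)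
    (hC : ∀ G : Finset (Code n), ↑G ⊆ F → ∑ p ∈ G, wt δ p ≤ C) :
    dyadicContent n δ E ≤ C := by
  rcases eq_top_or_lt_top C with hCt | hCt
  · rw [hCt]; exact le_top
  apply ENNReal.le_of_forall_pos_le_add
  intro ε hε _
  obtain ⟨pad, hpadinj, hpadcost⟩ := exists_pad (n := n) hδ0 (ε := (ε:ℝ≥0∞))
    (by exact_mod_cast hε)
  set F' : Set (Code n) := F ∪ Set.range pad with hF'
  have hF'c : F'.Countable := Set.to_countable _
  have hF'i : F'.Infinite :=
    Set.Infinite.mono Set.subset_union_right (Set.infinite_range_of_injective hpadinj)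
  haveI : Countable ↥F' := hF'c.to_subtype
  haveI : Infinite ↥F' := hF'i.to_subtype
  haveI : Encodable ↥F' := Encodable.ofCountable _
  haveI : Denumerable ↥F' := Denumerable.ofEncodableOfInfinite _
  set e : ℕ ≃ ↥F' := (Denumerable.eqv ↥F').symm with he
  set c : ℕ → Code n := fun i => (e i : Code n) with hc
  have hcovc : E ⊆ interior (⋃ i, cube (c i)) := by
    refine hcov.trans (interior_mono ?_)
    intro x hx
    simp only [Set.mem_iUnion] at hx ⊢
    obtain ⟨p, hp, hxp⟩ := hx
    exact ⟨e.symm ⟨p, Set.mem_union_left _ hp⟩, by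
      simp only [hc]
      rw [Equiv.apply_symm_apply]
      exact hxp⟩
  classical
  have hcinj : Function.Injective c := by
    intro a b hab
    exact e.injective (Subtype.val_injective hab)
  have hcost : ccost δ c ≤ C + ε := by
    rw [ccost, ENNReal.tsum_eq_iSup_sum]
    apply iSup_le
    intro s
    have hsum : ∑ i ∈ s, wt δ (c i) = ∑ p ∈ s.image c, wt δ p :=
      (Finset.sum_image (fun a _ b _ hab => hcinj hab)).symm
    rw [hsum]
    set G : Finset (Code n) := s.image c with hG
    have hGF' : ∀ p ∈ G, p ∈ F' := by
      intro p hp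
      obtain ⟨i, _, rfl⟩ := Finset.mem_image.mp hp
      exact (e i).2
    have hsplit : ∑ p ∈ G, wt δ p
        = ∑ p ∈ G.filter (· ∈ F), wt δ p + ∑ p ∈ G.filter (· ∉ F), wt δ p :=
      (Finset.sum_filter_add_sum_filter_not G _ _).symm
    rw [hsplit]
    have h1 : ∑ p ∈ G.filter (· ∈ F), wt δ p ≤ C := by
      apply hC
      intro p hp
      exact (Finset.mem_filter.mp hp).2
    have h2 : ∑ p ∈ G.filter (· ∉ F), wt δ p ≤ ε := by
      have hsub : ∀ p ∈ G.filter (· ∉ F), p ∈ Set.range pad := by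
        intro p hp
        have := hGF' p (Finset.mem_filter.mp hp).1
        rcases this with h | h
        · exact absurd h (Finset.mem_filter.mp hp).2
        · exact h
      set G2 := G.filter (· ∉ F) with hG2
      have : ∑ p ∈ G2, wt δ p = ∑ j ∈ G2.preimage pad hpadinj.injOn, wt δ (pad j) :=
        (Finset.sum_preimage pad G2 hpadinj.injOn _ (fun p hp hnp => absurd (hsub p hp) hnp)).symm
      rw [this]
      exact (ENNReal.sum_le_tsum _).trans hpadcost
    exact add_le_add h1 h2
  exact (content_le_cost c hcovc).trans hcost

end CF

namespace CF

variable {n : ℕ}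

lemma volume_cube (p : Code n) :
    volume (cube p) = (ENNReal.ofReal ((2:ℝ) ^ p.1)) ^ n := by
  have hrepr : cube p = (MeasurableEquiv.toLp 2 (Fin n → ℝ)).symm ⁻¹'
      (Set.univ.pi fun i => Ico ((p.2 i : ℝ) * 2 ^ p.1) (((p.2 i : ℝ) + 1) * 2 ^ p.1)) := by
    ext x
    simp only [cube, dyadicCube, Set.mem_setOf_eq, Set.mem_preimage, Set.mem_pi,
      Set.mem_univ, forall_true_left, Set.mem_Ico]
    rfl
  rw [hrepr]
  rw [MeasurePreserving.measure_preimage (EuclideanSpace.volume_preserving_symm_measurableEquiv_toLp (Fin n))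
    ((MeasurableSet.univ_pi fun i => measurableSet_Ico).nullMeasurableSet)]
  rw [volume_pi_pi]
  have : ∀ i : Fin n, volume (Ico ((p.2 i : ℝ) * 2 ^ p.1) (((p.2 i : ℝ) + 1) * 2 ^ p.1))
      = ENNReal.ofReal ((2:ℝ) ^ p.1) := by
    intro i
    rw [Real.volume_Ico]
    congr 1
    ring
  simp only [this]
  rw [Finset.prod_const, Finset.card_univ, Fintype.card_fin]

lemma wt_decomp {δ : ℝ} (hδn : δ ≤ n) (k : ℤ) :
    (ENNReal.ofReal ((2:ℝ) ^ k)) ^ n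
      = wtk δ k * ENNReal.ofReal (((2:ℝ) ^ k) ^ ((n:ℝ) - δ)) := by
  have hpos := two_zpow_pos k
  rw [← ENNReal.ofReal_pow hpos.le, wtk,
    ← ENNReal.ofReal_mul (Real.rpow_nonneg hpos.le δ)]
  congr 1
  rw [← Real.rpow_natCast ((2:ℝ)^k) n, ← Real.rpow_add hpos]
  congr 1
  ring

def subcost (δ : ℝ) (c : ℕ → Code n) (p : Code n) : ℝ≥0∞ :=
  ∑' i, Set.indicator {i : ℕ | cube (c i) ⊆ cube p} (fun i => wt δ (c i)) i

lemma subcost_le_ccost {δ : ℝ} (c : ℕ → Code n) (p : Code n) :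
    subcost δ c p ≤ ccost δ c :=
  ENNReal.tsum_le_tsum fun i => Set.indicator_le_self _ _ i

lemma cube_dichotomy (hn : 1 ≤ n) {δ : ℝ} (hδ0 : 0 < δ) (hδn : δ ≤ n)
    (c : ℕ → Code n) (p : Code n) (hcov : cube p ⊆ ⋃ i, cube (c i)) :
    (∃ i, cube p ⊆ cube (c i)) ∨ wtk δ p.1 ≤ subcost δ c p := by
  by_cases hex : ∃ i, cube p ⊆ cube (c i)
  · exact Or.inl hex
  right
  push_neg at hex
  classical
  set g : ℕ → Set (En n) := fun i => if cube (c i) ⊆ cube p then cube (c i) else ∅ with hg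
  have hsub : cube p ⊆ ⋃ i, g i := by
    intro x hx
    obtain ⟨_, ⟨i, rfl⟩, hxi⟩ := hcov hx
    have hchain := cube_chain (p := c i) (q := p) ⟨x, hxi, hx⟩
    rcases hchain with h | h
    · exact Set.mem_iUnion.mpr ⟨i, by rw [hg]; simp only [if_pos h]; exact hxi⟩
    · exact absurd h (hex i)
  set D : ℝ≥0∞ := ENNReal.ofReal (((2:ℝ) ^ p.1) ^ ((n:ℝ) - δ)) with hD
  have hD0 : D ≠ 0 := (ENNReal.ofReal_pos.mpr (Real.rpow_pos_of_pos (two_zpow_pos _) _)).ne'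
  have hDt : D ≠ ⊤ := ENNReal.ofReal_ne_top
  have hvol : volume (cube p) ≤ ∑' i, volume (g i) :=
    (measure_mono hsub).trans (measure_iUnion_le g)
  have hper : ∀ i, volume (g i)
      ≤ Set.indicator {i : ℕ | cube (c i) ⊆ cube p} (fun i => wt δ (c i)) i * D := by
    intro i
    rw [hg]
    by_cases hi : cube (c i) ⊆ cube p
    · simp only [if_pos hi]
      rw [Set.indicator_of_mem (by exact hi : i ∈ {i : ℕ | cube (c i) ⊆ cube p})]
      rw [volume_cube, wt_decomp hδn]
      apply mul_le_mul_right
      apply ENNReal.ofReal_le_ofReal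
      apply Real.rpow_le_rpow (two_zpow_pos _).le
      · exact zpow_le_zpow_right₀ (by norm_num) (subset_scale_le hn hi)
      · linarith
    · simp only [if_neg hi]
      simp
  have hsum : volume (cube p) ≤ subcost δ c p * D := by
    calc volume (cube p) ≤ ∑' i, volume (g i) := hvol
    _ ≤ ∑' i, Set.indicator {i : ℕ | cube (c i) ⊆ cube p} (fun i => wt δ (c i)) i * D :=
        ENNReal.tsum_le_tsum hper
    _ = subcost δ c p * D := by rw [subcost, ENNReal.tsum_mul_right]
  rw [volume_cube, wt_decomp hδn] at hsum
  exact (ENNReal.mul_le_mul_iff_left hD0 hDt).mp hsum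

end CF

namespace CF

variable {n : ℕ}

lemma finsetsum_le_tsum_subtype {α : Type*} (S : Set α) (f : α → ℝ≥0∞) (G : Finset α)
    (h : ↑G ⊆ S) : ∑ p ∈ G, f p ≤ ∑' (x : S), f x := by
  rw [tsum_subtype]
  calc ∑ p ∈ G, f p = ∑ p ∈ G, S.indicator f p := by
        apply Finset.sum_congr rfl
        intro p hp
        rw [Set.indicator_of_mem (h hp)]
  _ ≤ ∑' a, S.indicator f a := ENNReal.sum_le_tsum _

lemma tsum_subtype_le {α : Type*} (S : Set α) (f : α → ℝ≥0∞) :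
    ∑' (x : S), f x ≤ ∑' a, f a := by
  rw [tsum_subtype]
  exact ENNReal.tsum_le_tsum fun a => Set.indicator_le_self _ _ a

section Submod

variable {δ : ℝ} (c d : ℕ → Code n)

private def emix : ℕ → Code n := fun m => if m % 2 = 0 then c (m / 2) else d (m / 2)

lemma emix_even (k : ℕ) : emix c d (2 * k) = c k := by
  simp [emix, Nat.mul_div_cancel_left _ (by norm_num : 0 < 2), Nat.mul_mod_right]

lemma emix_odd (k : ℕ) : emix c d (2 * k + 1) = d k := by
  have h1 : (2 * k + 1) % 2 = 1 := by omega
  have h2 : (2 * k + 1) / 2 = k := by omega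
  simp [emix, h1, h2]

lemma emix_total (δ : ℝ) : ∑' m, wt δ (emix c d m) = ccost δ c + ccost δ d := by
  rw [ccost, ccost]
  have := tsum_even_add_odd (f := fun m => wt δ (emix c d m))
    ENNReal.summable ENNReal.summable
  rw [← this]
  congr 1
  · congr 1; funext k; show wt δ (emix c d (2 * k)) = wt δ (c k); rw [emix_even]
  · congr 1; funext k; show wt δ (emix c d (2 * k + 1)) = wt δ (d k); rw [emix_odd]

open Classical in
private def idxc : Code n → ℕ := fun q =>
  if h : ∃ i, c i = q then 2 * h.choose
  else if h' : ∃ j, d j = q then 2 * h'.choose + 1 else 0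

open Classical in
private def idxd : Code n → ℕ := fun q =>
  if h' : ∃ j, d j = q then 2 * h'.choose + 1
  else if h : ∃ i, c i = q then 2 * h.choose else 0

lemma emix_idxc {q : Code n} (hq : q ∈ Set.range c ∪ Set.range d) :
    emix c d (idxc c d q) = q := by
  rw [idxc]
  by_cases h : ∃ i, c i = q
  · rw [dif_pos h, emix_even]; exact h.choose_spec
  · rw [dif_neg h]
    have h' : ∃ j, d j = q := by
      rcases hq with ⟨i, hi⟩ | ⟨j, hj⟩
      · exact absurd ⟨i, hi⟩ h
      · exact ⟨j, hj⟩
    rw [dif_pos h', emix_odd]; exact h'.choose_spec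

lemma emix_idxd {q : Code n} (hq : q ∈ Set.range c ∪ Set.range d) :
    emix c d (idxd c d q) = q := by
  rw [idxd]
  by_cases h' : ∃ j, d j = q
  · rw [dif_pos h', emix_odd]; exact h'.choose_spec
  · rw [dif_neg h']
    have h : ∃ i, c i = q := by
      rcases hq with ⟨i, hi⟩ | ⟨j, hj⟩
      · exact ⟨i, hi⟩
      · exact absurd ⟨j, hj⟩ h'
    rw [dif_pos h, emix_even]; exact h.choose_spec

lemma idxc_even {q : Code n} (h : ∃ i, c i = q) : idxc c d q % 2 = 0 := by
  rw [idxc, dif_pos h]; omega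

lemma idxd_odd {q : Code n} (h : ∃ j, d j = q) : idxd c d q % 2 = 1 := by
  rw [idxd, dif_pos h]; omega

end Submod

lemma content_submodular (hn : 1 ≤ n) {δ : ℝ} (hδ0 : 0 < δ) (A B : Set (En n)) :
    dyadicContent n δ (A ∪ B) + dyadicContent n δ (A ∩ B)
      ≤ dyadicContent n δ A + dyadicContent n δ B := by
  rcases eq_top_or_lt_top (dyadicContent n δ A) with hA | hA
  · rw [hA]; simp [top_add]
  rcases eq_top_or_lt_top (dyadicContent n δ B) with hB | hB
  · rw [hB]; simp [add_top]
  apply ENNReal.le_of_forall_pos_le_add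
  intro ε hε _
  set ε2 : ℝ≥0∞ := (ε : ℝ≥0∞) / 2 with hε2
  have hε2pos : ε2 ≠ 0 := by
    simp only [hε2, ne_eq, ENNReal.div_eq_zero_iff]
    push_neg
    exact ⟨by exact_mod_cast hε.ne', by norm_num⟩
  obtain ⟨c, hccov, hccost⟩ := exists_cover (E := A)
    (ENNReal.lt_add_right hA.ne hε2pos)
  obtain ⟨d, hdcov, hdcost⟩ := exists_cover (E := B)
    (ENNReal.lt_add_right hB.ne hε2pos)
  set ran : Set (Code n) := Set.range c ∪ Set.range d with hran
  set Btot : ℝ≥0∞ := ccost δ c + ccost δ d with hBtot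
  have hε2top : ε2 < ⊤ := by
    rw [hε2]
    exact ENNReal.div_lt_top ENNReal.coe_ne_top (by norm_num)
  have hc_fin : ccost δ c < ⊤ := lt_trans hccost (ENNReal.add_lt_top.mpr ⟨hA, hε2top⟩)
  have hd_fin : ccost δ d < ⊤ := lt_trans hdcost (ENNReal.add_lt_top.mpr ⟨hB, hε2top⟩)
  have hBtot_ne : Btot ≠ ⊤ := (ENNReal.add_lt_top.mpr ⟨hc_fin, hd_fin⟩).ne
  have hwtran : ∀ q ∈ ran, wtk δ q.1 ≤ Btot := by
    rintro q (⟨i, rfl⟩ | ⟨j, rfl⟩)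
    · exact le_trans (ENNReal.le_tsum i) (le_add_right le_rfl)
    · exact le_trans (ENNReal.le_tsum j) (le_add_left le_rfl)
  obtain ⟨K, hK⟩ := exists_scale_bound hδ0 Btot hBtot_ne
  have hKran : ∀ q ∈ ran, q.1 ≤ K := fun q hq => hK q.1 (hwtran q hq)
  set ℳ : Set (Code n) := {q | q ∈ ran ∧ ∀ r ∈ ran, cube q ⊆ cube r → q = r} with hℳ
  set 𝒩 : Set (Code n) := {q | q ∈ ran ∧ (q ∉ ℳ ∨ ((∃ i, c i = q) ∧ (∃ j, d j = q)))} with h𝒩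
  -- coverage
  have hcovM : A ∪ B ⊆ interior (⋃ q ∈ ℳ, cube q) := by
    have hsub : ∀ q ∈ ran, ∃ q' ∈ ℳ, cube q ⊆ cube q' := by
      intro q hq
      obtain ⟨q', hq', hsub', hmax'⟩ := exists_maximal hn ran K hKran hq
      exact ⟨q', ⟨hq', hmax'⟩, hsub'⟩
    rintro x (hx | hx)
    · refine interior_mono ?_ (hccov hx)
      intro y hy
      obtain ⟨_, ⟨i, rfl⟩, hyi⟩ := hy
      obtain ⟨q', hq', hsubq⟩ := hsub (c i) (Or.inl ⟨i, rfl⟩)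
      exact Set.mem_biUnion hq' (hsubq hyi)
    · refine interior_mono ?_ (hdcov hx)
      intro y hy
      obtain ⟨_, ⟨j, rfl⟩, hyj⟩ := hy
      obtain ⟨q', hq', hsubq⟩ := hsub (d j) (Or.inr ⟨j, rfl⟩)
      exact Set.mem_biUnion hq' (hsubq hyj)
  have hcovN : A ∩ B ⊆ interior (⋃ q ∈ 𝒩, cube q) := by
    have h1 : A ∩ B ⊆ interior (⋃ i, cube (c i)) ∩ interior (⋃ j, cube (d j)) :=
      fun x hx => ⟨hccov hx.1, hdcov hx.2⟩
    refine h1.trans ?_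
    rw [← interior_inter]
    apply interior_mono
    rintro y ⟨hyc, hyd⟩
    obtain ⟨_, ⟨i, rfl⟩, hyi⟩ := hyc
    obtain ⟨_, ⟨j, rfl⟩, hyj⟩ := hyd
    rcases cube_chain (p := c i) (q := d j) ⟨y, hyi, hyj⟩ with hcd | hdc
    · by_cases hq : c i = d j
      · refine Set.mem_biUnion ?_ hyi
        exact ⟨Or.inl ⟨i, rfl⟩, Or.inr ⟨⟨i, rfl⟩, ⟨j, hq.symm⟩⟩⟩
      · refine Set.mem_biUnion ?_ hyi
        refine ⟨Or.inl ⟨i, rfl⟩, Or.inl ?_⟩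
        intro hmem
        exact hq (hmem.2 (d j) (Or.inr ⟨j, rfl⟩) hcd)
    · by_cases hq : d j = c i
      · refine Set.mem_biUnion ?_ hyj
        exact ⟨Or.inr ⟨j, rfl⟩, Or.inr ⟨⟨i, hq.symm⟩, ⟨j, rfl⟩⟩⟩
      · refine Set.mem_biUnion ?_ hyj
        refine ⟨Or.inr ⟨j, rfl⟩, Or.inl ?_⟩
        intro hmem
        exact hq (hmem.2 (c i) (Or.inl ⟨i, rfl⟩) hdc)
  -- costs
  set X : ℝ≥0∞ := ∑' (q : ℳ), wt δ q.1 with hX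
  set Y : ℝ≥0∞ := ∑' (q : 𝒩), wt δ q.1 with hY
  have hXbound : dyadicContent n δ (A ∪ B) ≤ X :=
    content_le_of_family hδ0 ℳ hcovM X
      (fun G hG => finsetsum_le_tsum_subtype ℳ (wt δ) G hG)
  have hYbound : dyadicContent n δ (A ∩ B) ≤ Y :=
    content_le_of_family hδ0 𝒩 hcovN Y
      (fun G hG => finsetsum_le_tsum_subtype 𝒩 (wt δ) G hG)
  -- X + Y ≤ Btot
  have hXY : X + Y ≤ Btot := by
    classical
    set φM : ℳ → ℕ := fun q => idxc c d q.1 with hφM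
    set φN : 𝒩 → ℕ := fun q => if q.1 ∈ ℳ then idxd c d q.1 else idxc c d q.1 with hφN
    have heM : ∀ q : ℳ, emix c d (φM q) = q.1 := fun q => emix_idxc c d q.2.1
    have heN : ∀ q : 𝒩, emix c d (φN q) = q.1 := by
      intro q
      show emix c d (if q.1 ∈ ℳ then idxd c d q.1 else idxc c d q.1) = q.1
      by_cases hq : q.1 ∈ ℳ
      · rw [if_pos hq]; exact emix_idxd c d q.2.1
      · rw [if_neg hq]; exact emix_idxc c d q.2.1
    have hφMinj : Function.Injective φM := by
      intro a b hab
      apply Subtype.ext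
      rw [← heM a, ← heM b, hab]
    have hφNinj : Function.Injective φN := by
      intro a b hab
      apply Subtype.ext
      rw [← heN a, ← heN b, hab]
    have hdisj : Disjoint (Set.range φM) (Set.range φN) := by
      rw [Set.disjoint_iff_inter_eq_empty]
      ext m
      simp only [Set.mem_inter_iff, Set.mem_range, Set.mem_empty_iff_false, iff_false, not_and]
      rintro ⟨qM, rfl⟩ ⟨qN, hqN⟩
      have hqeq : qN.1 = qM.1 := by rw [← heN qN, hqN, heM qM]
      have hqMℳ : qM.1 ∈ ℳ := qM.2
      have hqNℳ : qN.1 ∈ ℳ := hqeq ▸ hqMℳ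
      have hboth : (∃ i, c i = qN.1) ∧ (∃ j, d j = qN.1) := by
        rcases qN.2.2 with h | h
        · exact absurd hqNℳ h
        · exact h
      have hqN' : idxd c d qN.1 = idxc c d qM.1 := by
        have h0 : φN qN = idxd c d qN.1 := by
          show (if qN.1 ∈ ℳ then idxd c d qN.1 else idxc c d qN.1) = _
          rw [if_pos hqNℳ]
        rw [← h0, hqN]
      have hodd := idxd_odd c d hboth.2
      have heven : idxc c d qM.1 % 2 = 0 := idxc_even c d (hqeq ▸ hboth.1)
      omega
    -- X as a sum over range φM
    have hXeq : X = ∑' (x : Set.range φM), wt δ (emix c d x.1) := by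
      rw [hX]
      rw [← Equiv.tsum_eq (Equiv.ofInjective φM hφMinj)
        (fun x : Set.range φM => wt δ (emix c d x.1))]
      congr 1
      funext q
      simp only [Equiv.ofInjective_apply]
      rw [heM q]
    have hYeq : Y = ∑' (x : Set.range φN), wt δ (emix c d x.1) := by
      rw [hY]
      rw [← Equiv.tsum_eq (Equiv.ofInjective φN hφNinj)
        (fun x : Set.range φN => wt δ (emix c d x.1))]
      congr 1
      funext q
      simp only [Equiv.ofInjective_apply]
      rw [heN q]
    rw [hXeq, hYeq]
    calc ∑' (x : Set.range φM), wt δ (emix c d x.1)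
          + ∑' (x : Set.range φN), wt δ (emix c d x.1)
        = ∑' (x : ↥(Set.range φM ∪ Set.range φN)), wt δ (emix c d x.1) :=
          (Summable.tsum_union_disjoint (f := fun m : ℕ => wt δ (emix c d m)) hdisj
            ENNReal.summable ENNReal.summable).symm
    _ ≤ ∑' m : ℕ, wt δ (emix c d m) :=
          tsum_subtype_le _ (fun m => wt δ (emix c d m))
    _ = Btot := by rw [hBtot, ← emix_total c d δ]
  calc dyadicContent n δ (A ∪ B) + dyadicContent n δ (A ∩ B) ≤ X + Y :=
        add_le_add hXbound hYbound
  _ ≤ Btot := hXY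
  _ ≤ (dyadicContent n δ A + ε2) + (dyadicContent n δ B + ε2) :=
        add_le_add hccost.le hdcost.le
  _ = dyadicContent n δ A + dyadicContent n δ B + (ε2 + ε2) := by ring
  _ = dyadicContent n δ A + dyadicContent n δ B + ε := by
        congr 1
        rw [hε2]
        exact ENNReal.add_halves _

end CF

namespace CF

variable {n : ℕ}

lemma content_iUnion_of_open (hn : 1 ≤ n) {δ : ℝ} (hδ0 : 0 < δ) (hδn : δ ≤ (n:ℝ))
    (W : ℕ → Set (En n)) (hop : ∀ N, IsOpen (W N)) (hmono : Monotone W) :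
    dyadicContent n δ (⋃ N, W N) ≤ ⨆ N, dyadicContent n δ (W N) := by
  classical
  set s : ℝ≥0∞ := ⨆ N, dyadicContent n δ (W N) with hs
  rcases eq_top_or_lt_top s with hstop | hsfin
  · rw [hstop]; exact le_top
  by_cases hWe : (⋃ N, W N) = ∅
  · rw [hWe]
    exact (content_mono (Set.empty_subset (W 0))).trans
      (le_iSup (fun N => dyadicContent n δ (W N)) 0)
  apply ENNReal.le_of_forall_pos_le_add
  intro ε hε _
  set εE : ℝ≥0∞ := (ε : ℝ≥0∞) with hεE
  have hεE0 : εE ≠ 0 := by simp only [hεE]; exact_mod_cast hε.ne'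
  have hεEtop : εE ≠ ⊤ := ENNReal.coe_ne_top
  -- the candidate small cubes
  set PP : Set (Code n) := {p | ∃ N, cube p ⊆ W N} with hPP
  have hcovPP : ∀ x ∈ ⋃ N, W N, ∃ p ∈ PP, x ∈ cube p := by
    intro x hx
    obtain ⟨_, ⟨N, rfl⟩, hxN⟩ := hx
    obtain ⟨p, hxp, hpsub⟩ := exists_cube_mem_subset (hop N) hxN
    exact ⟨p, ⟨N, hpsub⟩, hxp⟩
  have hPPne : PP.Nonempty := by
    obtain ⟨x, hx⟩ := Set.nonempty_iff_ne_empty.mpr hWe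
    obtain ⟨p, hp, _⟩ := hcovPP x hx
    exact ⟨p, hp⟩
  obtain ⟨f, hf⟩ := (Set.to_countable PP).exists_eq_range hPPne
  have hfP : ∀ i, ∃ N, cube (f i) ⊆ W N := by
    intro i
    have : f i ∈ PP := by rw [hf]; exact ⟨i, rfl⟩
    exact this
  choose Nf hNf using hfP
  set A : ℕ → Set (En n) := fun m => ⋃ i ∈ Finset.range (m+1), cube (f i) with hA
  have hAW : ∀ m, A m ⊆ W ((Finset.range (m+1)).sup Nf) := by
    intro m x hx
    obtain ⟨i, hi, hxi⟩ := Set.mem_iUnion₂.mp hx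
    exact hmono (Finset.le_sup hi) (hNf i hxi)
  have hAs : ∀ m, dyadicContent n δ (A m) < s + εE := by
    intro m
    have h1 : dyadicContent n δ (A m) ≤ s := by
      rw [hs]
      exact (content_mono (hAW m)).trans (le_iSup (fun N => dyadicContent n δ (W N)) _)
    exact lt_of_le_of_lt h1 (ENNReal.lt_add_right hsfin.ne hεE0)
  choose cm hcmcov hcmcost using fun m => exists_cover (hAs m)
  have hwt_all : ∀ m i, wtk δ (cm m i).1 ≤ s + εE :=
    fun m i => le_trans (ENNReal.le_tsum i) (hcmcost m).le
  have hstop' : s + εE ≠ ⊤ := by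
    exact (ENNReal.add_lt_top.mpr ⟨hsfin, hεEtop.lt_top⟩).ne
  obtain ⟨K, hK⟩ := exists_scale_bound hδ0 (s + εE) hstop'
  have hscale_all : ∀ m i, (cm m i).1 ≤ K := fun m i => hK _ (hwt_all m i)
  -- ultrafilter
  obtain ⟨UF, hUF⟩ := Filter.exists_ultrafilter_le (atTop : Filter ℕ)
  set evP : Code n → Set ℕ := fun p => {m | ∃ i, cm m i = p} with hevP
  set evH : Code n → Set ℕ := fun p => {m | wtk δ p.1 ≤ subcost δ (cm m) p} with hevH
  set GG : Set (Code n) := {p | evP p ∈ UF ∨ evH p ∈ UF} with hGG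
  have hGGwt : ∀ p ∈ GG, wtk δ p.1 ≤ s + εE := by
    rintro p (hp | hp)
    · obtain ⟨m, i, rfl⟩ := Filter.nonempty_of_mem hp
      exact hwt_all m i
    · obtain ⟨m, hm⟩ := Filter.nonempty_of_mem hp
      exact le_trans hm (le_trans (subcost_le_ccost (cm m) p) (hcmcost m).le)
  have hGGK : ∀ p ∈ GG, p.1 ≤ K := fun p hp => hK _ (hGGwt p hp)
  -- coverage by GG
  have hcovG : (⋃ N, W N) ⊆ ⋃ p ∈ GG, cube p := by
    intro x hx
    obtain ⟨p₀, hp₀, hxp₀⟩ := hcovPP x hx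
    have : p₀ ∈ Set.range f := by rw [← hf]; exact hp₀
    obtain ⟨i₀, rfl⟩ := this
    set E₁ : Set ℕ := {m | ∃ i, cube (f i₀) ⊆ cube (cm m i)} with hE₁
    have hsplit : Set.Ici i₀ ⊆ E₁ ∪ evH (f i₀) := by
      intro m him
      have him' : i₀ ≤ m := him
      have hsubA : cube (f i₀) ⊆ A m := by
        intro y hy
        exact Set.mem_biUnion (Finset.mem_range.mpr (by omega)) hy
      have hcovm : cube (f i₀) ⊆ ⋃ i, cube (cm m i) :=
        (hsubA.trans (hcmcov m)).trans interior_subset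
      rcases cube_dichotomy hn hδ0 hδn (cm m) (f i₀) hcovm with h | h
      · exact Or.inl h
      · exact Or.inr h
    have hIci : Set.Ici i₀ ∈ UF := hUF (Filter.mem_atTop i₀)
    have hEH : E₁ ∪ evH (f i₀) ∈ UF := Filter.mem_of_superset hIci hsplit
    rcases Ultrafilter.union_mem_iff.mp hEH with hE1 | hEH2
    · set Sup : Set (Code n) := {q | cube (f i₀) ⊆ cube q ∧ q.1 ≤ K} with hSup
      have hfin : Sup.Finite := finite_supercubes hn (f i₀) K
      have hsub : E₁ ⊆ ⋃ q ∈ Sup, evP q := by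
        rintro m ⟨i, hi⟩
        exact Set.mem_biUnion (⟨hi, hscale_all m i⟩ : cm m i ∈ Sup) ⟨i, rfl⟩
      have hU : (⋃ q ∈ Sup, evP q) ∈ UF := Filter.mem_of_superset hE1 hsub
      obtain ⟨q, hqSup, hq⟩ := (Ultrafilter.finite_biUnion_mem_iff hfin).mp hU
      exact Set.mem_biUnion (Or.inl hq : q ∈ GG) (hqSup.1 hxp₀)
    · exact Set.mem_biUnion (Or.inr hEH2 : f i₀ ∈ GG) hxp₀
  -- maximal subfamily
  set F : Set (Code n) := {p | p ∈ GG ∧ ∀ r ∈ GG, cube p ⊆ cube r → p = r} with hF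
  have hcovF : (⋃ N, W N) ⊆ ⋃ p ∈ F, cube p := by
    refine hcovG.trans ?_
    intro y hy
    obtain ⟨p, hp, hyp⟩ := Set.mem_iUnion₂.mp hy
    obtain ⟨q, hq, hsubq, hmaxq⟩ := exists_maximal hn GG K hGGK hp
    exact Set.mem_biUnion (⟨hq, hmaxq⟩ : q ∈ F) (hsubq hyp)
  have hcovFi : (⋃ N, W N) ⊆ interior (⋃ p ∈ F, cube p) :=
    interior_maximal hcovF (isOpen_iUnion hop)
  -- disjointness of F-cubes
  have hFdisj : ∀ p ∈ F, ∀ q ∈ F, p ≠ q → cube p ∩ cube q = ∅ := by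
    intro p hp q hq hpq
    by_contra hne
    rcases cube_chain (Set.nonempty_iff_ne_empty.mpr hne) with h | h
    · exact hpq (hp.2 q hq.1 h)
    · exact hpq ((hq.2 p hp.1 h).symm)
  -- cost bound
  have hC : ∀ G : Finset (Code n), ↑G ⊆ F → ∑ p ∈ G, wt δ p ≤ s + εE := by
    intro G hG
    set event : Code n → Set ℕ := fun p => if evP p ∈ UF then evP p else evH p with hevent
    have heventUF : ∀ p ∈ G, event p ∈ UF := by
      intro p hp
      show (if evP p ∈ UF then evP p else evH p) ∈ UF
      by_cases h : evP p ∈ UF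
      · rw [if_pos h]; exact h
      · rw [if_neg h]
        rcases (hG hp).1 with h' | h'
        · exact absurd h' h
        · exact h'
    have hinter : (⋂ p ∈ G, event p) ∈ UF := by
      have : (⋂ p ∈ G, event p) ∈ (UF : Filter ℕ) := (Filter.biInter_finset_mem G).mpr heventUF
      exact this
    obtain ⟨m, hm⟩ := Filter.nonempty_of_mem hinter
    have hmev : ∀ p ∈ G, m ∈ event p := by
      intro p hp
      exact Set.mem_iInter₂.mp hm p hp
    -- index sets
    set J : Code n → Set ℕ := fun p =>
      if h : ∃ i, cm m i = p then {h.choose} else {i | cube (cm m i) ⊆ cube p} with hJ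
    have hbound : ∀ p ∈ G, wt δ p ≤ ∑' i, (J p).indicator (fun i => wt δ (cm m i)) i := by
      intro p hp
      simp only [hJ]
      by_cases h : ∃ i, cm m i = p
      · simp only [dif_pos h]
        have : ∑' i, Set.indicator {h.choose} (fun i => wt δ (cm m i)) i
            = wt δ (cm m h.choose) := by
          rw [tsum_eq_single h.choose]
          · rw [Set.indicator_of_mem (Set.mem_singleton _)]
          · intro b hb
            rw [Set.indicator_of_notMem (by simpa using hb)]
        rw [this, h.choose_spec]
      · simp only [dif_neg h]
        have hmevH : m ∈ evH p := by
          have hthis : m ∈ (if evP p ∈ UF then evP p else evH p) := hmev p hp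
          by_cases h' : evP p ∈ UF
          · rw [if_pos h'] at hthis
            exact absurd hthis h
          · rwa [if_neg h'] at hthis
        exact hmevH
    have hJdisj : ∀ p ∈ G, ∀ q ∈ G, p ≠ q → ∀ i, i ∈ J p → i ∉ J q := by
      intro p hp q hq hpq i hip hiq
      have hcubedisj := hFdisj p (hG hp) q (hG hq) hpq
      simp only [hJ] at hip hiq
      have hsubp : cube (cm m i) ⊆ cube p := by
        by_cases h : ∃ i', cm m i' = p
        · rw [dif_pos h] at hip
          rw [Set.mem_singleton_iff] at hip
          subst hip
          rw [h.choose_spec]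
        · rw [dif_neg h] at hip
          exact hip
      have hsubq : cube (cm m i) ⊆ cube q := by
        by_cases h : ∃ i', cm m i' = q
        · rw [dif_pos h] at hiq
          rw [Set.mem_singleton_iff] at hiq
          subst hiq
          rw [h.choose_spec]
        · rw [dif_neg h] at hiq
          exact hiq
      obtain ⟨y, hy⟩ := cube_nonempty (cm m i)
      have : y ∈ cube p ∩ cube q := ⟨hsubp hy, hsubq hy⟩
      rw [hcubedisj] at this
      exact this
    calc ∑ p ∈ G, wt δ p ≤ ∑ p ∈ G, ∑' i, (J p).indicator (fun i => wt δ (cm m i)) i :=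
          Finset.sum_le_sum hbound
    _ = ∑' i, ∑ p ∈ G, (J p).indicator (fun i => wt δ (cm m i)) i :=
          (Summable.tsum_finsetSum (fun p _ => ENNReal.summable)).symm
    _ ≤ ∑' i, wt δ (cm m i) := by
          apply ENNReal.tsum_le_tsum
          intro i
          by_cases hex : ∃ p ∈ G, i ∈ J p
          · obtain ⟨p₀, hp₀G, hp₀J⟩ := hex
            rw [Finset.sum_eq_single_of_mem p₀ hp₀G
              (fun q hqG hqne => Set.indicator_of_notMem
                (fun hiq => (hJdisj q hqG p₀ hp₀G hqne i hiq) hp₀J) _)]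
            rw [Set.indicator_of_mem hp₀J]
          · push_neg at hex
            have hzero : ∑ p ∈ G, (J p).indicator (fun i => wt δ (cm m i)) i = 0 :=
              Finset.sum_eq_zero (fun p hp => Set.indicator_of_notMem (hex p hp) _)
            rw [hzero]
            exact zero_le
    _ = ccost δ (cm m) := rfl
    _ ≤ s + εE := (hcmcost m).le
  exact content_le_of_family hδ0 F hcovFi (s + εE) hC

end CF

namespace CF

variable {n : ℕ}

lemma content_iUnion_mono (hn : 1 ≤ n) {δ : ℝ} (hδ0 : 0 < δ) (hδn : δ ≤ (n:ℝ))
    (E : ℕ → Set (En n)) (hmono : Monotone E) :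
    dyadicContent n δ (⋃ N, E N) ≤ ⨆ N, dyadicContent n δ (E N) := by
  classical
  set L : ℝ≥0∞ := ⨆ N, dyadicContent n δ (E N) with hL
  rcases eq_top_or_lt_top L with hLt | hLfin
  · rw [hLt]; exact le_top
  apply ENNReal.le_of_forall_pos_le_add
  intro ε hε _
  have hEle : ∀ N, dyadicContent n δ (E N) ≤ L := by
    intro N
    rw [hL]
    exact le_iSup (fun N => dyadicContent n δ (E N)) N
  have hEfin : ∀ N, dyadicContent n δ (E N) ≠ ⊤ :=
    fun N => ((hEle N).trans_lt hLfin).ne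
  set εk : ℕ → ℝ≥0∞ := fun k => (ε : ℝ≥0∞) * (2 : ℝ≥0∞)⁻¹ ^ (k+1) with hεk
  have hεk0 : ∀ k, εk k ≠ 0 := by
    intro k
    apply mul_ne_zero
    · exact_mod_cast hε.ne'
    · exact pow_ne_zero _ (by simp)
  have hεtsum : ∑' k, εk k = (ε : ℝ≥0∞) := by
    rw [hεk]
    have h1 : ∑' k : ℕ, (ε : ℝ≥0∞) * (2 : ℝ≥0∞)⁻¹ ^ (k+1)
        = (ε : ℝ≥0∞) * ∑' k : ℕ, (2 : ℝ≥0∞)⁻¹ ^ (k+1) := ENNReal.tsum_mul_left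
    rw [h1, ENNReal.tsum_geometric_add_one, ENNReal.one_sub_inv_two]
    have h2 : (2 : ℝ≥0∞)⁻¹ * (2⁻¹)⁻¹ = 1 :=
      ENNReal.mul_inv_cancel (by simp) (by simp)
    rw [h2, mul_one]
  have hSle : ∀ N, ∑ k ∈ Finset.range (N+1), εk k ≤ (ε : ℝ≥0∞) := by
    intro N
    rw [← hεtsum]
    exact ENNReal.sum_le_tsum _
  -- near-optimal open neighborhoods
  have hcovN : ∀ N, dyadicContent n δ (E N) < dyadicContent n δ (E N) + εk N :=
    fun N => ENNReal.lt_add_right (hEfin N) (hεk0 N)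
  choose cN hcNcov hcNcost using fun N => exists_cover (hcovN N)
  set U : ℕ → Set (En n) := fun N => interior (⋃ i, cube (cN N i)) with hU
  have hUopen : ∀ N, IsOpen (U N) := fun N => isOpen_interior
  have hEU : ∀ N, E N ⊆ U N := hcNcov
  have hUcost : ∀ N, dyadicContent n δ (U N) ≤ dyadicContent n δ (E N) + εk N :=
    fun N => (content_le_cost (cN N) Set.Subset.rfl).trans (hcNcost N).le
  set W : ℕ → Set (En n) := fun N => ⋃ k ∈ Finset.range (N+1), U k with hW
  have hWopen : ∀ N, IsOpen (W N) := fun N => isOpen_biUnion (fun k _ => hUopen k)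
  have hWmono : Monotone W := by
    intro a b hab x hx
    obtain ⟨k, hk, hxk⟩ := Set.mem_iUnion₂.mp hx
    exact Set.mem_biUnion
      (Finset.mem_range.mpr (by have := Finset.mem_range.mp hk; omega)) hxk
  have hUW : ∀ N, U N ⊆ W N := by
    intro N
    exact Set.subset_biUnion_of_mem (Finset.self_mem_range_succ N)
  have hWsplit : ∀ N, W (N+1) = W N ∪ U (N+1) := by
    intro N
    rw [hW]
    simp only [Finset.range_add_one (n := N+1), Finset.set_biUnion_insert]
    rw [Set.union_comm]
  have hWcost : ∀ N, dyadicContent n δ (W N)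
      ≤ dyadicContent n δ (E N) + ∑ k ∈ Finset.range (N+1), εk k := by
    intro N
    induction N with
    | zero =>
        have hW0 : W 0 = U 0 := by
          rw [hW]
          simp
        rw [hW0]
        simpa using hUcost 0
    | succ N ih =>
        have hsub := content_submodular hn hδ0 (W N) (U (N+1))
        have hEsub : E N ⊆ W N ∩ U (N+1) :=
          fun x hx => ⟨(hUW N) (hEU N hx), hEU (N+1) (hmono (by omega : N ≤ N+1) hx)⟩
        have hkey : dyadicContent n δ (W (N+1)) + dyadicContent n δ (E N)
            ≤ (dyadicContent n δ (E (N+1)) + ∑ k ∈ Finset.range (N+2), εk k)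
              + dyadicContent n δ (E N) := by
          calc dyadicContent n δ (W (N+1)) + dyadicContent n δ (E N)
              ≤ dyadicContent n δ (W (N+1)) + dyadicContent n δ (W N ∩ U (N+1)) :=
                add_le_add_right (content_mono hEsub) _
          _ = dyadicContent n δ (W N ∪ U (N+1)) + dyadicContent n δ (W N ∩ U (N+1)) := by
                rw [← hWsplit N]
          _ ≤ dyadicContent n δ (W N) + dyadicContent n δ (U (N+1)) := hsub
          _ ≤ (dyadicContent n δ (E N) + ∑ k ∈ Finset.range (N+1), εk k)
                + (dyadicContent n δ (E (N+1)) + εk (N+1)) := add_le_add ih (hUcost (N+1))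
          _ = (dyadicContent n δ (E (N+1))
                + (∑ k ∈ Finset.range (N+1), εk k + εk (N+1))) + dyadicContent n δ (E N) := by
                ring
          _ = (dyadicContent n δ (E (N+1)) + ∑ k ∈ Finset.range (N+2), εk k)
                + dyadicContent n δ (E N) := by
                rw [Finset.sum_range_succ (n := N+1)]
        exact (ENNReal.add_le_add_iff_right (hEfin N)).mp hkey
  have hcovW : (⋃ N, E N) ⊆ ⋃ N, W N := by
    apply Set.iUnion_mono
    intro N
    exact (hEU N).trans (hUW N)
  calc dyadicContent n δ (⋃ N, E N) ≤ dyadicContent n δ (⋃ N, W N) := content_mono hcovW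
  _ ≤ ⨆ N, dyadicContent n δ (W N) := content_iUnion_of_open hn hδ0 hδn W hWopen hWmono
  _ ≤ L + ε := by
      apply iSup_le
      intro N
      calc dyadicContent n δ (W N)
          ≤ dyadicContent n δ (E N) + ∑ k ∈ Finset.range (N+1), εk k := hWcost N
      _ ≤ L + ε := add_le_add (hEle N) (hSle N)

end CF

namespace CF

theorem choquet_fatou' (n : ℕ) (hn : 1 ≤ n) (Ω : Set (En n))
    (δ : ℝ) (hδ0 : 0 < δ) (hδn : δ ≤ n) (f : ℕ → En n → ℝ≥0∞) :
    choquetIntegral n δ Ω (fun x => liminf (fun i => f i x) atTop) ≤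
      liminf (fun i => choquetIntegral n δ Ω (f i)) atTop := by
  have key : ∀ t : ℝ,
      dyadicContent n δ {x | x ∈ Ω ∧ ENNReal.ofReal t < liminf (fun i => f i x) atTop}
        ≤ liminf (fun i => dyadicContent n δ {x | x ∈ Ω ∧ ENNReal.ofReal t < f i x}) atTop := by
    intro t
    set T : ℕ → Set (En n) :=
      fun N => {x | x ∈ Ω ∧ ∀ i, N ≤ i → ENNReal.ofReal t < f i x} with hT
    have hTmono : Monotone T :=
      fun a b hab x hx => ⟨hx.1, fun i hbi => hx.2 i (le_trans hab hbi)⟩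
    have hsub : {x | x ∈ Ω ∧ ENNReal.ofReal t < liminf (fun i => f i x) atTop} ⊆ ⋃ N, T N := by
      rintro x ⟨hxΩ, hxt⟩
      rw [liminf_eq_iSup_iInf_of_nat, lt_iSup_iff] at hxt
      obtain ⟨N, hN⟩ := hxt
      exact Set.mem_iUnion.mpr ⟨N, hxΩ, fun i hi => lt_of_lt_of_le hN (iInf₂_le i hi)⟩
    have h1 : dyadicContent n δ {x | x ∈ Ω ∧ ENNReal.ofReal t < liminf (fun i => f i x) atTop}
        ≤ ⨆ N, dyadicContent n δ (T N) :=
      (content_mono hsub).trans (content_iUnion_mono hn hδ0 hδn T hTmono)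
    have h2 : ∀ N, dyadicContent n δ (T N)
        ≤ ⨅ i, ⨅ (_ : N ≤ i), dyadicContent n δ {x | x ∈ Ω ∧ ENNReal.ofReal t < f i x} :=
      fun N => le_iInf₂ fun i hi => content_mono (fun x hx => ⟨hx.1, hx.2 i hi⟩)
    refine (h1.trans (iSup_mono h2)).trans ?_
    rw [liminf_eq_iSup_iInf_of_nat]
  have hmeas : ∀ i,
      Measurable (fun t : ℝ => dyadicContent n δ {x | x ∈ Ω ∧ ENNReal.ofReal t < f i x}) := by
    intro i
    apply Antitone.measurable
    intro t t' htt'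
    apply content_mono
    rintro x ⟨hxΩ, hxt⟩
    exact ⟨hxΩ, lt_of_le_of_lt (ENNReal.ofReal_le_ofReal htt') hxt⟩
  calc choquetIntegral n δ Ω (fun x => liminf (fun i => f i x) atTop)
      = ∫⁻ t in Ioi (0:ℝ),
          dyadicContent n δ {x | x ∈ Ω ∧ ENNReal.ofReal t < liminf (fun i => f i x) atTop} := rfl
  _ ≤ ∫⁻ t in Ioi (0:ℝ),
        liminf (fun i => dyadicContent n δ {x | x ∈ Ω ∧ ENNReal.ofReal t < f i x}) atTop :=
        lintegral_mono (fun t => key t)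
  _ ≤ liminf (fun i => ∫⁻ t in Ioi (0:ℝ),
        dyadicContent n δ {x | x ∈ Ω ∧ ENNReal.ofReal t < f i x}) atTop :=
        lintegral_liminf_le hmeas
  _ = liminf (fun i => choquetIntegral n δ Ω (f i)) atTop := rfl

end CF

/-- Fatou's lemma for the Choquet integral with respect to the
dyadic Hausdorff content. -/
theorem choquet_fatou (n : ℕ) (hn : 1 ≤ n) (Ω : Set (En n))
    (δ : ℝ) (hδ0 : 0 < δ) (hδn : δ ≤ n) (f : ℕ → En n → ℝ≥0∞) :
    choquetIntegral n δ Ω (fun x => liminf (fun i => f i x) atTop) ≤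
      liminf (fun i => choquetIntegral n δ Ω (f i)) atTop := by
  exact CF.choquet_fatou' n hn Ω δ hδ0 hδn f
end
end

section
/- Let n ≥ 1, let Ω be any subset of ℝⁿ, and let δ ∈ (0, n]. Then ‖f‖₁ := ∫_Ω |f| dH̃^δ_∞ has the properties of a norm on nL¹(Ω, H̃^δ_∞) modulo H̃^δ_∞-almost everywhere equality: (i) ‖f‖₁ = 0 if and only if f(x) = 0 for H̃^δ_∞-almost every x ∈ Ω; (ii) ‖a·f‖₁ = |a|·‖f‖₁ for every real a; (iii) ‖f + g‖₁ ≤ ‖f‖₁ + ‖g‖₁ for all f, g ∈ nL¹(Ω, H̃^δ_∞). -/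
open MeasureTheory Set Metric Filter Topology
open scoped ENNReal

noncomputable section

namespace DyAux

variable {n : ℕ} {δ : ℝ}

def csum (n : ℕ) (δ : ℝ) (c : ℕ → ℤ × (Fin n → ℤ)) : ℝ≥0∞ :=
  ∑' i, ENNReal.ofReal (((2 : ℝ) ^ (c i).1) ^ δ)

lemma dyadicContent_eq (E : Set (En n)) :
    dyadicContent n δ E = ⨅ (c : ℕ → ℤ × (Fin n → ℤ))
      (_ : E ⊆ interior (⋃ i, dyadicCube n (c i).1 (c i).2)), csum n δ c := rfl

lemma content_le_csum {E : Set (En n)} {c : ℕ → ℤ × (Fin n → ℤ)}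
    (h : E ⊆ interior (⋃ i, dyadicCube n (c i).1 (c i).2)) :
    dyadicContent n δ E ≤ csum n δ c := by
  rw [dyadicContent_eq]; exact iInf_le_of_le c (iInf_le _ h)

lemma exists_cover {E : Set (En n)} {r : ℝ≥0∞} (h : dyadicContent n δ E < r) :
    ∃ c : ℕ → ℤ × (Fin n → ℤ),
      (E ⊆ interior (⋃ i, dyadicCube n (c i).1 (c i).2)) ∧ csum n δ c < r := by
  rw [dyadicContent_eq] at h
  obtain ⟨c, hc⟩ := iInf_lt_iff.mp h
  obtain ⟨hcov, hlt⟩ := iInf_lt_iff.mp hc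
  exact ⟨c, hcov, hlt⟩

lemma content_mono {E F : Set (En n)} (h : E ⊆ F) :
    dyadicContent n δ E ≤ dyadicContent n δ F := by
  rw [dyadicContent_eq E, dyadicContent_eq F]
  exact le_iInf fun c => le_iInf fun hc => content_le_csum (h.trans hc)

/-- basic term rewrite: the cover term for `k = -(N+i+1)`. -/
lemma term_tiny (hδ0 : 0 < δ) (N i : ℕ) :
    ENNReal.ofReal (((2 : ℝ) ^ (-((N : ℤ) + i + 1))) ^ δ)
      = (ENNReal.ofReal ((2 : ℝ)⁻¹ ^ δ)) ^ (N + i + 1) := by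
  have h1 : (2 : ℝ) ^ (-((N : ℤ) + i + 1)) = ((2 : ℝ)⁻¹) ^ (N + i + 1 : ℕ) := by
    have he : (-((N : ℤ) + i + 1)) = -((N + i + 1 : ℕ) : ℤ) := by push_cast; ring
    rw [he, zpow_neg, zpow_natCast, ← inv_pow]
  rw [h1]
  have h2 : (((2 : ℝ)⁻¹) ^ (N + i + 1 : ℕ)) ^ δ = ((2 : ℝ)⁻¹ ^ δ) ^ (N + i + 1 : ℕ) := by
    rw [← Real.rpow_natCast ((2:ℝ)⁻¹) (N + i + 1), ← Real.rpow_mul (by norm_num),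
      mul_comm, Real.rpow_mul (by norm_num), Real.rpow_natCast]
  rw [h2, ENNReal.ofReal_pow (Real.rpow_nonneg (by norm_num) _)]

lemma tiny_sum_lt (hδ0 : 0 < δ) {ε : ℝ≥0∞} (hε : 0 < ε) :
    ∃ N : ℕ, (∑' i : ℕ, ENNReal.ofReal (((2 : ℝ) ^ (-((N : ℤ) + i + 1))) ^ δ)) < ε := by
  set q : ℝ≥0∞ := ENNReal.ofReal ((2 : ℝ)⁻¹ ^ δ) with hq
  have hqlt : q < 1 := by
    rw [hq, ENNReal.ofReal_lt_one]
    exact Real.rpow_lt_one (by norm_num) (by norm_num) hδ0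
  have hqtop : (1 - q)⁻¹ ≠ ⊤ := by
    simp only [ne_eq, ENNReal.inv_eq_top, tsub_eq_zero_iff_le, not_le]
    exact hqlt
  have htend : Tendsto (fun N : ℕ => q ^ (N + 1) * (1 - q)⁻¹) atTop (𝓝 0) := by
    have h0 : Tendsto (fun N : ℕ => q ^ (N + 1)) atTop (𝓝 0) := by
      have := ENNReal.tendsto_pow_atTop_nhds_zero_of_lt_one hqlt
      exact this.comp (tendsto_add_atTop_nat 1)
    simpa using ENNReal.Tendsto.mul_const h0 (Or.inr hqtop)
  obtain ⟨N, hN⟩ := (htend.eventually_lt_const hε).exists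
  refine ⟨N, ?_⟩
  have hsum : (∑' i : ℕ, ENNReal.ofReal (((2 : ℝ) ^ (-((N : ℤ) + i + 1))) ^ δ))
      = q ^ (N + 1) * (1 - q)⁻¹ := by
    have : ∀ i : ℕ, ENNReal.ofReal (((2 : ℝ) ^ (-((N : ℤ) + i + 1))) ^ δ)
        = q ^ (N + 1) * q ^ i := by
      intro i
      rw [term_tiny hδ0 N i, ← pow_add]
      congr 1; omega
    rw [tsum_congr this, ENNReal.tsum_mul_left, ENNReal.tsum_geometric]
  rw [hsum]; exact hN


-- appended to base
lemma content_empty (hδ0 : 0 < δ) : dyadicContent n δ (∅ : Set (En n)) = 0 := by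
  refine le_antisymm ?_ zero_le
  refine ENNReal.le_of_forall_pos_le_add fun ε hε _ => ?_
  rw [zero_add]
  obtain ⟨N, hN⟩ := tiny_sum_lt hδ0 (show (0:ℝ≥0∞) < ε from ENNReal.coe_pos.mpr hε)
  have hcov : (∅ : Set (En n)) ⊆ interior (⋃ i, dyadicCube n
      ((fun i : ℕ => ((-((N : ℤ) + i + 1), fun _ => 0) : ℤ × (Fin n → ℤ))) i).1
      ((fun i : ℕ => ((-((N : ℤ) + i + 1), fun _ => 0) : ℤ × (Fin n → ℤ))) i).2) :=
    empty_subset _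
  refine le_trans (content_le_csum hcov) ?_
  exact hN.le

lemma two_zpow_pos (k : ℤ) : (0:ℝ) < 2 ^ k := zpow_pos (by norm_num) k

lemma cube_nested {k₁ k₂ : ℤ} {m₁ m₂ : Fin n → ℤ} {x : En n} (hk : k₁ ≤ k₂)
    (h₁ : x ∈ dyadicCube n k₁ m₁) (h₂ : x ∈ dyadicCube n k₂ m₂) :
    dyadicCube n k₁ m₁ ⊆ dyadicCube n k₂ m₂ := by
  intro y hy i
  obtain ⟨ha, hb⟩ := h₁ i
  obtain ⟨hc, hd⟩ := h₂ i
  obtain ⟨ha', hb'⟩ := hy i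
  set e : ℕ := (k₂ - k₁).toNat with he
  have h2 : (2:ℝ) ^ k₂ = (2:ℝ) ^ (e:ℕ) * 2 ^ k₁ := by
    rw [← zpow_natCast (2:ℝ), ← zpow_add₀ (two_ne_zero)]
    congr 1; omega
  have hp1 : (0:ℝ) < 2 ^ k₁ := two_zpow_pos k₁
  have key1 : ((m₂ i * 2 ^ e : ℤ) : ℝ) ≤ (m₁ i : ℝ) := by
    have h3 : ((m₂ i : ℝ)) * 2 ^ k₂ < ((m₁ i : ℝ) + 1) * 2 ^ k₁ := lt_of_le_of_lt hc hb
    rw [h2] at h3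
    have h4 : ((m₂ i : ℝ) * 2 ^ e) < (m₁ i : ℝ) + 1 := by
      have := lt_of_mul_lt_mul_right (by linarith : ((m₂ i:ℝ) * 2 ^ e) * 2 ^ k₁ < ((m₁ i:ℝ)+1) * 2 ^ k₁) hp1.le
      exact this
    have h5 : (m₂ i * 2 ^ e : ℤ) < m₁ i + 1 := by exact_mod_cast h4
    exact_mod_cast Int.lt_add_one_iff.mp h5
  have key2 : ((m₁ i : ℝ) + 1) ≤ ((m₂ i : ℝ) + 1) * 2 ^ e := by
    have h3 : ((m₁ i : ℝ)) * 2 ^ k₁ < ((m₂ i : ℝ) + 1) * 2 ^ k₂ := lt_of_le_of_lt ha hd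
    rw [h2] at h3
    have h4 : (m₁ i : ℝ) < ((m₂ i : ℝ) + 1) * 2 ^ e := by
      have := lt_of_mul_lt_mul_right (by linarith : ((m₁ i:ℝ)) * 2 ^ k₁ < (((m₂ i:ℝ)+1) * 2 ^ e) * 2 ^ k₁) hp1.le
      exact this
    have h5 : (m₁ i : ℤ) < (m₂ i + 1) * 2 ^ e := by exact_mod_cast h4
    have h6 : (m₁ i + 1 : ℤ) ≤ (m₂ i + 1) * 2 ^ e := h5
    exact_mod_cast h6
  constructor
  · calc (m₂ i : ℝ) * 2 ^ k₂ = ((m₂ i : ℝ) * 2 ^ e) * 2 ^ k₁ := by rw [h2]; ring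
    _ ≤ (m₁ i : ℝ) * 2 ^ k₁ := by
        apply mul_le_mul_of_nonneg_right _ hp1.le
        exact_mod_cast key1
    _ ≤ y i := ha'
  · calc y i < ((m₁ i : ℝ) + 1) * 2 ^ k₁ := hb'
    _ ≤ ((m₂ i : ℝ) + 1) * 2 ^ k₂ := by
        rw [h2, ← mul_assoc]
        exact mul_le_mul_of_nonneg_right key2 hp1.le

lemma zpow_two_lt {k₁ k₂ : ℤ} (h : (2:ℝ) ^ k₁ < 2 ^ k₂) : k₁ < k₂ := by
  by_contra hc
  push_neg at hc
  exact absurd h (not_lt.mpr (zpow_le_zpow_right₀ (by norm_num) hc))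

lemma cube_ne (hn : 1 ≤ n) {k₁ k₂ : ℤ} {m₁ m₂ : Fin n → ℤ} (hk : k₁ < k₂) :
    dyadicCube n k₁ m₁ ≠ dyadicCube n k₂ m₂ := by
  intro h
  set y : En n := WithLp.toLp 2 (fun i => (m₂ i : ℝ) * 2 ^ k₂) with hy
  set z : En n := WithLp.toLp 2 (fun i => (m₂ i : ℝ) * 2 ^ k₂ + 2 ^ (k₂ - 1)) with hz
  have hyz : ∀ i, y i = (m₂ i : ℝ) * 2 ^ k₂ ∧ z i = (m₂ i : ℝ) * 2 ^ k₂ + 2 ^ (k₂-1) :=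
    fun i => ⟨rfl, rfl⟩
  have hym : y ∈ dyadicCube n k₂ m₂ := by
    intro i
    rw [(hyz i).1]
    refine ⟨le_refl _, ?_⟩
    nlinarith [two_zpow_pos k₂]
  have hzm : z ∈ dyadicCube n k₂ m₂ := by
    intro i
    rw [(hyz i).2]
    constructor
    · nlinarith [two_zpow_pos (k₂ - 1), two_zpow_pos k₂]
    · have h1 : (2:ℝ) ^ (k₂ - 1) < 2 ^ k₂ :=
        zpow_lt_zpow_right₀ (by norm_num) (by omega)
      nlinarith
  rw [← h] at hym hzm
  set i0 : Fin n := ⟨0, hn⟩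
  obtain ⟨hy1, hy2⟩ := hym i0
  obtain ⟨hz1, hz2⟩ := hzm i0
  have hlt : (2:ℝ) ^ (k₂ - 1) < 2 ^ k₁ := by
    rw [(hyz i0).1] at hy1 hy2
    rw [(hyz i0).2] at hz1 hz2
    linarith
  have := zpow_two_lt hlt
  omega

def mer (c d : ℕ → ℤ × (Fin n → ℤ)) : ℕ → ℤ × (Fin n → ℤ) :=
  fun i => if Even i then c (i / 2) else d (i / 2)

def Pg (n : ℕ) (c d : ℕ → ℤ × (Fin n → ℤ)) : ℕ → Prop := fun i =>
  if Even i then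
    ¬∃ j, dyadicCube n (c (i/2)).1 (c (i/2)).2 ⊂ dyadicCube n (d j).1 (d j).2
  else ¬∃ j, dyadicCube n (d (i/2)).1 (d (i/2)).2 ⊆ dyadicCube n (c j).1 (c j).2

lemma mer_even (c d : ℕ → ℤ × (Fin n → ℤ)) (j : ℕ) : mer c d (2*j) = c j := by
  have h1 : Even (2*j) := ⟨j, two_mul j⟩
  have h2 : (2*j)/2 = j := by omega
  simp only [mer]; rw [if_pos h1, h2]

lemma mer_odd (c d : ℕ → ℤ × (Fin n → ℤ)) (j : ℕ) : mer c d (2*j+1) = d j := by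
  have h1 : ¬ Even (2*j+1) := by rw [Nat.even_iff]; omega
  have h2 : (2*j+1)/2 = j := by omega
  simp only [mer]; rw [if_neg h1, h2]

lemma cover_A (hn : 1 ≤ n) {c d : ℕ → ℤ × (Fin n → ℤ)} {K₀ : ℤ}
    (hc : ∀ i, (c i).1 ≤ K₀) (hd : ∀ i, (d i).1 ≤ K₀) {x : En n}
    (hx : x ∈ (⋃ i, dyadicCube n (c i).1 (c i).2) ∪ ⋃ i, dyadicCube n (d i).1 (d i).2) :
    ∃ i, Pg n c d i ∧ x ∈ dyadicCube n (mer c d i).1 (mer c d i).2 := by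
  classical
  have hSne : ∃ i, x ∈ dyadicCube n (mer c d i).1 (mer c d i).2 := by
    rcases hx with hx | hx
    · obtain ⟨j, hj⟩ := mem_iUnion.mp hx
      exact ⟨2*j, by rw [mer_even]; exact hj⟩
    · obtain ⟨j, hj⟩ := mem_iUnion.mp hx
      exact ⟨2*j+1, by rw [mer_odd]; exact hj⟩
  have hbdd : ∀ i, x ∈ dyadicCube n (mer c d i).1 (mer c d i).2 → (mer c d i).1 ≤ K₀ := by
    intro i _
    by_cases he : Even i
    · simp only [mer]; rw [if_pos he]; exact hc _
    · simp only [mer]; rw [if_neg he]; exact hd _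
  obtain ⟨ks, ⟨is, hxis, hkis⟩, hmax⟩ :=
    Int.exists_greatest_of_bdd (P := fun k => ∃ i,
        x ∈ dyadicCube n (mer c d i).1 (mer c d i).2 ∧ (mer c d i).1 = k)
      ⟨K₀, fun z hz => by obtain ⟨i, hxi, hzi⟩ := hz; exact hzi ▸ hbdd i hxi⟩
      (by obtain ⟨i, hi⟩ := hSne; exact ⟨_, i, hi, rfl⟩)
  by_cases hev : ∃ i, Even i ∧
      x ∈ dyadicCube n (mer c d i).1 (mer c d i).2 ∧ (mer c d i).1 = ks
  · obtain ⟨i, hie, hxi, hki⟩ := hev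
    refine ⟨i, ?_, hxi⟩
    have hmer : mer c d i = c (i/2) := by simp only [mer]; rw [if_pos hie]
    simp only [Pg]; rw [if_pos hie]
    rintro ⟨j, hsub⟩
    rw [hmer] at hxi hki
    have hxd : x ∈ dyadicCube n (d j).1 (d j).2 := hsub.1 hxi
    have hkd : (d j).1 ≤ ks :=
      hmax _ ⟨2*j+1, by rw [mer_odd]; exact hxd, by rw [mer_odd]⟩
    have hnest : dyadicCube n (d j).1 (d j).2 ⊆ dyadicCube n (c (i/2)).1 (c (i/2)).2 :=
      cube_nested (by omega) hxd hxi
    exact hsub.not_subset hnest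
  · have hio : ¬ Even is := fun he => hev ⟨is, he, hxis, hkis⟩
    refine ⟨is, ?_, hxis⟩
    have hmer : mer c d is = d (is/2) := by simp only [mer]; rw [if_neg hio]
    simp only [Pg]; rw [if_neg hio]
    rintro ⟨j, hsub⟩
    rw [hmer] at hxis hkis
    have hxc : x ∈ dyadicCube n (c j).1 (c j).2 := hsub hxis
    have hkc : (c j).1 ≤ ks :=
      hmax _ ⟨2*j, by rw [mer_even]; exact hxc, by rw [mer_even]⟩
    rcases eq_or_lt_of_le hkc with heq | hlt
    · exact hev ⟨2*j, ⟨j, two_mul j⟩, by rw [mer_even]; exact hxc, by rw [mer_even]; exact heq⟩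
    · have hcd : dyadicCube n (c j).1 (c j).2 ⊆ dyadicCube n (d (is/2)).1 (d (is/2)).2 :=
        cube_nested (by omega) hxc hxis
      exact cube_ne hn (show (c j).1 < (d (is/2)).1 by omega) (subset_antisymm hcd hsub)

lemma cover_B {c d : ℕ → ℤ × (Fin n → ℤ)} {x : En n}
    (hx : x ∈ (⋃ i, dyadicCube n (c i).1 (c i).2) ∩ ⋃ i, dyadicCube n (d i).1 (d i).2) :
    ∃ i, ¬ Pg n c d i ∧ x ∈ dyadicCube n (mer c d i).1 (mer c d i).2 := by
  classical
  obtain ⟨hxc, hxd⟩ := hx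
  obtain ⟨i, hi⟩ := mem_iUnion.mp hxc
  obtain ⟨j, hj⟩ := mem_iUnion.mp hxd
  by_cases hb : dyadicCube n (d j).1 (d j).2 ⊆ dyadicCube n (c i).1 (c i).2
  · refine ⟨2*j+1, ?_, by rw [mer_odd]; exact hj⟩
    have ho : ¬ Even (2*j+1) := by rw [Nat.even_iff]; omega
    have hidx : (2*j+1)/2 = j := by omega
    simp only [Pg]; rw [if_neg ho, hidx]
    intro hP; exact hP ⟨i, hb⟩
  · refine ⟨2*i, ?_, by rw [mer_even]; exact hi⟩
    have he : Even (2*i) := ⟨i, two_mul i⟩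
    have hidx : (2*i)/2 = i := by omega
    simp only [Pg]; rw [if_pos he, hidx]
    intro hP
    apply hP
    refine ⟨j, ?_⟩
    have hkcd : (c i).1 ≤ (d j).1 := by
      by_contra hlt; push_neg at hlt
      exact hb (cube_nested hlt.le hj hi)
    rw [Set.ssubset_def]
    exact ⟨cube_nested hkcd hi hj, hb⟩

lemma term_le_term (hδ0 : 0 < δ) {k₁ k₂ : ℤ} (h : k₁ ≤ k₂) :
    ((2:ℝ) ^ k₁) ^ δ ≤ ((2:ℝ) ^ k₂) ^ δ :=
  Real.rpow_le_rpow (two_zpow_pos k₁).le (zpow_le_zpow_right₀ (by norm_num) h) hδ0.le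

lemma exists_K0 (hδ0 : 0 < δ) {T : ℝ≥0∞} (hT : T ≠ ⊤) :
    ∃ K₀ : ℤ, ∀ k : ℤ, ENNReal.ofReal (((2:ℝ) ^ k) ^ δ) ≤ T → k ≤ K₀ := by
  have hB : 1 < (2:ℝ) ^ δ :=
    (Real.one_lt_rpow_iff_of_pos (by norm_num)).mpr (Or.inl ⟨by norm_num, hδ0⟩)
  obtain ⟨M, hM⟩ := pow_unbounded_of_one_lt (T.toReal) hB
  refine ⟨(M : ℤ), fun k hk => ?_⟩
  by_contra hc; push_neg at hc
  have h3 : ((2:ℝ) ^ (M:ℤ)) ^ δ = ((2:ℝ) ^ δ) ^ M := by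
    rw [zpow_natCast, ← Real.rpow_natCast (2:ℝ) M, ← Real.rpow_mul (by norm_num),
      mul_comm, Real.rpow_mul (by norm_num), Real.rpow_natCast]
  have h1 : ((2:ℝ) ^ (M:ℤ)) ^ δ ≤ ((2:ℝ) ^ k) ^ δ := term_le_term hδ0 (by omega)
  have h2 : ((2:ℝ) ^ k) ^ δ ≤ T.toReal := (ENNReal.ofReal_le_iff_le_toReal hT).mp hk
  rw [h3] at h1
  linarith

lemma content_strong_subadd (hn : 1 ≤ n) (hδ0 : 0 < δ) (E F : Set (En n)) :
    dyadicContent n δ (E ∪ F) + dyadicContent n δ (E ∩ F)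
      ≤ dyadicContent n δ E + dyadicContent n δ F := by
  classical
  rcases eq_top_or_lt_top (dyadicContent n δ E) with hE | hE
  · rw [hE]; simp
  rcases eq_top_or_lt_top (dyadicContent n δ F) with hF | hF
  · rw [hF]; simp
  refine ENNReal.le_of_forall_pos_le_add fun η hη hfin => ?_
  set ε : ℝ≥0∞ := (η : ℝ≥0∞) / 4 with hεdef
  have hε0 : 0 < ε := ENNReal.div_pos (by exact_mod_cast hη.ne') (by norm_num)
  obtain ⟨c, hcov_c, hsum_c⟩ := exists_cover (ENNReal.lt_add_right hE.ne hε0.ne')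
  obtain ⟨d, hcov_d, hsum_d⟩ := exists_cover (ENNReal.lt_add_right hF.ne hε0.ne')
  obtain ⟨N, hN⟩ := tiny_sum_lt hδ0 hε0
  have hεtop : ε ≠ ⊤ := by
    rw [hεdef]; exact (ENNReal.div_lt_top ENNReal.coe_ne_top (by norm_num)).ne
  have hc_fin : csum n δ c < ⊤ := hsum_c.trans (ENNReal.add_lt_top.mpr ⟨hE, hεtop.lt_top⟩)
  have hd_fin : csum n δ d < ⊤ := hsum_d.trans (ENNReal.add_lt_top.mpr ⟨hF, hεtop.lt_top⟩)
  have hTfin : csum n δ c + csum n δ d ≠ ⊤ := (ENNReal.add_lt_top.mpr ⟨hc_fin, hd_fin⟩).ne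
  obtain ⟨K₀, hK₀⟩ := exists_K0 hδ0 hTfin
  have hck : ∀ i, (c i).1 ≤ K₀ := fun i =>
    hK₀ _ (le_trans (ENNReal.le_tsum i) le_self_add)
  have hdk : ∀ i, (d i).1 ≤ K₀ := fun i =>
    hK₀ _ (le_trans (ENNReal.le_tsum i) le_add_self)
  set e : ℕ → ℤ × (Fin n → ℤ) := mer c d with he_def
  set P : ℕ → Prop := Pg n c d with hP_def
  set tiny : ℕ → ℤ × (Fin n → ℤ) := fun i => (-((N:ℤ) + i + 1), fun _ => 0) with htiny_def
  set a : ℕ → ℤ × (Fin n → ℤ) := fun i => if P i then e i else tiny i with ha_def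
  set b : ℕ → ℤ × (Fin n → ℤ) := fun i => if P i then tiny i else e i with hb_def
  have hUV : (E ∪ F) ⊆ interior (⋃ i, dyadicCube n (a i).1 (a i).2) := by
    have h1 : E ∪ F ⊆ interior ((⋃ i, dyadicCube n (c i).1 (c i).2)
        ∪ ⋃ i, dyadicCube n (d i).1 (d i).2) :=
      union_subset (hcov_c.trans (interior_mono subset_union_left))
        (hcov_d.trans (interior_mono subset_union_right))
    refine h1.trans (interior_mono ?_)
    intro x hx
    obtain ⟨i, hPi, hxi⟩ := cover_A hn hck hdk hx
    refine mem_iUnion.mpr ⟨i, ?_⟩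
    have : a i = e i := by rw [ha_def]; simp only; rw [if_pos hPi]
    rw [this]; exact hxi
  have hIV : (E ∩ F) ⊆ interior (⋃ i, dyadicCube n (b i).1 (b i).2) := by
    have h1 : E ∩ F ⊆ interior ((⋃ i, dyadicCube n (c i).1 (c i).2)
        ∩ ⋃ i, dyadicCube n (d i).1 (d i).2) := by
      rw [interior_inter]; exact inter_subset_inter hcov_c hcov_d
    refine h1.trans (interior_mono ?_)
    intro x hx
    obtain ⟨i, hPi, hxi⟩ := cover_B hx
    refine mem_iUnion.mpr ⟨i, ?_⟩
    have : b i = e i := by rw [hb_def]; simp only; rw [if_neg hPi]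
    rw [this]; exact hxi
  have hsum : csum n δ a + csum n δ b
      = csum n δ e + ∑' i, ENNReal.ofReal (((2:ℝ) ^ (tiny i).1) ^ δ) := by
    simp only [csum]
    rw [← ENNReal.tsum_add, ← ENNReal.tsum_add]
    apply tsum_congr; intro i
    by_cases hPi : P i
    · have h1 : a i = e i := by rw [ha_def]; simp only; rw [if_pos hPi]
      have h2 : b i = tiny i := by rw [hb_def]; simp only; rw [if_pos hPi]
      rw [h1, h2]
    · have h1 : a i = tiny i := by rw [ha_def]; simp only; rw [if_neg hPi]
      have h2 : b i = e i := by rw [hb_def]; simp only; rw [if_neg hPi]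
      rw [h1, h2]; exact add_comm _ _
  have hmerge : csum n δ e = csum n δ c + csum n δ d := by
    simp only [csum]
    rw [← tsum_even_add_odd ENNReal.summable ENNReal.summable]
    congr 1
    · apply tsum_congr; intro k
      rw [show e (2*k) = c k from mer_even c d k]
    · apply tsum_congr; intro k
      rw [show e (2*k+1) = d k from mer_odd c d k]
  have htiny_sum : (∑' i, ENNReal.ofReal (((2:ℝ) ^ (tiny i).1) ^ δ)) ≤ ε := by
    refine le_trans (le_of_eq ?_) hN.le
    apply tsum_congr; intro i
    rfl
  have hmain : dyadicContent n δ (E ∪ F) + dyadicContent n δ (E ∩ F)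
      ≤ (dyadicContent n δ E + ε) + (dyadicContent n δ F + ε) + ε := by
    calc dyadicContent n δ (E ∪ F) + dyadicContent n δ (E ∩ F)
        ≤ csum n δ a + csum n δ b := add_le_add (content_le_csum hUV) (content_le_csum hIV)
      _ = csum n δ c + csum n δ d + ∑' i, ENNReal.ofReal (((2:ℝ) ^ (tiny i).1) ^ δ) := by
          rw [hsum, hmerge]
      _ ≤ (dyadicContent n δ E + ε) + (dyadicContent n δ F + ε) + ε :=
          add_le_add (add_le_add hsum_c.le hsum_d.le) htiny_sum
  refine hmain.trans ?_
  have h4 : ε + ε + ε ≤ (η : ℝ≥0∞) := by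
    have : ε + ε + ε + ε = (η : ℝ≥0∞) := by
      rw [hεdef]
      rw [show (η:ℝ≥0∞)/4 + (η:ℝ≥0∞)/4 + (η:ℝ≥0∞)/4 + (η:ℝ≥0∞)/4 = 4 * ((η:ℝ≥0∞)/4) by ring]
      exact ENNReal.mul_div_cancel' (by norm_num) (by norm_num)
    calc ε + ε + ε ≤ ε + ε + ε + ε := le_self_add
      _ = (η : ℝ≥0∞) := this
  calc (dyadicContent n δ E + ε) + (dyadicContent n δ F + ε) + ε
      = dyadicContent n δ E + dyadicContent n δ F + (ε + ε + ε) := by ring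
    _ ≤ dyadicContent n δ E + dyadicContent n δ F + η :=
        add_le_add le_rfl h4

lemma content_iUnion_null (hδ0 : 0 < δ) {E : ℕ → Set (En n)}
    (h : ∀ k, dyadicContent n δ (E k) = 0) :
    dyadicContent n δ (⋃ k, E k) = 0 := by
  classical
  refine le_antisymm ?_ zero_le
  refine ENNReal.le_of_forall_pos_le_add fun η hη _ => ?_
  rw [zero_add]
  have hη' : (0:ℝ≥0∞) < η := ENNReal.coe_pos.mpr hη
  have hcov : ∀ k : ℕ, ∃ c : ℕ → ℤ × (Fin n → ℤ),
      (E k ⊆ interior (⋃ i, dyadicCube n (c i).1 (c i).2)) ∧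
      csum n δ c < (η : ℝ≥0∞) * 2⁻¹ ^ (k+1) := by
    intro k
    apply exists_cover
    rw [h k]
    exact ENNReal.mul_pos hη'.ne' (by simp [pow_ne_zero, ENNReal.inv_ne_zero]) |>.trans_le le_rfl
  choose cc hcc hsumcc using hcov
  set pe : ℕ ≃ ℕ × ℕ := Nat.pairEquiv.symm with hpe
  set c : ℕ → ℤ × (Fin n → ℤ) := fun i => cc (pe i).1 (pe i).2 with hc
  have hcover : (⋃ k, E k) ⊆ interior (⋃ i, dyadicCube n (c i).1 (c i).2) := by
    refine iUnion_subset fun k => (hcc k).trans (interior_mono ?_)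
    refine iUnion_subset fun j => ?_
    intro y hy
    refine mem_iUnion.mpr ⟨pe.symm (k, j), ?_⟩
    have : pe (pe.symm (k, j)) = (k, j) := pe.apply_symm_apply _
    rw [hc]; simp only [this]; exact hy
  refine le_trans (content_le_csum hcover) ?_
  have hsum : csum n δ c = ∑' q : ℕ × ℕ, ENNReal.ofReal (((2:ℝ) ^ (cc q.1 q.2).1) ^ δ) := by
    rw [csum]
    exact Equiv.tsum_eq pe (fun q : ℕ × ℕ => ENNReal.ofReal (((2:ℝ) ^ (cc q.1 q.2).1) ^ δ))
  rw [hsum,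
    ENNReal.tsum_prod (f := fun k j => ENNReal.ofReal (((2:ℝ) ^ (cc k j).1) ^ δ))]
  calc (∑' k, ∑' j, ENNReal.ofReal (((2:ℝ) ^ (cc k j).1) ^ δ))
      ≤ ∑' k : ℕ, (η : ℝ≥0∞) * 2⁻¹ ^ (k+1) := ENNReal.tsum_le_tsum fun k => (hsumcc k).le
    _ = (η : ℝ≥0∞) * ∑' k : ℕ, 2⁻¹ ^ (k+1) := by rw [ENNReal.tsum_mul_left]
    _ ≤ (η : ℝ≥0∞) * 1 := by
        apply mul_le_mul_right ?_ _
        have : (∑' k : ℕ, (2⁻¹ : ℝ≥0∞) ^ (k+1)) = 2⁻¹ * ∑' k : ℕ, 2⁻¹ ^ k := by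
          rw [← ENNReal.tsum_mul_left]
          apply tsum_congr; intro k; rw [pow_succ, mul_comm]
        rw [this, ENNReal.tsum_geometric, ENNReal.one_sub_inv_two]
        exact le_of_eq (ENNReal.mul_inv_cancel (by norm_num) (by norm_num))
    _ = (η : ℝ≥0∞) := mul_one _

/-! Submodular chain lemmas -/

def Lv (Ω : Set (En n)) (u : En n → ℕ) (k : ℕ) : Set (En n) := {x | x ∈ Ω ∧ k ≤ u x}

section Chain

variable {H : Set (En n) → ℝ≥0∞} {Ω : Set (En n)}
variable (Hmono : ∀ {A B : Set (En n)}, A ⊆ B → H A ≤ H B)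
variable (Hsub : ∀ A B : Set (En n), H (A ∪ B) + H (A ∩ B) ≤ H A + H B)
variable (Hempty : H ∅ = 0)

include Hmono Hsub in
lemma oneLevel (u w : En n → ℕ) (hw : ∀ x, w x ≤ 1) :
    (∑' k : ℕ, H (Lv Ω (fun x => u x + w x) (k+1)))
      ≤ (∑' k : ℕ, H (Lv Ω u (k+1))) + H (Lv Ω w 1) := by
  have key : ∀ K : ℕ,
      (∑ k ∈ Finset.range K, H (Lv Ω (fun x => u x + w x) (k+1)))
        + H (Lv Ω u K ∩ Lv Ω w 1)
      ≤ (∑ k ∈ Finset.range K, H (Lv Ω u (k+1))) + H (Lv Ω w 1) := by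
    intro K
    induction K with
    | zero =>
      simp only [Finset.range_zero, Finset.sum_empty, zero_add]
      exact Hmono inter_subset_right
    | succ K ih =>
      have hset : Lv Ω (fun x => u x + w x) (K+1)
          = Lv Ω u (K+1) ∪ (Lv Ω u K ∩ Lv Ω w 1) := by
        ext x
        simp only [Lv, mem_setOf_eq, mem_union, mem_inter_iff]
        constructor
        · rintro ⟨hx, hk⟩
          have := hw x
          by_cases hu : K + 1 ≤ u x
          · exact Or.inl ⟨hx, hu⟩
          · exact Or.inr ⟨⟨hx, by omega⟩, ⟨hx, by omega⟩⟩
        · rintro (⟨hx, hk⟩ | ⟨⟨hx, hk⟩, ⟨_, hw1⟩⟩)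
          · exact ⟨hx, by omega⟩
          · exact ⟨hx, by omega⟩
      have hset2 : Lv Ω u (K+1) ∩ (Lv Ω u K ∩ Lv Ω w 1)
          = Lv Ω u (K+1) ∩ Lv Ω w 1 := by
        ext x
        simp only [Lv, mem_setOf_eq, mem_inter_iff]
        constructor
        · rintro ⟨h1, _, h3⟩; exact ⟨h1, h3⟩
        · rintro ⟨h1, h3⟩; exact ⟨h1, ⟨⟨h1.1, by omega⟩, h3⟩⟩
      have hsub := Hsub (Lv Ω u (K+1)) (Lv Ω u K ∩ Lv Ω w 1)
      rw [← hset, hset2] at hsub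
      calc (∑ k ∈ Finset.range (K+1), H (Lv Ω (fun x => u x + w x) (k+1)))
            + H (Lv Ω u (K+1) ∩ Lv Ω w 1)
          = (∑ k ∈ Finset.range K, H (Lv Ω (fun x => u x + w x) (k+1)))
            + (H (Lv Ω (fun x => u x + w x) (K+1)) + H (Lv Ω u (K+1) ∩ Lv Ω w 1)) := by
            rw [Finset.sum_range_succ]; ring
        _ ≤ (∑ k ∈ Finset.range K, H (Lv Ω (fun x => u x + w x) (k+1)))
            + (H (Lv Ω u (K+1)) + H (Lv Ω u K ∩ Lv Ω w 1)) := add_le_add le_rfl hsub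
        _ = ((∑ k ∈ Finset.range K, H (Lv Ω (fun x => u x + w x) (k+1)))
            + H (Lv Ω u K ∩ Lv Ω w 1)) + H (Lv Ω u (K+1)) := by ring
        _ ≤ ((∑ k ∈ Finset.range K, H (Lv Ω u (k+1))) + H (Lv Ω w 1))
            + H (Lv Ω u (K+1)) := add_le_add ih le_rfl
        _ = (∑ k ∈ Finset.range (K+1), H (Lv Ω u (k+1))) + H (Lv Ω w 1) := by
            rw [Finset.sum_range_succ]; ring
  rw [ENNReal.tsum_eq_iSup_sum]
  refine iSup_le fun s => ?_
  obtain ⟨K, hK⟩ := s.exists_nat_subset_range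
  calc (∑ k ∈ s, H (Lv Ω (fun x => u x + w x) (k+1)))
      ≤ ∑ k ∈ Finset.range K, H (Lv Ω (fun x => u x + w x) (k+1)) :=
        Finset.sum_le_sum_of_subset hK
    _ ≤ (∑ k ∈ Finset.range K, H (Lv Ω u (k+1))) + H (Lv Ω w 1) :=
        le_trans le_self_add (by
          calc (∑ k ∈ Finset.range K, H (Lv Ω (fun x => u x + w x) (k+1)))
                + H (Lv Ω u K ∩ Lv Ω w 1)
              ≤ _ := key K)
    _ ≤ (∑' k : ℕ, H (Lv Ω u (k+1))) + H (Lv Ω w 1) :=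
        add_le_add (ENNReal.sum_le_tsum _) le_rfl

include Hmono Hsub Hempty in
lemma convadd (M : ℕ) : ∀ u v : En n → ℕ, (∀ x, v x ≤ M) →
    (∑' k : ℕ, H (Lv Ω (fun x => u x + v x) (k+1)))
      ≤ (∑' k : ℕ, H (Lv Ω u (k+1))) + ∑' k : ℕ, H (Lv Ω v (k+1)) := by
  induction M with
  | zero =>
    intro u v hv
    have : ∀ k : ℕ, Lv Ω (fun x => u x + v x) (k+1) = Lv Ω u (k+1) := by
      intro k; ext x
      simp only [Lv, mem_setOf_eq]
      have := hv x
      constructor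
      · rintro ⟨h1, h2⟩; exact ⟨h1, by omega⟩
      · rintro ⟨h1, h2⟩; exact ⟨h1, by omega⟩
    rw [tsum_congr fun k => congrArg H (this k)]
    exact le_self_add
  | succ M ih =>
    intro u v hv
    set v' : En n → ℕ := fun x => min (v x) M with hv'_def
    set w : En n → ℕ := fun x => v x - min (v x) M with hw_def
    have hw1 : ∀ x, w x ≤ 1 := fun x => by
      have := hv x; simp only [hw_def]; omega
    have hvsplit : ∀ x, v x = v' x + w x := fun x => by
      simp only [hv'_def, hw_def]; omega
    have h1 : (∑' k : ℕ, H (Lv Ω (fun x => u x + v x) (k+1)))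
        = ∑' k : ℕ, H (Lv Ω (fun x => (u x + v' x) + w x) (k+1)) := by
      apply tsum_congr; intro k; congr 1; ext x
      simp only [Lv, mem_setOf_eq]
      rw [hvsplit x]; constructor
      · rintro ⟨a, b⟩; exact ⟨a, by omega⟩
      · rintro ⟨a, b⟩; exact ⟨a, by omega⟩
    rw [h1]
    calc (∑' k : ℕ, H (Lv Ω (fun x => (u x + v' x) + w x) (k+1)))
        ≤ (∑' k : ℕ, H (Lv Ω (fun x => u x + v' x) (k+1))) + H (Lv Ω w 1) :=
          oneLevel Hmono Hsub _ w hw1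
      _ ≤ ((∑' k : ℕ, H (Lv Ω u (k+1))) + ∑' k : ℕ, H (Lv Ω v' (k+1))) + H (Lv Ω w 1) :=
          add_le_add (ih u v' fun x => by simp [hv'_def]) le_rfl
      _ = (∑' k : ℕ, H (Lv Ω u (k+1))) + ((∑' k : ℕ, H (Lv Ω v' (k+1))) + H (Lv Ω w 1)) := by
          ring
      _ ≤ (∑' k : ℕ, H (Lv Ω u (k+1))) + ∑' k : ℕ, H (Lv Ω v (k+1)) := by
          refine add_le_add le_rfl ?_
          have hz : ∀ k : ℕ, M ≤ k → H (Lv Ω v' (k+1)) = 0 := by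
            intro k hk
            have : Lv Ω v' (k+1) = ∅ := by
              ext x; simp only [Lv, mem_setOf_eq, mem_empty_iff_false, iff_false]
              rintro ⟨_, h2⟩
              simp only [hv'_def] at h2; omega
            rw [this, Hempty]
          have hts : (∑' k : ℕ, H (Lv Ω v' (k+1)))
              = ∑ k ∈ Finset.range M, H (Lv Ω v' (k+1)) := by
            apply tsum_eq_sum
            intro k hk
            exact hz k (by simpa [Finset.mem_range, not_lt] using hk)
          have heqs : ∀ k < M, Lv Ω v' (k+1) = Lv Ω v (k+1) := by
            intro k hk; ext x
            simp only [Lv, mem_setOf_eq, hv'_def]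
            constructor
            · rintro ⟨a, b⟩; exact ⟨a, by omega⟩
            · rintro ⟨a, b⟩; exact ⟨a, by omega⟩
          have hW : Lv Ω w 1 = Lv Ω v (M+1) := by
            ext x; simp only [Lv, mem_setOf_eq, hw_def]
            constructor
            · rintro ⟨a, b⟩; exact ⟨a, by omega⟩
            · rintro ⟨a, b⟩; exact ⟨a, by omega⟩
          rw [hts, hW]
          have : (∑ k ∈ Finset.range M, H (Lv Ω v' (k+1)))
              = ∑ k ∈ Finset.range M, H (Lv Ω v (k+1)) :=
            Finset.sum_congr rfl fun k hk => congrArg H (heqs k (Finset.mem_range.mp hk))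
          rw [this]
          calc (∑ k ∈ Finset.range M, H (Lv Ω v (k+1))) + H (Lv Ω v (M+1))
              = ∑ k ∈ Finset.range (M+1), H (Lv Ω v (k+1)) := by
                rw [Finset.sum_range_succ]
            _ ≤ ∑' k : ℕ, H (Lv Ω v (k+1)) := ENNReal.sum_le_tsum _

include Hmono Hsub Hempty in
lemma convadd' (u v : En n → ℕ) :
    (∑' k : ℕ, H (Lv Ω (fun x => u x + v x) (k+1)))
      ≤ (∑' k : ℕ, H (Lv Ω u (k+1))) + ∑' k : ℕ, H (Lv Ω v (k+1)) := by
  rw [ENNReal.tsum_eq_iSup_sum]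
  refine iSup_le fun s => ?_
  obtain ⟨K, hK⟩ := s.exists_nat_subset_range
  set u' : En n → ℕ := fun x => min (u x) K with hu'
  set v' : En n → ℕ := fun x => min (v x) K with hv'
  calc (∑ k ∈ s, H (Lv Ω (fun x => u x + v x) (k+1)))
      ≤ ∑ k ∈ Finset.range K, H (Lv Ω (fun x => u x + v x) (k+1)) :=
        Finset.sum_le_sum_of_subset hK
    _ ≤ ∑ k ∈ Finset.range K, H (Lv Ω (fun x => u' x + v' x) (k+1)) := by
        refine Finset.sum_le_sum fun k hk => Hmono ?_
        have hkK : k < K := Finset.mem_range.mp hk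
        intro x hx
        have h1 := hx.1
        have h2 : k + 1 ≤ u x + v x := hx.2
        exact ⟨h1, by simp only [hu', hv']; omega⟩
    _ ≤ ∑' k : ℕ, H (Lv Ω (fun x => u' x + v' x) (k+1)) := ENNReal.sum_le_tsum _
    _ ≤ (∑' k : ℕ, H (Lv Ω u' (k+1))) + ∑' k : ℕ, H (Lv Ω v' (k+1)) :=
        convadd Hmono Hsub Hempty K u' v' (fun x => by simp [hv'])
    _ ≤ (∑' k : ℕ, H (Lv Ω u (k+1))) + ∑' k : ℕ, H (Lv Ω v (k+1)) := by
        refine add_le_add (ENNReal.tsum_le_tsum fun k => Hmono ?_)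
          (ENNReal.tsum_le_tsum fun k => Hmono ?_)
        · rintro x ⟨h1, h2⟩; exact ⟨h1, by simp only [hu'] at h2; omega⟩
        · rintro x ⟨h1, h2⟩; exact ⟨h1, by simp only [hv'] at h2; omega⟩

end Chain

lemma distrib_antitone (hδ0 : 0 < δ) (Ω : Set (En n)) (F : En n → ℝ≥0∞) :
    Antitone (fun t : ℝ => dyadicContent n δ {x | x ∈ Ω ∧ ENNReal.ofReal t < F x}) := by
  intro t₁ t₂ h
  apply content_mono
  rintro x ⟨hx, hlt⟩
  exact ⟨hx, lt_of_le_of_lt (ENNReal.ofReal_le_ofReal h) hlt⟩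

lemma iUnion_Ioc_eq_Ioi {ε : ℝ} (hε : 0 < ε) (c : ℕ) :
    (⋃ k : ℕ, Ioc (((k:ℝ)+c)*ε) (((k:ℝ)+c+1)*ε)) = Ioi ((c:ℝ)*ε) := by
  ext t
  simp only [mem_iUnion, mem_Ioc, mem_Ioi]
  constructor
  · rintro ⟨k, h1, _⟩
    have hk0 : (0:ℝ) ≤ (k:ℝ) := Nat.cast_nonneg k
    nlinarith
  · intro ht
    have htpos : 0 < t := lt_of_le_of_lt (by positivity) ht
    have hdiv : (c:ℝ) < t / ε := (lt_div_iff₀ hε).mpr (by linarith)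
    set q := ⌈t/ε⌉₊ with hq
    have hcq : c + 1 ≤ q := Nat.lt_ceil.mpr hdiv
    refine ⟨q - (c+1), ?_, ?_⟩
    · have hcast : ((q - (c+1) : ℕ) : ℝ) = (q:ℝ) - c - 1 := by
        rw [Nat.cast_sub hcq]; push_cast; ring
      rw [hcast]
      have : (q : ℝ) < t/ε + 1 := Nat.ceil_lt_add_one (by positivity)
      have h2 : ((q:ℝ) - 1) * ε < t := by
        rw [← lt_div_iff₀ hε]; linarith
      nlinarith [h2]
    · have hcast : ((q - (c+1) : ℕ) : ℝ) = (q:ℝ) - c - 1 := by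
        rw [Nat.cast_sub hcq]; push_cast; ring
      rw [hcast]
      have : t/ε ≤ (q:ℝ) := Nat.le_ceil _
      have h2 : t ≤ (q:ℝ) * ε := by
        rw [← div_le_iff₀ hε]; linarith
      nlinarith [h2]

lemma Ioc_pieces_disjoint {ε : ℝ} (hε : 0 ≤ ε) (c : ℕ) :
    Pairwise (Function.onFun Disjoint fun k : ℕ => Ioc (((k:ℝ)+c)*ε) (((k:ℝ)+c+1)*ε)) := by
  intro i j hij
  rw [Function.onFun, Set.Ioc_disjoint_Ioc]
  rcases lt_or_gt_of_ne hij with h | h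
  · have hij' : (i:ℝ) + 1 ≤ (j:ℝ) := by exact_mod_cast h
    calc min (((i:ℝ)+c+1)*ε) (((j:ℝ)+c+1)*ε) ≤ ((i:ℝ)+c+1)*ε := min_le_left _ _
      _ ≤ ((j:ℝ)+c)*ε := by nlinarith
      _ ≤ max (((i:ℝ)+c)*ε) (((j:ℝ)+c)*ε) := le_max_right _ _
  · have hij' : (j:ℝ) + 1 ≤ (i:ℝ) := by exact_mod_cast h
    calc min (((i:ℝ)+c+1)*ε) (((j:ℝ)+c+1)*ε) ≤ ((j:ℝ)+c+1)*ε := min_le_right _ _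
      _ ≤ ((i:ℝ)+c)*ε := by nlinarith
      _ ≤ max (((i:ℝ)+c)*ε) (((j:ℝ)+c)*ε) := le_max_left _ _

lemma choquet_triangle (hn : 1 ≤ n) (hδ0 : 0 < δ) (Ω : Set (En n)) (f g : En n → ℝ) :
    choquetIntegralAbs n δ Ω (fun x => f x + g x) ≤
      choquetIntegralAbs n δ Ω f + choquetIntegralAbs n δ Ω g := by
  classical
  set H : Set (En n) → ℝ≥0∞ := dyadicContent n δ with hH
  set DA : ℝ → ℝ≥0∞ :=
    fun t => H {x | x ∈ Ω ∧ ENNReal.ofReal t < ENNReal.ofReal |f x + g x|} with hDA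
  set DB : ℝ → ℝ≥0∞ :=
    fun t => H {x | x ∈ Ω ∧ ENNReal.ofReal t < ENNReal.ofReal |f x|} with hDB
  set DC : ℝ → ℝ≥0∞ :=
    fun t => H {x | x ∈ Ω ∧ ENNReal.ofReal t < ENNReal.ofReal |g x|} with hDC
  have hDAanti : Antitone DA := distrib_antitone hδ0 Ω _
  have hDBanti : Antitone DB := distrib_antitone hδ0 Ω _
  have hDCanti : Antitone DC := distrib_antitone hδ0 Ω _
  have hgoal_eq : choquetIntegralAbs n δ Ω (fun x => f x + g x) = ∫⁻ t in Ioi (0:ℝ), DA t := rfl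
  have hB_eq : choquetIntegralAbs n δ Ω f = ∫⁻ t in Ioi (0:ℝ), DB t := rfl
  have hC_eq : choquetIntegralAbs n δ Ω g = ∫⁻ t in Ioi (0:ℝ), DC t := rfl
  rw [hgoal_eq, hB_eq, hC_eq]
  -- the per-mesh estimate
  have main : ∀ ε : ℝ, 0 < ε → ∫⁻ t in Ioi (((2:ℕ):ℝ)*ε), DA t
      ≤ (∫⁻ t in Ioi (((0:ℕ):ℝ)*ε), DB t) + ∫⁻ t in Ioi (((0:ℕ):ℝ)*ε), DC t := by
    intro ε hε
    set u : En n → ℕ := fun x => ⌈|f x|/ε⌉₊ - 1 with hu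
    set v : En n → ℕ := fun x => ⌈|g x|/ε⌉₊ - 1 with hv
    have Hmono : ∀ {A B : Set (En n)}, A ⊆ B → H A ≤ H B := fun h => content_mono h
    have Hsub : ∀ A B : Set (En n), H (A ∪ B) + H (A ∩ B) ≤ H A + H B :=
      fun A B => content_strong_subadd hn hδ0 A B
    have Hempty : H ∅ = 0 := content_empty hδ0
    -- level sets of u are the distribution sets of f
    have hLu : ∀ k : ℕ, Lv Ω u (k+1)
        = {x | x ∈ Ω ∧ ENNReal.ofReal (((k:ℝ)+1)*ε) < ENNReal.ofReal |f x|} := by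
      intro k; ext x
      simp only [Lv, mem_setOf_eq]
      have h1 : (ENNReal.ofReal (((k:ℝ)+1)*ε) < ENNReal.ofReal |f x|)
          ↔ ((k:ℝ)+1)*ε < |f x| :=
        ENNReal.ofReal_lt_ofReal_iff_of_nonneg (by positivity)
      have h2 : (((k:ℝ)+1)*ε < |f x|) ↔ ((k:ℝ)+1) < |f x|/ε := by
        rw [lt_div_iff₀ hε]
      have h3 : (((k:ℝ)+1) < |f x|/ε) ↔ (k+1) < ⌈|f x|/ε⌉₊ := by
        rw [Nat.lt_ceil]; push_cast; rfl
      constructor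
      · rintro ⟨hx, hk⟩
        refine ⟨hx, h1.mpr (h2.mpr (h3.mpr ?_))⟩
        have : k + 1 ≤ ⌈|f x|/ε⌉₊ - 1 := hk
        omega
      · rintro ⟨hx, hk⟩
        have := h3.mp (h2.mp (h1.mp hk))
        exact ⟨hx, by simp only [hu]; omega⟩
    have hLv : ∀ k : ℕ, Lv Ω v (k+1)
        = {x | x ∈ Ω ∧ ENNReal.ofReal (((k:ℝ)+1)*ε) < ENNReal.ofReal |g x|} := by
      intro k; ext x
      simp only [Lv, mem_setOf_eq]
      have h1 : (ENNReal.ofReal (((k:ℝ)+1)*ε) < ENNReal.ofReal |g x|)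
          ↔ ((k:ℝ)+1)*ε < |g x| :=
        ENNReal.ofReal_lt_ofReal_iff_of_nonneg (by positivity)
      have h2 : (((k:ℝ)+1)*ε < |g x|) ↔ ((k:ℝ)+1) < |g x|/ε := by
        rw [lt_div_iff₀ hε]
      have h3 : (((k:ℝ)+1) < |g x|/ε) ↔ (k+1) < ⌈|g x|/ε⌉₊ := by
        rw [Nat.lt_ceil]; push_cast; rfl
      constructor
      · rintro ⟨hx, hk⟩
        refine ⟨hx, h1.mpr (h2.mpr (h3.mpr ?_))⟩
        have : k + 1 ≤ ⌈|g x|/ε⌉₊ - 1 := hk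
        omega
      · rintro ⟨hx, hk⟩
        have := h3.mp (h2.mp (h1.mp hk))
        exact ⟨hx, by simp only [hv]; omega⟩
    -- key inclusion
    have hconv : ∀ k : ℕ,
        {x | x ∈ Ω ∧ ENNReal.ofReal (((k:ℝ)+2)*ε) < ENNReal.ofReal |f x + g x|}
          ⊆ Lv Ω (fun x => u x + v x) (k+1) := by
      intro k x hx
      obtain ⟨hxΩ, hlt⟩ := hx
      have h1 : ((k:ℝ)+2)*ε < |f x + g x| :=
        (ENNReal.ofReal_lt_ofReal_iff_of_nonneg (by positivity)).mp hlt
      have h2 : ((k:ℝ)+2)*ε < |f x| + |g x| := lt_of_lt_of_le h1 (abs_add_le _ _)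
      have h3 : ((k:ℝ)+2) < |f x|/ε + |g x|/ε := by
        rw [← add_div, lt_div_iff₀ hε]; linarith
      have h4 : ((k:ℝ)+2) < (⌈|f x|/ε⌉₊ : ℝ) + (⌈|g x|/ε⌉₊ : ℝ) :=
        lt_of_lt_of_le h3 (add_le_add (Nat.le_ceil _) (Nat.le_ceil _))
      have h5 : k + 2 < ⌈|f x|/ε⌉₊ + ⌈|g x|/ε⌉₊ := by exact_mod_cast h4
      refine ⟨hxΩ, ?_⟩
      show k + 1 ≤ u x + v x
      simp only [hu, hv]; omega
    -- step 1 : integral over (2ε, ∞) decomposes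
    have step1 : ∫⁻ t in Ioi (((2:ℕ):ℝ)*ε), DA t
        = ∑' k : ℕ, ∫⁻ t in Ioc (((k:ℝ)+((2:ℕ):ℝ))*ε) (((k:ℝ)+((2:ℕ):ℝ)+1)*ε), DA t := by
      rw [← iUnion_Ioc_eq_Ioi hε 2]
      exact lintegral_iUnion (fun k => measurableSet_Ioc) (Ioc_pieces_disjoint hε.le 2) DA
    have step2 : ∀ k : ℕ, ∫⁻ t in Ioc (((k:ℝ)+((2:ℕ):ℝ))*ε) (((k:ℝ)+((2:ℕ):ℝ)+1)*ε), DA t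
        ≤ H (Lv Ω (fun x => u x + v x) (k+1)) * ENNReal.ofReal ε := by
      intro k
      calc ∫⁻ t in Ioc (((k:ℝ)+((2:ℕ):ℝ))*ε) (((k:ℝ)+((2:ℕ):ℝ)+1)*ε), DA t
          ≤ ∫⁻ _ in Ioc (((k:ℝ)+((2:ℕ):ℝ))*ε) (((k:ℝ)+((2:ℕ):ℝ)+1)*ε), DA (((k:ℝ)+((2:ℕ):ℝ))*ε) :=
            setLIntegral_mono measurable_const (fun t ht => hDAanti ht.1.le)
        _ = DA (((k:ℝ)+((2:ℕ):ℝ))*ε) * ENNReal.ofReal ε := by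
            rw [setLIntegral_const, Real.volume_Ioc]
            congr 1; congr 1; ring
        _ ≤ H (Lv Ω (fun x => u x + v x) (k+1)) * ENNReal.ofReal ε := by
            apply mul_le_mul_left
            exact content_mono (hconv k)
    have step3 : (∑' k : ℕ, H (Lv Ω (fun x => u x + v x) (k+1)))
        ≤ (∑' k : ℕ, H (Lv Ω u (k+1))) + ∑' k : ℕ, H (Lv Ω v (k+1)) :=
      convadd' Hmono Hsub Hempty u v
    have step4 : ∀ k : ℕ, H (Lv Ω u (k+1)) * ENNReal.ofReal ε
        ≤ ∫⁻ t in Ioc (((k:ℝ)+((0:ℕ):ℝ))*ε) (((k:ℝ)+((0:ℕ):ℝ)+1)*ε), DB t := by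
      intro k
      have hval : H (Lv Ω u (k+1)) = DB (((k:ℝ)+((0:ℕ):ℝ)+1)*ε) := by
        rw [hLu k, hDB]
        norm_num
      rw [hval]
      calc DB (((k:ℝ)+((0:ℕ):ℝ)+1)*ε) * ENNReal.ofReal ε
          = ∫⁻ _ in Ioc (((k:ℝ)+((0:ℕ):ℝ))*ε) (((k:ℝ)+((0:ℕ):ℝ)+1)*ε), DB (((k:ℝ)+((0:ℕ):ℝ)+1)*ε) := by
            rw [setLIntegral_const, Real.volume_Ioc]
            congr 1; congr 1; ring
        _ ≤ ∫⁻ t in Ioc (((k:ℝ)+((0:ℕ):ℝ))*ε) (((k:ℝ)+((0:ℕ):ℝ)+1)*ε), DB t :=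
            setLIntegral_mono hDBanti.measurable (fun t ht => hDBanti ht.2)
    have step4' : ∀ k : ℕ, H (Lv Ω v (k+1)) * ENNReal.ofReal ε
        ≤ ∫⁻ t in Ioc (((k:ℝ)+((0:ℕ):ℝ))*ε) (((k:ℝ)+((0:ℕ):ℝ)+1)*ε), DC t := by
      intro k
      have hval : H (Lv Ω v (k+1)) = DC (((k:ℝ)+((0:ℕ):ℝ)+1)*ε) := by
        rw [hLv k, hDC]
        norm_num
      rw [hval]
      calc DC (((k:ℝ)+((0:ℕ):ℝ)+1)*ε) * ENNReal.ofReal ε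
          = ∫⁻ _ in Ioc (((k:ℝ)+((0:ℕ):ℝ))*ε) (((k:ℝ)+((0:ℕ):ℝ)+1)*ε), DC (((k:ℝ)+((0:ℕ):ℝ)+1)*ε) := by
            rw [setLIntegral_const, Real.volume_Ioc]
            congr 1; congr 1; ring
        _ ≤ ∫⁻ t in Ioc (((k:ℝ)+((0:ℕ):ℝ))*ε) (((k:ℝ)+((0:ℕ):ℝ)+1)*ε), DC t :=
            setLIntegral_mono hDCanti.measurable (fun t ht => hDCanti ht.2)
    have stepB : ∫⁻ t in Ioi (((0:ℕ):ℝ)*ε), DB t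
        = ∑' k : ℕ, ∫⁻ t in Ioc (((k:ℝ)+((0:ℕ):ℝ))*ε) (((k:ℝ)+((0:ℕ):ℝ)+1)*ε), DB t := by
      rw [← iUnion_Ioc_eq_Ioi hε 0]
      exact lintegral_iUnion (fun k => measurableSet_Ioc) (Ioc_pieces_disjoint hε.le 0) DB
    have stepC : ∫⁻ t in Ioi (((0:ℕ):ℝ)*ε), DC t
        = ∑' k : ℕ, ∫⁻ t in Ioc (((k:ℝ)+((0:ℕ):ℝ))*ε) (((k:ℝ)+((0:ℕ):ℝ)+1)*ε), DC t := by
      rw [← iUnion_Ioc_eq_Ioi hε 0]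
      exact lintegral_iUnion (fun k => measurableSet_Ioc) (Ioc_pieces_disjoint hε.le 0) DC
    calc ∫⁻ t in Ioi (((2:ℕ):ℝ)*ε), DA t
        = ∑' k : ℕ, ∫⁻ t in Ioc (((k:ℝ)+((2:ℕ):ℝ))*ε) (((k:ℝ)+((2:ℕ):ℝ)+1)*ε), DA t := step1
      _ ≤ ∑' k : ℕ, H (Lv Ω (fun x => u x + v x) (k+1)) * ENNReal.ofReal ε :=
          ENNReal.tsum_le_tsum step2
      _ = (∑' k : ℕ, H (Lv Ω (fun x => u x + v x) (k+1))) * ENNReal.ofReal ε :=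
          ENNReal.tsum_mul_right
      _ ≤ ((∑' k : ℕ, H (Lv Ω u (k+1))) + ∑' k : ℕ, H (Lv Ω v (k+1))) * ENNReal.ofReal ε :=
          mul_le_mul_left step3 _
      _ = (∑' k : ℕ, H (Lv Ω u (k+1)) * ENNReal.ofReal ε)
          + ∑' k : ℕ, H (Lv Ω v (k+1)) * ENNReal.ofReal ε := by
          rw [add_mul, ENNReal.tsum_mul_right, ENNReal.tsum_mul_right]
      _ ≤ (∑' k : ℕ, ∫⁻ t in Ioc (((k:ℝ)+((0:ℕ):ℝ))*ε) (((k:ℝ)+((0:ℕ):ℝ)+1)*ε), DB t)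
          + ∑' k : ℕ, ∫⁻ t in Ioc (((k:ℝ)+((0:ℕ):ℝ))*ε) (((k:ℝ)+((0:ℕ):ℝ)+1)*ε), DC t :=
          add_le_add (ENNReal.tsum_le_tsum step4) (ENNReal.tsum_le_tsum step4')
      _ = (∫⁻ t in Ioi (((0:ℕ):ℝ)*ε), DB t) + ∫⁻ t in Ioi (((0:ℕ):ℝ)*ε), DC t := by
          rw [stepB, stepC]
  -- now let ε → 0 along εₘ = 1/(m+1)
  have hzero : (((0:ℕ):ℝ)) = (0:ℝ) := by norm_num
  have main' : ∀ m : ℕ, ∫⁻ t in Ioi (((2:ℕ):ℝ)*(1/((m:ℝ)+1))), DA t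
      ≤ (∫⁻ t in Ioi (0:ℝ), DB t) + ∫⁻ t in Ioi (0:ℝ), DC t := by
    intro m
    have hε : (0:ℝ) < 1/((m:ℝ)+1) := by positivity
    have := main (1/((m:ℝ)+1)) hε
    rw [hzero, zero_mul] at this
    exact this
  -- supremum argument
  have hDAmeas : Measurable DA := hDAanti.measurable
  set Fm : ℕ → ℝ → ℝ≥0∞ :=
    fun m => (Ioi (((2:ℕ):ℝ)*(1/((m:ℝ)+1)))).indicator DA with hFm
  have hFmono : Monotone Fm := by
    intro m m' hmm t
    simp only [hFm]
    apply Set.indicator_le_indicator_of_subset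
    · apply Ioi_subset_Ioi
      have h1 : ((m:ℝ)+1) ≤ ((m':ℝ)+1) := by
        have : (m:ℝ) ≤ (m':ℝ) := by exact_mod_cast hmm
        linarith
      have h2 : (0:ℝ) < (m:ℝ)+1 := by positivity
      have h3 : (1:ℝ)/((m':ℝ)+1) ≤ 1/((m:ℝ)+1) := one_div_le_one_div_of_le h2 h1
      have h4 : ((2:ℕ):ℝ) = (2:ℝ) := by norm_num
      rw [h4]
      linarith
    · exact fun t => zero_le
  have hFsup : ∀ t : ℝ, (⨆ m, Fm m t) = (Ioi (0:ℝ)).indicator DA t := by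
    intro t
    by_cases ht : 0 < t
    · have hind : (Ioi (0:ℝ)).indicator DA t = DA t := by
        simp [Set.indicator_apply, mem_Ioi, ht]
      rw [hind]
      apply le_antisymm
      · refine iSup_le fun m => ?_
        simp only [hFm]
        by_cases h : t ∈ Ioi (((2:ℕ):ℝ)*(1/((m:ℝ)+1)))
        · simp only [Set.indicator_apply, if_pos h]; exact le_rfl
        · simp only [Set.indicator_apply, if_neg h]; exact zero_le
      · obtain ⟨m, hm⟩ := exists_nat_gt (2/t)
        refine le_iSup_of_le m ?_
        simp only [hFm]
        have hm1 : (0:ℝ) < (m:ℝ)+1 := by positivity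
        have h2 : 2/t < (m:ℝ)+1 := by linarith [hm]
        have h3 : 2 < t * ((m:ℝ)+1) := by
          rw [div_lt_iff₀ ht] at h2; linarith
        have hmem : t ∈ Ioi (((2:ℕ):ℝ)*(1/((m:ℝ)+1))) := by
          rw [mem_Ioi]
          have h4 : ((2:ℕ):ℝ) = (2:ℝ) := by norm_num
          rw [h4, mul_one_div, div_lt_iff₀ hm1]
          linarith
        simp only [Set.indicator_apply, if_pos hmem]
        exact le_rfl
    · push_neg at ht
      have hind : (Ioi (0:ℝ)).indicator DA t = 0 := by
        simp only [Set.indicator_apply, mem_Ioi, if_neg (not_lt.mpr ht)]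
      rw [hind]
      refine le_antisymm (iSup_le fun m => ?_) zero_le
      simp only [hFm]
      have hnm : t ∉ Ioi (((2:ℕ):ℝ)*(1/((m:ℝ)+1))) := by
        rw [mem_Ioi]
        intro hmem
        have h0 : (0:ℝ) < ((2:ℕ):ℝ)*(1/((m:ℝ)+1)) := by positivity
        linarith
      simp only [Set.indicator_apply, if_neg hnm]
      exact le_rfl
  calc ∫⁻ t in Ioi (0:ℝ), DA t = ∫⁻ t, (Ioi (0:ℝ)).indicator DA t :=
        (lintegral_indicator measurableSet_Ioi DA).symm
    _ = ∫⁻ t, ⨆ m, Fm m t := by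
        apply lintegral_congr; intro t; rw [hFsup t]
    _ = ⨆ m, ∫⁻ t, Fm m t :=
        lintegral_iSup (fun m => hDAmeas.indicator measurableSet_Ioi) hFmono
    _ ≤ (∫⁻ t in Ioi (0:ℝ), DB t) + ∫⁻ t in Ioi (0:ℝ), DC t := by
        refine iSup_le fun m => ?_
        rw [hFm]
        simp only
        rw [lintegral_indicator measurableSet_Ioi DA]
        exact main' m

lemma choquet_smul (hδ0 : 0 < δ) (Ω : Set (En n)) (f : En n → ℝ) (a : ℝ) :
    choquetIntegralAbs n δ Ω (fun x => a * f x)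
      = ENNReal.ofReal |a| * choquetIntegralAbs n δ Ω f := by
  classical
  by_cases ha : a = 0
  · subst ha
    have h0 : ∀ t : ℝ, dyadicContent n δ
        {x | x ∈ Ω ∧ ENNReal.ofReal t < ENNReal.ofReal |0 * f x|} = 0 := by
      intro t
      have : {x | x ∈ Ω ∧ ENNReal.ofReal t < ENNReal.ofReal |0 * f x|} = (∅ : Set (En n)) := by
        ext x; simp
      rw [this]; exact content_empty hδ0
    have hL : choquetIntegralAbs n δ Ω (fun x => 0 * f x) = 0 := by
      show (∫⁻ t in Ioi (0:ℝ), dyadicContent n δ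
        {x | x ∈ Ω ∧ ENNReal.ofReal t < ENNReal.ofReal |0 * f x|}) = 0
      simp only [h0]
      simp
    rw [hL]; simp
  · have habs : 0 < |a| := abs_pos.mpr ha
    set c : ℝ := |a|⁻¹ with hc
    have hcpos : 0 < c := by rw [hc]; positivity
    have hc0 : c ≠ 0 := hcpos.ne'
    set DB : ℝ → ℝ≥0∞ :=
      fun t => dyadicContent n δ {x | x ∈ Ω ∧ ENNReal.ofReal t < ENNReal.ofReal |f x|} with hDB
    have hDBanti : Antitone DB := distrib_antitone hδ0 Ω _
    have hDBmeas : Measurable DB := hDBanti.measurable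
    set G : ℝ → ℝ≥0∞ := (Ioi (0:ℝ)).indicator DB with hG
    have hGmeas : Measurable G := hDBmeas.indicator measurableSet_Ioi
    have hpt : ∀ t : ℝ, (Ioi (0:ℝ)).indicator
        (fun s => dyadicContent n δ
          {x | x ∈ Ω ∧ ENNReal.ofReal s < ENNReal.ofReal |a * f x|}) t = G (c * t) := by
      intro t
      by_cases ht : 0 < t
      · have hct : 0 < c * t := by positivity
        have hseteq : {x | x ∈ Ω ∧ ENNReal.ofReal t < ENNReal.ofReal |a * f x|}
            = {x | x ∈ Ω ∧ ENNReal.ofReal (c*t) < ENNReal.ofReal |f x|} := by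
          ext x
          simp only [mem_setOf_eq]
          constructor
          · rintro ⟨h1, h2⟩
            refine ⟨h1, ?_⟩
            have h3 : t < |a * f x| := (ENNReal.ofReal_lt_ofReal_iff_of_nonneg ht.le).mp h2
            rw [abs_mul] at h3
            have h4 : c * t < |f x| := by
              rw [hc, inv_mul_eq_div, div_lt_iff₀ habs, mul_comm]
              exact h3
            exact (ENNReal.ofReal_lt_ofReal_iff_of_nonneg hct.le).mpr h4
          · rintro ⟨h1, h2⟩
            refine ⟨h1, ?_⟩
            have h3 : c * t < |f x| := (ENNReal.ofReal_lt_ofReal_iff_of_nonneg hct.le).mp h2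
            have h4 : t < |a * f x| := by
              rw [abs_mul]
              rw [hc, inv_mul_eq_div, div_lt_iff₀ habs, mul_comm] at h3
              exact h3
            exact (ENNReal.ofReal_lt_ofReal_iff_of_nonneg ht.le).mpr h4
        rw [Set.indicator_apply, if_pos (mem_Ioi.mpr ht), hseteq, hG,
          Set.indicator_apply, if_pos (mem_Ioi.mpr hct)]
      · have hct : ¬ (0 < c * t) := by
          intro h
          exact absurd (mul_nonpos_of_nonneg_of_nonpos hcpos.le (not_lt.mp ht)) (not_le.mpr h)
        rw [Set.indicator_apply, if_neg (fun hmem => ht (mem_Ioi.mp hmem)), hG,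
          Set.indicator_apply, if_neg (fun hmem => hct (mem_Ioi.mp hmem))]
    calc choquetIntegralAbs n δ Ω (fun x => a * f x)
        = ∫⁻ t, (Ioi (0:ℝ)).indicator
            (fun s => dyadicContent n δ
              {x | x ∈ Ω ∧ ENNReal.ofReal s < ENNReal.ofReal |a * f x|}) t :=
          (lintegral_indicator measurableSet_Ioi _).symm
      _ = ∫⁻ t, G (c * t) := lintegral_congr hpt
      _ = ∫⁻ y, G y ∂(Measure.map (fun t => c * t) volume) :=
          (lintegral_map hGmeas (measurable_const_mul c)).symm
      _ = ENNReal.ofReal |c⁻¹| * ∫⁻ y, G y := by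
          rw [Real.map_volume_mul_left hc0, lintegral_smul_measure, smul_eq_mul]
      _ = ENNReal.ofReal |a| * choquetIntegralAbs n δ Ω f := by
          rw [hc, inv_inv, abs_abs]
          congr 1
          rw [hG, lintegral_indicator measurableSet_Ioi]
          rfl

lemma choquet_zero_iff (hδ0 : 0 < δ) (Ω : Set (En n)) (f : En n → ℝ) :
    choquetIntegralAbs n δ Ω f = 0 ↔
      ∃ E : Set (En n), dyadicContent n δ E = 0 ∧ ∀ x ∈ Ω, x ∉ E → f x = 0 := by
  classical
  set DB : ℝ → ℝ≥0∞ :=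
    fun t => dyadicContent n δ {x | x ∈ Ω ∧ ENNReal.ofReal t < ENNReal.ofReal |f x|} with hDB
  have hDBanti : Antitone DB := distrib_antitone hδ0 Ω _
  have hDBmeas : Measurable DB := hDBanti.measurable
  constructor
  · intro h
    have h' : ∫⁻ t in Ioi (0:ℝ), DB t = 0 := h
    have hae : ∀ᵐ t ∂(volume.restrict (Ioi (0:ℝ))), DB t = 0 :=
      (lintegral_eq_zero_iff hDBmeas).mp h'
    have hmeasset : MeasurableSet {t : ℝ | ¬ DB t = 0} :=
      hDBmeas (measurableSet_singleton 0).compl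
    have hnull : volume.restrict (Ioi (0:ℝ)) {t | ¬ DB t = 0} = 0 := ae_iff.mp hae
    have hnull' : volume ({t | ¬ DB t = 0} ∩ Ioi (0:ℝ)) = 0 := by
      rw [← Measure.restrict_apply hmeasset]
      exact hnull
    have hts : ∀ k : ℕ, ∃ t : ℝ, t ∈ Ioo (0:ℝ) (1/((k:ℝ)+1)) ∧ DB t = 0 := by
      intro k
      by_contra hcon
      push_neg at hcon
      have hsub : Ioo (0:ℝ) (1/((k:ℝ)+1)) ⊆ {t | ¬ DB t = 0} ∩ Ioi (0:ℝ) := by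
        intro t ht
        exact ⟨hcon t ht, ht.1⟩
      have hle : volume (Ioo (0:ℝ) (1/((k:ℝ)+1))) ≤ volume ({t | ¬ DB t = 0} ∩ Ioi (0:ℝ)) :=
        measure_mono hsub
      rw [hnull'] at hle
      have hvol : volume (Ioo (0:ℝ) (1/((k:ℝ)+1))) = 0 := le_antisymm hle zero_le
      rw [Real.volume_Ioo] at hvol
      have hpos : (0:ℝ) < 1/((k:ℝ)+1) := by positivity
      rw [ENNReal.ofReal_eq_zero] at hvol
      linarith
    choose ts hts1 hts2 using hts
    refine ⟨⋃ k : ℕ, {x | x ∈ Ω ∧ ENNReal.ofReal (ts k) < ENNReal.ofReal |f x|}, ?_, ?_⟩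
    · exact content_iUnion_null hδ0 (fun k => hts2 k)
    · intro x hxΩ hxE
      by_contra hfx
      have habs : 0 < |f x| := abs_pos.mpr hfx
      obtain ⟨k, hk⟩ := exists_nat_one_div_lt habs
      apply hxE
      refine mem_iUnion.mpr ⟨k, hxΩ, ?_⟩
      have h1 : ts k < |f x| := lt_trans (hts1 k).2 hk
      exact (ENNReal.ofReal_lt_ofReal_iff_of_nonneg (hts1 k).1.le).mpr h1
  · rintro ⟨E, hE0, hEf⟩
    have hzero : ∀ t ∈ Ioi (0:ℝ), DB t = 0 := by
      intro t ht
      have hsub : {x | x ∈ Ω ∧ ENNReal.ofReal t < ENNReal.ofReal |f x|} ⊆ E := by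
        rintro x ⟨hxΩ, hlt⟩
        by_contra hxE
        rw [hEf x hxΩ hxE] at hlt
        simp at hlt
      have hmono := content_mono (δ := δ) hsub
      rw [hE0] at hmono
      exact le_antisymm hmono zero_le
    show (∫⁻ t in Ioi (0:ℝ), DB t) = 0
    refine le_antisymm ?_ zero_le
    calc ∫⁻ t in Ioi (0:ℝ), DB t ≤ ∫⁻ _ in Ioi (0:ℝ), 0 :=
        setLIntegral_mono measurable_const (fun t ht => le_of_eq (hzero t ht))
      _ = 0 := lintegral_zero

end DyAux

/-- `‖f‖₁ = ∫_Ω |f| dH̃^δ_∞` has the properties of a norm on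
`nL¹(Ω, H̃^δ_∞)` modulo `H̃^δ_∞`-a.e. equality: vanishing iff `f = 0` a.e.,
absolute homogeneity and the triangle inequality. -/
theorem nL1_norm_properties (n : ℕ) (hn : 1 ≤ n) (Ω : Set (En n))
    (δ : ℝ) (hδ0 : 0 < δ) (hδn : δ ≤ n) (f g : En n → ℝ)
    (hf : choquetIntegralAbs n δ Ω f < ⊤) (hg : choquetIntegralAbs n δ Ω g < ⊤) :
    (choquetIntegralAbs n δ Ω f = 0 ↔
      ∃ E : Set (En n), dyadicContent n δ E = 0 ∧ ∀ x ∈ Ω, x ∉ E → f x = 0) ∧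
    (∀ a : ℝ, choquetIntegralAbs n δ Ω (fun x => a * f x) =
      ENNReal.ofReal |a| * choquetIntegralAbs n δ Ω f) ∧
    choquetIntegralAbs n δ Ω (fun x => f x + g x) ≤
      choquetIntegralAbs n δ Ω f + choquetIntegralAbs n δ Ω g := by
  exact ⟨DyAux.choquet_zero_iff hδ0 Ω f, fun a => DyAux.choquet_smul hδ0 Ω f a,
    DyAux.choquet_triangle hn hδ0 Ω f g⟩
end
end

section
/- Let n ≥ 1 and δ ∈ (0, n], and let f ∈ nL¹(ℝⁿ, H̃^δ_∞). If (f_i)_{i≥1} is a sequence of functions in nL¹(ℝⁿ, H̃^δ_∞) such that ∫_{ℝⁿ} |f − f_i| dH̃^δ_∞ → 0 as i → ∞, then there exists a subsequence (f_{i_j}) which converges to f pointwise H̃^δ_∞-almost everywhere on ℝⁿ. -/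
open MeasureTheory Set Metric Filter Topology
open scoped ENNReal

noncomputable section

lemma dyadicContent_mono {n : ℕ} {δ : ℝ} {E F : Set (En n)} (h : E ⊆ F) :
    dyadicContent n δ E ≤ dyadicContent n δ F := by
  refine le_iInf₂ fun c hc => ?_
  exact iInf₂_le c (h.trans hc)

lemma dyadicContent_iUnion_le (n : ℕ) (δ : ℝ) (A : ℕ → Set (En n)) :
    dyadicContent n δ (⋃ i, A i) ≤ ∑' i, dyadicContent n δ (A i) := by
  set S := ∑' i, dyadicContent n δ (A i) with hS
  refine ENNReal.le_of_forall_pos_le_add fun ε hε hlt => ?_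
  obtain ⟨η, hη, hηsum⟩ := ENNReal.exists_pos_sum_of_countable
    (ENNReal.coe_ne_zero.mpr hε.ne') ℕ
  have key : ∀ i : ℕ, ∃ c : ℕ → ℤ × (Fin n → ℤ),
      A i ⊆ interior (⋃ j, dyadicCube n (c j).1 (c j).2) ∧
      ∑' j, ENNReal.ofReal (((2:ℝ) ^ (c j).1) ^ δ)
        ≤ dyadicContent n δ (A i) + η i := by
    intro i
    have hfin : dyadicContent n δ (A i) ≠ ⊤ :=
      ne_top_of_le_ne_top hlt.ne (le_trans (ENNReal.le_tsum i) le_rfl)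
    have h1 : dyadicContent n δ (A i) < dyadicContent n δ (A i) + η i :=
      ENNReal.lt_add_right hfin (by exact_mod_cast (hη i).ne')
    set t := dyadicContent n δ (A i) + (η i : ℝ≥0∞) with ht
    rw [dyadicContent] at h1
    simp only [iInf_lt_iff] at h1
    obtain ⟨c, hc, hsum⟩ := h1
    exact ⟨c, hc, hsum.le⟩
  choose c hcov hsum using key
  set e : ℕ ≃ ℕ × ℕ := (Denumerable.eqv (ℕ × ℕ)).symm with he
  set d : ℕ → ℤ × (Fin n → ℤ) := fun k => c (e k).1 (e k).2 with hd
  have hcov' : (⋃ i, A i) ⊆ interior (⋃ k, dyadicCube n (d k).1 (d k).2) := by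
    refine iUnion_subset fun i => (hcov i).trans (interior_mono ?_)
    refine iUnion_subset fun j => ?_
    have hk : d (e.symm (i, j)) = c i j := by simp [hd]
    exact hk ▸ subset_iUnion (fun k => dyadicCube n (d k).1 (d k).2) (e.symm (i, j))
  calc dyadicContent n δ (⋃ i, A i)
      ≤ ∑' k, ENNReal.ofReal (((2:ℝ) ^ (d k).1) ^ δ) := iInf₂_le d hcov'
    _ = ∑' p : ℕ × ℕ, ENNReal.ofReal (((2:ℝ) ^ (c p.1 p.2).1) ^ δ) :=
        e.tsum_eq (fun p : ℕ × ℕ => ENNReal.ofReal (((2:ℝ) ^ (c p.1 p.2).1) ^ δ))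
    _ = ∑' i, ∑' j, ENNReal.ofReal (((2:ℝ) ^ (c i j).1) ^ δ) := ENNReal.tsum_prod (f := fun i j => ENNReal.ofReal (((2:ℝ) ^ (c i j).1) ^ δ))
    _ ≤ ∑' i, (dyadicContent n δ (A i) + η i) := ENNReal.tsum_le_tsum hsum
    _ = S + ∑' i, (η i : ℝ≥0∞) := by rw [ENNReal.tsum_add]
    _ ≤ S + ε := add_le_add le_rfl hηsum.le

lemma chebyshev (n : ℕ) (δ : ℝ) (g : En n → ℝ) {ε : ℝ} (hε : 0 < ε) :
    ENNReal.ofReal ε * dyadicContent n δ {x | ε < |g x|}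
      ≤ choquetIntegralAbs n δ univ g := by
  set C := dyadicContent n δ {x | ε < |g x|} with hC
  have h1 : ∀ t ∈ Ioo (0:ℝ) ε, C ≤
      dyadicContent n δ {x | x ∈ univ ∧ ENNReal.ofReal t < ENNReal.ofReal |g x|} := by
    intro t ht
    apply dyadicContent_mono
    intro x hx
    have hx' : ε < |g x| := hx
    refine ⟨mem_univ x, ?_⟩
    rw [ENNReal.ofReal_lt_ofReal_iff (hε.trans hx')]
    exact ht.2.trans hx'
  calc ENNReal.ofReal ε * C
      = ∫⁻ _ in Ioo (0:ℝ) ε, C := by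
        rw [setLIntegral_const, Real.volume_Ioo, sub_zero, mul_comm]
    _ ≤ ∫⁻ t in Ioo (0:ℝ) ε,
          dyadicContent n δ {x | x ∈ univ ∧ ENNReal.ofReal t < ENNReal.ofReal |g x|} :=
        setLIntegral_mono' measurableSet_Ioo h1
    _ ≤ ∫⁻ t in Ioi (0:ℝ),
          dyadicContent n δ {x | x ∈ univ ∧ ENNReal.ofReal t < ENNReal.ofReal |g x|} :=
        lintegral_mono_set Ioo_subset_Ioi_self

lemma ofReal_half_pow (j : ℕ) :
    ENNReal.ofReal ((2:ℝ)⁻¹ ^ j) = ((2:ℝ≥0∞)⁻¹) ^ j := by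
  rw [ENNReal.ofReal_pow (by norm_num)]
  congr 1
  rw [ENNReal.ofReal_inv_of_pos (by norm_num)]
  norm_num


/-- convergence in the `nL¹(ℝⁿ, H̃^δ_∞)` norm implies the existence of a
subsequence converging pointwise `H̃^δ_∞`-almost everywhere. -/
theorem nL1_convergence_subsequence (n : ℕ) (hn : 1 ≤ n)
    (δ : ℝ) (hδ0 : 0 < δ) (hδn : δ ≤ n)
    (f : En n → ℝ) (hf : choquetIntegralAbs n δ univ f < ⊤)
    (F : ℕ → En n → ℝ) (hF : ∀ i, choquetIntegralAbs n δ univ (F i) < ⊤)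
    (hconv : Tendsto (fun i => choquetIntegralAbs n δ univ (fun x => f x - F i x))
      atTop (𝓝 0)) :
    ∃ φ : ℕ → ℕ, StrictMono φ ∧
      ∃ E : Set (En n), dyadicContent n δ E = 0 ∧
        ∀ x ∉ E, Tendsto (fun j => F (φ j) x) atTop (𝓝 (f x)) := by
  have hhalf0 : (0:ℝ≥0∞) < 2⁻¹ := ENNReal.inv_pos.mpr (by norm_num)
  have hhalfne : ((2:ℝ≥0∞)⁻¹) ≠ ⊤ := by simp
  obtain ⟨φ, hφmono, hφ⟩ := Filter.extraction_forall_of_eventually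
    (P := fun j i => choquetIntegralAbs n δ univ (fun x => f x - F i x)
      < ((2:ℝ≥0∞)⁻¹) ^ (2 * j))
    (fun j => hconv.eventually_lt_const (ENNReal.pow_pos hhalf0 (2 * j)))
  refine ⟨φ, hφmono, ?_⟩
  set A : ℕ → Set (En n) := fun j => {x | (2:ℝ)⁻¹ ^ j < |f x - F (φ j) x|} with hA
  have hAle : ∀ j, dyadicContent n δ (A j) ≤ ((2:ℝ≥0∞)⁻¹) ^ j := by
    intro j
    have hch := chebyshev n δ (fun x => f x - F (φ j) x)
      (ε := (2:ℝ)⁻¹ ^ j) (pow_pos (by norm_num) j)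
    rw [ofReal_half_pow] at hch
    have h2 : ((2:ℝ≥0∞)⁻¹) ^ j * dyadicContent n δ (A j)
        ≤ ((2:ℝ≥0∞)⁻¹) ^ j * ((2:ℝ≥0∞)⁻¹) ^ j := by
      refine hch.trans ?_
      rw [← pow_add]
      exact le_of_lt (by simpa [two_mul] using hφ j)
    exact (ENNReal.mul_le_mul_iff_right (ENNReal.pow_pos hhalf0 j).ne'
      (ENNReal.pow_ne_top hhalfne)).mp h2
  set E : Set (En n) := {x | ¬ Tendsto (fun j => F (φ j) x) atTop (𝓝 (f x))} with hE
  refine ⟨E, ?_, fun x hx => not_not.mp hx⟩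
  have hEsub : ∀ N : ℕ, E ⊆ ⋃ j, A (N + j) := by
    intro N x hxE
    by_contra hx
    simp only [mem_iUnion, not_exists] at hx
    apply hxE
    have hb : ∀ᶠ j in atTop, ‖F (φ j) x - f x‖ ≤ (2:ℝ)⁻¹ ^ j := by
      filter_upwards [eventually_ge_atTop N] with j hj
      have := hx (j - N)
      rw [hA] at this
      simp only [mem_setOf_eq, not_lt] at this
      rw [Nat.add_sub_cancel' hj] at this
      rw [Real.norm_eq_abs, abs_sub_comm]
      exact this
    have h0 : Tendsto (fun j => F (φ j) x - f x) atTop (𝓝 0) :=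
      squeeze_zero_norm' hb
        (tendsto_pow_atTop_nhds_zero_of_lt_one (by norm_num) (by norm_num))
    simpa using h0.add_const (f x)
  have hbound : ∀ N : ℕ, dyadicContent n δ E ≤ ((2:ℝ≥0∞)⁻¹) ^ N * 2 := by
    intro N
    calc dyadicContent n δ E ≤ dyadicContent n δ (⋃ j, A (N + j)) :=
          dyadicContent_mono (hEsub N)
      _ ≤ ∑' j, dyadicContent n δ (A (N + j)) :=
          dyadicContent_iUnion_le n δ (fun j => A (N + j))
      _ ≤ ∑' j, ((2:ℝ≥0∞)⁻¹) ^ (N + j) :=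
          ENNReal.tsum_le_tsum (fun j => hAle (N + j))
      _ = ((2:ℝ≥0∞)⁻¹) ^ N * ∑' j, ((2:ℝ≥0∞)⁻¹) ^ j := by
          simp_rw [pow_add]; rw [ENNReal.tsum_mul_left]
      _ = ((2:ℝ≥0∞)⁻¹) ^ N * 2 := by
          rw [ENNReal.tsum_geometric, ENNReal.one_sub_inv_two, inv_inv]
  have htend : Tendsto (fun N : ℕ => ((2:ℝ≥0∞)⁻¹) ^ N * 2) atTop (𝓝 0) := by
    have h1 : Tendsto (fun N : ℕ => ((2:ℝ≥0∞)⁻¹) ^ N) atTop (𝓝 0) :=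
      ENNReal.tendsto_pow_atTop_nhds_zero_of_lt_one
        (by rw [ENNReal.inv_lt_one]; exact ENNReal.one_lt_two)
    simpa using ENNReal.Tendsto.mul_const h1 (Or.inr ENNReal.ofNat_ne_top)
  exact le_antisymm (ge_of_tendsto' htend hbound) zero_le
end
end
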